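/- arXiv:2112.05592 — 11 statements merged into one kernel-verified Lean document; each statement's English description precedes it below -/
import Mathlib

section
/- For integers q ≥ 2, L ≥ 1, and a real r ∈ [0, L/(L+1)] with rn ∈ ℕ, every (r,L) list-decodable code C ⊆ [q]^n has size at most L · q^(n - ⌊((L+1)/L)·rn⌋). -/
/-- Singleton-type bound for list-decodable codes (Shangguan–Tamo):
for q ≥ 2, L ≥ 1, r ∈ [0, L/(L+1)] with rn ∈ ℕ, every (r,L) list-decodable
code C ⊆ [q]^n has |C| ≤ L · q^(n - ⌊((L+1)/L)·rn⌋). -/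
theorem stmt_0 (q L n rn : ℕ) (r : ℝ)
    (hq : 2 ≤ q) (hL : 1 ≤ L)
    (hr0 : 0 ≤ r) (hr1 : r ≤ (L : ℝ) / (L + 1))
    (hrn : (rn : ℝ) = r * n)
    (C : Finset (Fin n → Fin q))
    (hLD : ∀ v : Fin n → Fin q,
      (C.filter (fun c => hammingDist c v ≤ rn)).card ≤ L) :
    C.card ≤ L * q ^ (n - ((L + 1) * rn) / L) := by
  classical
  by_contra hcon
  push_neg at hcon
  set m : ℕ := ((L + 1) * rn) / L with hm_def
  have hLm : m * L ≤ (L + 1) * rn := Nat.div_mul_le_self _ _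
  -- (L+1)*rn ≤ L*n
  have hrnLn : (L + 1) * rn ≤ L * n := by
    have hpos : (0:ℝ) < (L:ℝ) + 1 := by positivity
    have h1 : r * ((L:ℝ) + 1) ≤ L := by
      rwa [le_div_iff₀ hpos] at hr1
    have h2 : ((L:ℝ) + 1) * rn ≤ (L:ℝ) * n := by
      rw [hrn]
      have := mul_le_mul_of_nonneg_right h1 (Nat.cast_nonneg n : (0:ℝ) ≤ n)
      nlinarith
    have : (((L + 1) * rn : ℕ) : ℝ) ≤ ((L * n : ℕ) : ℝ) := by push_cast; linarith
    exact_mod_cast this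
  have hmn : m ≤ n := by
    have h := Nat.div_le_div_right (c := L) hrnLn
    rwa [Nat.mul_div_cancel_left n (by omega : 0 < L)] at h
  set s : ℕ := m - rn with hs_def
  -- key: (L+1)*s ≤ m
  have hkey : (L + 1) * s ≤ m := by
    rcases le_or_gt m rn with h | h
    · have : s = 0 := by omega
      simp [this]
    · have h1 : (L + 1) * s + (L + 1) * rn = (L + 1) * m := by
        rw [← Nat.mul_add]
        congr 1
        omega
      have h2 : (L + 1) * s + L * m ≤ (L + 1) * s + (L + 1) * rn :=
        Nat.add_le_add_left (by rw [Nat.mul_comm] at hLm; exact hLm) _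
      rw [h1] at h2
      have h3 : (L + 1) * m = L * m + m := by ring
      rw [h3, Nat.add_comm ((L+1)*s) (L*m)] at h2
      exact Nat.le_of_add_le_add_left h2
  -- projection to last n - m coords
  let f : (Fin n → Fin q) → (Fin (n - m) → Fin q) :=
    fun c i => c ⟨m + i.val, by have := i.isLt; omega⟩
  have hpig : ∃ y ∈ (Finset.univ : Finset (Fin (n - m) → Fin q)),
      L < (C.filter fun c => f c = y).card := by
    apply Finset.exists_lt_card_fiber_of_mul_lt_card_of_maps_to
    · intro a _; exact Finset.mem_univ _
    · have hcard : (Finset.univ : Finset (Fin (n - m) → Fin q)).card = q ^ (n - m) := by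
        simp [Finset.card_univ, Fintype.card_fun]
      rw [hcard, Nat.mul_comm]
      exact hcon
  obtain ⟨y, -, hy⟩ := hpig
  set S : Finset (Fin n → Fin q) := C.filter (fun c => f c = y) with hS_def
  obtain ⟨T, hTS, hT⟩ := Finset.exists_subset_card_eq (by omega : L + 1 ≤ S.card)
  -- enumeration of T
  let e : Fin (L + 1) → (Fin n → Fin q) :=
    fun i => (T.equivFin.symm (Fin.cast hT.symm i) : Fin n → Fin q)
  have he_mem : ∀ i, e i ∈ T := fun i => (T.equivFin.symm (Fin.cast hT.symm i)).2
  -- agreement on coords ≥ m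
  have hag : ∀ c ∈ T, ∀ j : Fin n, ∀ _hj : m ≤ j.val,
      c j = y ⟨j.val - m, by have := j.is_lt; omega⟩ := by
    intro c hc j hj
    have hcS : c ∈ S := hTS hc
    have hfc : f c = y := (Finset.mem_filter.mp hcS).2
    have := congrFun hfc ⟨j.val - m, by have := j.isLt; omega⟩
    rw [← this]
    show c j = c _
    congr 1
    apply Fin.ext
    simp
    omega
  -- the bad center
  let v : Fin n → Fin q := fun j => e ⟨min (j.val / s) L, by omega⟩ j
  have hblock : ∀ i : Fin (L + 1), i.val * s + s ≤ m := by
    intro i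
    have h1 : (i.val + 1) * s ≤ (L + 1) * s :=
      Nat.mul_le_mul_right s (by have := i.isLt; omega)
    calc i.val * s + s = (i.val + 1) * s := by ring
    _ ≤ (L + 1) * s := h1
    _ ≤ m := hkey
  have hdist : ∀ i : Fin (L + 1), hammingDist (e i) v ≤ rn := by
    intro i
    have hsubset : (Finset.univ.filter fun j : Fin n => e i j ≠ v j) ⊆
        Finset.univ.filter (fun j : Fin n =>
          j.val < m ∧ (j.val < i.val * s ∨ i.val * s + s ≤ j.val)) := by
      intro j hj
      simp only [Finset.mem_filter, Finset.mem_univ, true_and] at hj ⊢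
      by_contra hcc
      apply hj
      rcases Nat.lt_or_ge j.val m with hjm | hjm
      · -- j in block i
        have hin : i.val * s ≤ j.val ∧ j.val < i.val * s + s := by
          by_contra hno
          exact hcc ⟨hjm, by omega⟩
        have hs0 : 0 < s := by omega
        have hdiv : j.val / s = i.val :=
          Nat.div_eq_of_lt_le hin.1 (by have := hin.2; ring_nf; omega)
        show e i j = e ⟨min (j.val / s) L, _⟩ j
        congr 2
        apply Fin.ext
        simp [hdiv]
        omega
      · -- j ≥ m : both agree with y
        have h1 : e i j = y ⟨j.val - m, by have := j.isLt; omega⟩ :=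
          hag _ (he_mem i) j hjm
        have h2 : v j = y ⟨j.val - m, by have := j.isLt; omega⟩ :=
          hag _ (he_mem _) j hjm
        rw [h1, h2]
    have hcard1 : (Finset.univ.filter (fun j : Fin n =>
        j.val < m ∧ (j.val < i.val * s ∨ i.val * s + s ≤ j.val))).card ≤
        ((Finset.range m) \ (Finset.Ico (i.val * s) (i.val * s + s))).card := by
      apply Finset.card_le_card_of_injOn (fun j => j.val)
      · intro j hj
        simp only [Finset.coe_filter, Finset.mem_coe, Set.mem_setOf_eq, Finset.mem_filter, Finset.mem_univ, true_and] at hj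
        simp only [Finset.mem_coe, Finset.mem_sdiff, Finset.mem_range, Finset.mem_Ico]
        omega
      · intro a _ b _ h
        exact Fin.ext h
    have hcard2 : ((Finset.range m) \ (Finset.Ico (i.val * s) (i.val * s + s))).card
        = m - s := by
      rw [Finset.card_sdiff_of_subset]
      · simp
      · intro x hx
        simp only [Finset.mem_Ico] at hx
        simp only [Finset.mem_range]
        have := hblock i
        omega
    show (Finset.univ.filter fun j : Fin n => e i j ≠ v j).card ≤ rn
    have := Finset.card_le_card hsubset
    omega
  -- conclude
  have hsub : T ⊆ C.filter (fun c => hammingDist c v ≤ rn) := by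
    intro c hc
    rw [Finset.mem_filter]
    refine ⟨Finset.filter_subset _ _ (hTS hc), ?_⟩
    have hec : e (Fin.cast hT (T.equivFin ⟨c, hc⟩)) = c := by
      show ((T.equivFin.symm (Fin.cast hT.symm (Fin.cast hT (T.equivFin ⟨c, hc⟩)))) : Fin n → Fin q) = c
      have : Fin.cast hT.symm (Fin.cast hT (T.equivFin ⟨c, hc⟩)) = T.equivFin ⟨c, hc⟩ :=
        Fin.ext rfl
      rw [this, Equiv.symm_apply_apply]
    rw [← hec]
    exact hdist _
  have hfin := Finset.card_le_card hsub
  have := hLD v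
  omega
end

section
/- Let C ⊆ [q]^n be an (r,L) list-decodable code with r ∈ [0, L/(L+1)), rn ∈ ℕ, and n ≥ L²/r. Then |C| ≤ max{q + ⌊f(n)·q⌋, L} · q^(n - (⌊((L+1)/L)·rn⌋ + 1)), where b ∈ [0, L-1] satisfies b ≡ rn (mod L) and f(n) = (L-b-1)/(2(⌊((L+1)/L)·rn⌋+1) - (L-b-1)). -/
open Finset

private def agr {e q : ℕ} (x y : Fin e → Fin q) : ℕ :=
  #{j | x j = y j}

private lemma agr_add_dist {e q : ℕ} (x y : Fin e → Fin q) :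
    agr x y + hammingDist x y = e := by
  classical
  rw [agr, hammingDist]
  rw [Finset.card_filter_add_card_filter_not]
  simp

private lemma coord_count {e q : ℕ} (A : Finset (Fin e → Fin q)) (j : Fin e) :
    3 * A.card ≤ (∑ x ∈ A, #(A.filter fun y => y j = x j)) + 2 * q := by
  classical
  have h1 : ∑ x ∈ A, #(A.filter fun y => y j = x j)
      = ∑ v ∈ (univ : Finset (Fin q)), ∑ x ∈ A.filter (fun x => x j = v),
          #(A.filter fun y => y j = x j) :=
    (Finset.sum_fiberwise_of_maps_to (fun x _ => mem_univ (x j)) _).symm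
  have h2 : ∀ v : Fin q, ∑ x ∈ A.filter (fun x => x j = v),
      #(A.filter fun y => y j = x j)
      = #(A.filter fun y => y j = v) * #(A.filter fun y => y j = v) := by
    intro v
    rw [Finset.sum_congr rfl (fun x hx => ?_), Finset.sum_const, smul_eq_mul]
    have := (Finset.mem_filter.mp hx).2
    simp [this]
  have h3 : A.card = ∑ v ∈ (univ : Finset (Fin q)), #(A.filter fun y => y j = v) :=
    Finset.card_eq_sum_card_fiberwise (fun x _ => mem_univ (x j))
  rw [h1, h3]
  have h4 : ∀ c : ℕ, 3 * c ≤ c * c + 2 := by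
    intro c
    rcases Nat.lt_or_ge c 3 with h | h
    · interval_cases c <;> simp
    · exact (Nat.mul_le_mul_right c h).trans (Nat.le_add_right _ 2)
  calc 3 * ∑ v ∈ (univ : Finset (Fin q)), #(A.filter fun y => y j = v)
      = ∑ v ∈ (univ : Finset (Fin q)), 3 * #(A.filter fun y => y j = v) := by
        rw [Finset.mul_sum]
    _ ≤ ∑ v ∈ (univ : Finset (Fin q)),
        (#(A.filter fun y => y j = v) * #(A.filter fun y => y j = v) + 2) := by
        exact Finset.sum_le_sum fun v _ => h4 _
    _ = (∑ v ∈ (univ : Finset (Fin q)), ∑ x ∈ A.filter (fun x => x j = v),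
          #(A.filter fun y => y j = x j)) + 2 * q := by
        rw [Finset.sum_add_distrib, Finset.sum_const, Finset.card_univ]
        simp [h2, mul_comm]

private lemma row_count {e q : ℕ} (A : Finset (Fin e → Fin q)) {x : Fin e → Fin q}
    (hx : x ∈ A) :
    (∑ y ∈ A.erase x, agr x y) + e = ∑ j : Fin e, #(A.filter fun y => y j = x j) := by
  classical
  have h1 : ∀ y, agr x y = ∑ j : Fin e, if y j = x j then 1 else 0 := by
    intro y
    rw [agr, Finset.card_filter]
    exact Finset.sum_congr rfl fun j _ => by by_cases h : x j = y j <;> simp [h, eq_comm]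
  calc (∑ y ∈ A.erase x, agr x y) + e
      = (∑ j : Fin e, ∑ y ∈ A.erase x, if y j = x j then 1 else 0) + e := by
        rw [Finset.sum_comm]
        exact congrArg (· + e) (Finset.sum_congr rfl fun y _ => h1 y)
    _ = ∑ j : Fin e, ((∑ y ∈ A.erase x, if y j = x j then 1 else 0) + 1) := by
        rw [Finset.sum_add_distrib, Finset.sum_const, Finset.card_univ]
        simp
    _ = ∑ j : Fin e, #(A.filter fun y => y j = x j) := by
        refine Finset.sum_congr rfl fun j _ => ?_
        rw [← Finset.card_filter]
        rw [Finset.filter_erase]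
        rw [Finset.card_erase_of_mem (by simp [hx])]
        have hpos : 0 < #(A.filter fun y => y j = x j) :=
          Finset.card_pos.mpr ⟨x, by simp [hx]⟩
        exact Nat.sub_add_cancel hpos

private lemma double_count {e q : ℕ} (A : Finset (Fin e → Fin q)) :
    2 * e * A.card ≤ (∑ x ∈ A, ∑ y ∈ A.erase x, agr x y) + 2 * e * q := by
  classical
  have h1 : (∑ x ∈ A, ∑ y ∈ A.erase x, agr x y) + e * A.card
      = ∑ j : Fin e, ∑ x ∈ A, #(A.filter fun y => y j = x j) := by
    rw [Finset.sum_comm]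
    calc (∑ x ∈ A, ∑ y ∈ A.erase x, agr x y) + e * A.card
        = ∑ x ∈ A, ((∑ y ∈ A.erase x, agr x y) + e) := by
          rw [Finset.sum_add_distrib, Finset.sum_const, smul_eq_mul, mul_comm]
      _ = ∑ x ∈ A, ∑ j : Fin e, #(A.filter fun y => y j = x j) :=
          Finset.sum_congr rfl fun x hx => row_count A hx
  have h2 : 3 * (e * A.card) ≤ (∑ j : Fin e, ∑ x ∈ A, #(A.filter fun y => y j = x j))
      + 2 * q * e := by
    calc 3 * (e * A.card) = ∑ _j : Fin e, 3 * A.card := by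
          rw [Finset.sum_const, Finset.card_univ]; simp; ring
      _ ≤ ∑ j : Fin e, (( ∑ x ∈ A, #(A.filter fun y => y j = x j)) + 2 * q) :=
          Finset.sum_le_sum fun j _ => coord_count A j
      _ = (∑ j : Fin e, ∑ x ∈ A, #(A.filter fun y => y j = x j)) + 2 * q * e := by
          rw [Finset.sum_add_distrib, Finset.sum_const, Finset.card_univ]
          simp [mul_comm]
  rw [← h1] at h2
  nlinarith [h2]

private lemma exists_center {e q t : ℕ} (A : Finset (Fin e → Fin q))
    (h : 2 * e * q + t * A.card < 2 * e * A.card) :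
    ∃ u ∈ A, t + 1 ≤ ∑ y ∈ A.erase u, agr u y := by
  by_contra hc
  push_neg at hc
  have h1 : ∑ x ∈ A, ∑ y ∈ A.erase x, agr x y ≤ ∑ _x ∈ A, t :=
    Finset.sum_le_sum (fun x hx => by have := hc x hx; omega)
  rw [Finset.sum_const, smul_eq_mul] at h1
  have h2 := double_count A
  nlinarith [h1, h2]

private lemma choose_P {e q L k t : ℕ} (u : Fin e → Fin q) (B : Finset (Fin e → Fin q))
    (hB : L ≤ B.card) (ht : t + 1 ≤ ∑ y ∈ B, agr u y) (htL : t < L) (htk : t ≤ k) :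
    ∃ P ⊆ B, P.card = L ∧ t + 1 ≤ ∑ w ∈ P, min (agr u w) (k + 1) := by
  classical
  by_cases hex : ∃ w ∈ B, t + 1 ≤ agr u w
  · obtain ⟨w, hwB, hw⟩ := hex
    obtain ⟨P, hsP, hPB, hPcard⟩ :=
      Finset.exists_subsuperset_card_eq (Finset.singleton_subset_iff.mpr hwB)
        (by simp; omega) hB
    refine ⟨P, hPB, hPcard, ?_⟩
    have h1 : t + 1 ≤ min (agr u w) (k + 1) := le_min hw (by omega)
    exact h1.trans (Finset.single_le_sum (f := fun w => min (agr u w) (k + 1))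
      (fun _ _ => Nat.zero_le _) (hsP (Finset.mem_singleton_self w)))
  · push_neg at hex
    set S := B.filter (fun w => agr u w ≠ 0) with hS
    have hsum : ∑ y ∈ S, agr u y = ∑ y ∈ B, agr u y := Finset.sum_filter_ne_zero _
    by_cases hSc : S.card ≤ L
    · obtain ⟨P, hsP, hPB, hPcard⟩ :=
        Finset.exists_subsuperset_card_eq (Finset.filter_subset _ B) hSc hB
      refine ⟨P, hPB, hPcard, ?_⟩
      calc t + 1 ≤ ∑ y ∈ S, agr u y := hsum ▸ ht
        _ = ∑ y ∈ S, min (agr u y) (k + 1) := by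
            refine Finset.sum_congr rfl fun y hy => ?_
            have := hex y (Finset.mem_of_mem_filter y hy)
            omega
        _ ≤ ∑ w ∈ P, min (agr u w) (k + 1) :=
            Finset.sum_le_sum_of_subset hsP
    · obtain ⟨P, hPS, hPcard⟩ := Finset.exists_subset_card_eq (le_of_not_ge hSc)
      refine ⟨P, hPS.trans (Finset.filter_subset _ B), hPcard, ?_⟩
      calc t + 1 ≤ L := htL
        _ = ∑ _w ∈ P, 1 := by rw [Finset.sum_const, smul_eq_mul, hPcard, mul_one]
        _ ≤ ∑ w ∈ P, min (agr u w) (k + 1) := by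
            refine Finset.sum_le_sum fun w hw => ?_
            have h0 : agr u w ≠ 0 := (Finset.mem_filter.mp (hPS hw)).2
            omega

private lemma alloc {ι α : Type*} [DecidableEq ι] [DecidableEq α]
    (P : Finset ι) (d : ι → ℕ) :
    ∀ F : Finset α, (∑ w ∈ P, d w) ≤ F.card →
    ∃ D : ι → Finset α, (∀ w ∈ P, D w ⊆ F ∧ (D w).card = d w) ∧
      (∀ w ∈ P, ∀ w' ∈ P, w ≠ w' → Disjoint (D w) (D w')) := by
  classical
  induction P using Finset.induction_on with
  | empty => exact fun F _ => ⟨fun _ => ∅, by simp, by simp⟩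
  | @insert a P ha ih =>
    intro F hF
    rw [Finset.sum_insert ha] at hF
    obtain ⟨Da, hDaF, hDacard⟩ := Finset.exists_subset_card_eq (by omega : d a ≤ F.card)
    have hcard : (∑ w ∈ P, d w) ≤ (F \ Da).card := by
      rw [Finset.card_sdiff_of_subset hDaF, hDacard]; omega
    obtain ⟨D', hD'1, hD'2⟩ := ih (F \ Da) hcard
    refine ⟨fun w => if w = a then Da else D' w, ?_, ?_⟩
    · intro w hw
      rcases Finset.mem_insert.mp hw with rfl | hwP
      · simp [hDaF, hDacard]
      · have hne : w ≠ a := by rintro rfl; exact ha hwP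
        simp only [if_neg hne]
        exact ⟨((hD'1 w hwP).1).trans (Finset.sdiff_subset), (hD'1 w hwP).2⟩
    · intro w hw w' hw' hne
      by_cases h1 : w = a <;> by_cases h2 : w' = a
      · exact absurd (h1.trans h2.symm) hne
      · subst h1
        simp only [if_pos rfl, if_neg h2]
        have hw'P : w' ∈ P := by
          rcases Finset.mem_insert.mp hw' with h | h
          · exact absurd h h2
          · exact h
        exact Finset.disjoint_sdiff.mono_right (hD'1 w' hw'P).1
      · subst h2
        simp only [if_pos rfl, if_neg h1]
        have hwP : w ∈ P := by
          rcases Finset.mem_insert.mp hw with h | h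
          · exact absurd h h1
          · exact h
        exact (Finset.disjoint_sdiff.mono_right (hD'1 w hwP).1).symm
      · simp only [if_neg h1, if_neg h2]
        have hwP : w ∈ P := by
          rcases Finset.mem_insert.mp hw with h | h
          · exact absurd h h1
          · exact h
        have hw'P : w' ∈ P := by
          rcases Finset.mem_insert.mp hw' with h | h
          · exact absurd h h2
          · exact h
        exact hD'2 w hwP w' hw'P hne

private lemma core {q L rn b k e t : ℕ} (hL : 1 ≤ L) (hb : b < L)
    (hk : rn = L * k + b) (hkL : L ≤ k) (he : e = rn + k + 1) (htdef : t = L - 1 - b)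
    (A : Finset (Fin e → Fin q)) (hm1 : L + 1 ≤ A.card)
    (hm2 : 2 * e * q + t * A.card < 2 * e * A.card) :
    ∃ v : Fin e → Fin q, L + 1 ≤ #(A.filter fun x => hammingDist x v ≤ rn) := by
  classical
  obtain ⟨u, huA, hu⟩ := exists_center A hm2
  have hBcard : L ≤ (A.erase u).card := by
    rw [Finset.card_erase_of_mem huA]; omega
  obtain ⟨P, hPB, hPcard, hPsum⟩ := choose_P (k := k) u (A.erase u) hBcard hu
    (by omega) (by omega)
  -- choose agreement witness sets
  have hWex : ∀ w : Fin e → Fin q, ∃ W ⊆ ({j | u j = w j} : Finset (Fin e)),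
      W.card = min (agr u w) (k + 1) := fun w =>
    Finset.exists_subset_card_eq (min_le_left _ _)
  choose W hWsub hWcard using hWex
  set U := P.biUnion W with hU
  have hUcard : U.card ≤ ∑ w ∈ P, min (agr u w) (k + 1) := by
    refine (Finset.card_biUnion_le).trans ?_
    exact le_of_eq (Finset.sum_congr rfl fun w _ => hWcard w)
  set d : (Fin e → Fin q) → ℕ := fun w => k + 1 - min (agr u w) (k + 1) with hd
  have hsum : (∑ w ∈ P, d w) + (∑ w ∈ P, min (agr u w) (k + 1)) = L * (k + 1) := by
    rw [← Finset.sum_add_distrib]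
    rw [Finset.sum_congr rfl (fun w _ => Nat.sub_add_cancel (min_le_right _ _))]
    rw [Finset.sum_const, hPcard, smul_eq_mul]
  have hLke : L * (k + 1) ≤ e := by
    have : L * (k + 1) = L * k + L := by ring
    omega
  have hFcard : (∑ w ∈ P, d w) ≤ (univ \ U).card := by
    rw [Finset.card_sdiff_of_subset (Finset.subset_univ U), Finset.card_univ, Fintype.card_fin]
    omega
  obtain ⟨D, hD1, hD2⟩ := alloc P d (univ \ U) hFcard
  set v : Fin e → Fin q := fun j =>
    if h : ∃ w, w ∈ P ∧ j ∈ D w then h.choose j else u j with hv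
  -- v agrees with w on D w
  have hvD : ∀ w ∈ P, ∀ j ∈ D w, v j = w j := by
    intro w hw j hj
    have hex : ∃ w', w' ∈ P ∧ j ∈ D w' := ⟨w, hw, hj⟩
    rw [hv]
    simp only [dif_pos hex]
    obtain ⟨hch1, hch2⟩ := hex.choose_spec
    have : hex.choose = w := by
      by_contra hne
      exact (Finset.disjoint_left.mp (hD2 _ hch1 _ hw hne)) hch2 hj
    rw [this]
  have hvU : ∀ j : Fin e, (¬ ∃ w, w ∈ P ∧ j ∈ D w) → v j = u j := by
    intro j hj
    rw [hv]; simp only [dif_neg hj]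
  -- each w in P is close to v
  have hagrP : ∀ w ∈ P, k + 1 ≤ agr w v := by
    intro w hw
    have hsub : (D w ∪ W w) ⊆ ({j | w j = v j} : Finset (Fin e)) := by
      intro j hj
      rcases Finset.mem_union.mp hj with hjD | hjW
      · simp only [Finset.mem_filter, Finset.mem_univ, true_and]
        exact (hvD w hw j hjD).symm
      · simp only [Finset.mem_filter, Finset.mem_univ, true_and]
        have hjU : j ∈ U := Finset.mem_biUnion.mpr ⟨w, hw, hjW⟩
        have hnotD : ¬ ∃ w', w' ∈ P ∧ j ∈ D w' := by
          rintro ⟨w', hw', hjD'⟩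
          have := (hD1 w' hw').1 hjD'
          exact (Finset.mem_sdiff.mp this).2 hjU
        have huw : u j = w j := by
          have := hWsub w hjW
          simpa using (Finset.mem_filter.mp this).2
        rw [hvU j hnotD, ← huw]
    have hdisj : Disjoint (D w) (W w) := by
      refine Finset.disjoint_left.mpr fun j hjD hjW => ?_
      have := (hD1 w hw).1 hjD
      exact (Finset.mem_sdiff.mp this).2 (Finset.mem_biUnion.mpr ⟨w, hw, hjW⟩)
    have hcard : (D w ∪ W w).card = k + 1 := by
      rw [Finset.card_union_of_disjoint hdisj, (hD1 w hw).2, hWcard w]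
      simp only [hd]
      have := min_le_right (agr u w) (k + 1)
      omega
    calc k + 1 = (D w ∪ W w).card := hcard.symm
      _ ≤ agr w v := Finset.card_le_card hsub
  -- u is close to v
  have hagru : k + 1 ≤ agr u v := by
    have hsub : (univ \ P.biUnion D) ⊆ ({j | u j = v j} : Finset (Fin e)) := by
      intro j hj
      simp only [Finset.mem_filter, Finset.mem_univ, true_and]
      have : ¬ ∃ w, w ∈ P ∧ j ∈ D w := by
        rintro ⟨w, hw, hjD⟩
        exact (Finset.mem_sdiff.mp hj).2 (Finset.mem_biUnion.mpr ⟨w, hw, hjD⟩)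
      exact (hvU j this).symm
    have hDcard : (P.biUnion D).card ≤ ∑ w ∈ P, d w := by
      refine (Finset.card_biUnion_le).trans ?_
      exact le_of_eq (Finset.sum_congr rfl fun w hw => (hD1 w hw).2)
    have hcard : k + 1 ≤ (univ \ P.biUnion D).card := by
      rw [Finset.card_sdiff_of_subset (Finset.subset_univ _), Finset.card_univ, Fintype.card_fin]
      have h1 : L ≤ b + ∑ w ∈ P, min (agr u w) (k + 1) := by omega
      have h2 : L * (k + 1) = L * k + L := by ring
      omega
    exact hcard.trans (Finset.card_le_card hsub)
  -- conclude
  refine ⟨v, ?_⟩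
  have hS : insert u P ⊆ A.filter fun x => hammingDist x v ≤ rn := by
    intro x hx
    rcases Finset.mem_insert.mp hx with rfl | hxP
    · refine Finset.mem_filter.mpr ⟨huA, ?_⟩
      have := agr_add_dist x v
      omega
    · refine Finset.mem_filter.mpr ⟨Finset.mem_of_mem_erase (hPB hxP), ?_⟩
      have h1 := hagrP x hxP
      have := agr_add_dist x v
      omega
  have hucard : #(insert u P) = L + 1 := by
    rw [Finset.card_insert_of_notMem, hPcard]
    intro h
    exact (Finset.mem_erase.mp (hPB h)).1 rfl
  have hfin := Finset.card_le_card hS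
  omega

set_option maxHeartbeats 2000000

/-- Improved Singleton-type bound: for an (r,L) list-decodable code with
r ∈ [0, L/(L+1)), rn ∈ ℕ, n ≥ L²/r,
|C| ≤ max{q + ⌊f(n)·q⌋, L} · q^(n - (⌊((L+1)/L)·rn⌋ + 1)), where
b ≡ rn (mod L), 0 ≤ b ≤ L-1, and
f(n) = (L-b-1)/(2(⌊((L+1)/L)·rn⌋+1) - (L-b-1)). -/
theorem stmt_1 (q L n rn b : ℕ) (r : ℝ)
    (hL : 1 ≤ L)
    (hr0 : 0 ≤ r) (hr1 : r < (L : ℝ) / (L + 1))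
    (hrn : (rn : ℝ) = r * n)
    (hn : (L : ℝ) ^ 2 / r ≤ n)
    (hb : b < L) (hbrn : rn % L = b)
    (C : Finset (Fin n → Fin q))
    (hLD : ∀ v : Fin n → Fin q,
      (C.filter (fun c => hammingDist c v ≤ rn)).card ≤ L) :
    (C.card : ℝ) ≤
      (max (q + ⌊(((L : ℝ) - b - 1) /
            (2 * ((((L + 1) * rn) / L : ℕ) + 1) - ((L : ℝ) - b - 1))) * q⌋₊) L) *
        (q : ℝ) ^ (n - (((L + 1) * rn) / L + 1)) := by
  classical
  set s : ℕ := ⌊(((L : ℝ) - b - 1) /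
      (2 * ((((L + 1) * rn) / L : ℕ) + 1) - ((L : ℝ) - b - 1))) * q⌋₊ with hs
  set M : ℕ := max (q + s) L with hM
  set E : ℕ := ((L + 1) * rn) / L + 1 with hE
  suffices h : C.card ≤ M * q ^ (n - E) by
    calc (C.card : ℝ) ≤ ((M * q ^ (n - E) : ℕ) : ℝ) := by exact_mod_cast h
      _ = (M : ℝ) * (q : ℝ) ^ (n - E) := by push_cast; ring
  have hcuniv : C.card ≤ q ^ n := by
    calc C.card ≤ #(univ : Finset (Fin n → Fin q)) := Finset.card_le_univ C
      _ = q ^ n := by simp [Finset.card_univ, Fintype.card_fun]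
  have hML : L ≤ M := le_max_right _ _
  have hMq : q + s ≤ M := le_max_left _ _
  -- trivial cases
  by_cases hn0 : n = 0
  · subst hn0
    have hrn0 : rn = 0 := by
      have : (rn : ℝ) = 0 := by rw [hrn]; simp
      exact_mod_cast this
    subst hrn0
    simp only [Nat.zero_sub, pow_zero, mul_one]
    calc C.card ≤ q ^ 0 := hcuniv
      _ = 1 := pow_zero q
      _ ≤ M := by omega
  have hn1 : 1 ≤ n := by omega
  by_cases hq0 : q = 0
  · subst hq0
    have : C.card ≤ 0 ^ n := hcuniv
    rw [Nat.zero_pow (by omega)] at this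
    omega
  have hq1 : 1 ≤ q := by omega
  by_cases hrn0 : rn = 0
  · subst hrn0
    have hE1 : E = 1 := by rw [hE]; simp
    rw [hE1]
    calc C.card ≤ q ^ n := hcuniv
      _ = q * q ^ (n - 1) := by
          conv_lhs => rw [show n = (n - 1) + 1 by omega]
          rw [pow_succ]; ring
      _ ≤ M * q ^ (n - 1) := Nat.mul_le_mul_right _ (by omega)
  have hrn1 : 1 ≤ rn := by omega
  -- main case
  have hrpos : 0 < r := by
    rcases lt_or_eq_of_le hr0 with h | h
    · exact h
    · exfalso
      have : (rn : ℝ) = 0 := by rw [hrn, ← h]; ring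
      have : rn = 0 := by exact_mod_cast this
      omega
  have hrnL2 : L * L ≤ rn := by
    have h1 : (L : ℝ) ^ 2 ≤ n * r := (div_le_iff₀ hrpos).mp hn
    have h2 : ((L * L : ℕ) : ℝ) ≤ (rn : ℝ) := by
      rw [hrn]; push_cast; nlinarith [h1]
    exact_mod_cast h2
  set k : ℕ := rn / L with hkdef
  have hkb : rn = L * k + b := by
    rw [hkdef, ← hbrn]
    exact (Nat.div_add_mod rn L).symm
  have hkL : L ≤ k := by
    rw [hkdef]
    exact (Nat.le_div_iff_mul_le (by omega)).mpr hrnL2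
  set t : ℕ := L - 1 - b with htdef
  have hEe : E = rn + k + 1 := by
    rw [hE, hkdef]
    have h1 : (L + 1) * rn = L * rn + rn := by ring
    rw [h1, Nat.mul_add_div (by omega)]
  have hrnLn : rn * (L + 1) + 1 ≤ L * n := by
    have h1 : (rn : ℝ) * (L + 1) < L * n := by
      have h2 : r * n < ((L : ℝ) / (L + 1)) * n := by
        apply mul_lt_mul_of_pos_right hr1
        exact_mod_cast hn1
      have h3 : (0 : ℝ) < (L : ℝ) + 1 := by positivity
      rw [hrn]
      rw [div_mul_eq_mul_div, lt_div_iff₀ h3] at h2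
      nlinarith [h2]
    have h4 : ((rn * (L + 1) : ℕ) : ℝ) < ((L * n : ℕ) : ℝ) := by push_cast; nlinarith [h1]
    exact_mod_cast h4
  have hEn : E ≤ n := by
    rw [hE]
    have : ((L + 1) * rn) / L < n := by
      rw [Nat.div_lt_iff_lt_mul (by omega : 0 < L)]
      nlinarith [hrnLn]
    omega
  by_contra hcon
  push_neg at hcon
  -- pigeonhole
  set π : (Fin n → Fin q) → (Fin (n - E) → Fin q) :=
    fun c i => c (Fin.castLE (by omega) i) with hπ
  have hcard_univ : #(univ : Finset (Fin (n - E) → Fin q)) = q ^ (n - E) := by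
    simp [Finset.card_univ, Fintype.card_fun]
  obtain ⟨y, -, hy⟩ := Finset.exists_lt_card_fiber_of_mul_lt_card_of_maps_to
    (fun c (_ : c ∈ C) => Finset.mem_univ (π c))
    (by rw [hcard_univ, mul_comm]; exact hcon)
  set D₀ : Finset (Fin n → Fin q) := C.filter (fun c => π c = y) with hD₀
  set ψ : (Fin n → Fin q) → (Fin E → Fin q) :=
    fun c i => c ⟨n - E + i.1, by have := i.isLt; omega⟩ with hψ
  have hinj : Set.InjOn ψ D₀ := by
    intro c hc c' hc' hψeq
    have hcy : π c = y := (Finset.mem_filter.mp hc).2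
    have hcy' : π c' = y := (Finset.mem_filter.mp hc').2
    funext j
    rcases lt_or_ge j.1 (n - E) with hlt | hge
    · have h1 : π c = π c' := by rw [hcy, hcy']
      have h2 := congrFun h1 ⟨j.1, hlt⟩
      simpa only [hπ, Fin.castLE_mk, Fin.eta] using h2
    · have h2 := congrFun hψeq ⟨j.1 - (n - E), by have := j.isLt; omega⟩
      simp only [hψ] at h2
      have h3 : (⟨n - E + (j.1 - (n - E)), by have := j.isLt; omega⟩ : Fin n) = j := by
        apply Fin.ext; simp; omega
      rwa [h3] at h2
  set A : Finset (Fin E → Fin q) := D₀.image ψ with hA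
  have hAcard : A.card = D₀.card := Finset.card_image_of_injOn hinj
  have hm1 : L + 1 ≤ A.card := by omega
  have hm2 : 2 * E * q + t * A.card < 2 * E * A.card := by
    have hqsA : q + s + 1 ≤ A.card := by omega
    have htE : t < E := by omega
    have htcast : ((t : ℕ) : ℝ) = (L : ℝ) - b - 1 := by
      rw [htdef]
      rw [Nat.cast_sub (by omega : b ≤ L - 1), Nat.cast_sub (by omega : 1 ≤ L)]
      push_cast; ring
    have hEcast : (2 : ℝ) * ((((L + 1) * rn) / L : ℕ) + 1) = 2 * (E : ℝ) := by
      have h1 : ((((L + 1) * rn) / L : ℕ) : ℝ) + 1 = (E : ℝ) := by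
        rw [hE]; push_cast; ring
      rw [h1]
    have hden : (0 : ℝ) < 2 * (E : ℝ) - ((L : ℝ) - b - 1) := by
      rw [← htcast]
      have : (t : ℝ) < (E : ℝ) := by exact_mod_cast htE
      have hE0 : (0 : ℝ) ≤ (E : ℝ) := by positivity
      linarith
    have hfloor : (((L : ℝ) - b - 1) /
        (2 * ((((L + 1) * rn) / L : ℕ) + 1) - ((L : ℝ) - b - 1))) * q < s + 1 := by
      rw [hs]
      exact Nat.lt_floor_add_one _
    rw [hEcast] at hfloor
    rw [div_mul_eq_mul_div, div_lt_iff₀ hden] at hfloor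
    rw [← htcast] at hfloor hden
    have hAR : (q : ℝ) + s + 1 ≤ (A.card : ℝ) := by exact_mod_cast hqsA
    have hgoal : 2 * (E : ℝ) * q + t * A.card < 2 * E * A.card := by
      nlinarith [mul_le_mul_of_nonneg_left hAR hden.le, hfloor, hden]
    exact_mod_cast hgoal
  obtain ⟨v', hv'⟩ := core (q := q) hL hb hkb hkL hEe htdef A hm1 hm2
  -- lift v' to a center in Fin n
  set v : Fin n → Fin q := fun j =>
    if h : j.1 < n - E then y ⟨j.1, h⟩
    else v' ⟨j.1 - (n - E), by have := j.isLt; omega⟩ with hv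
  have hdist : ∀ c ∈ D₀, hammingDist c v ≤ hammingDist (ψ c) v' := by
    intro c hc
    have hcy : π c = y := (Finset.mem_filter.mp hc).2
    rw [hammingDist, hammingDist]
    have hjge : ∀ j : Fin n, c j ≠ v j → n - E ≤ j.1 := by
      intro j hj
      by_contra hlt
      push_neg at hlt
      apply hj
      have h1 : v j = y ⟨j.1, hlt⟩ := by rw [hv]; simp only [dif_pos hlt]
      rw [h1, ← hcy]
      simp only [hπ, Fin.castLE_mk, Fin.eta]
    apply Finset.card_le_card_of_injOn
      (fun j => (⟨j.1 - (n - E), by have := j.isLt; omega⟩ : Fin E))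
    · intro j hj
      simp only [Finset.mem_coe, Finset.mem_filter, Finset.mem_univ, true_and] at hj ⊢
      have hge := hjge j hj
      have h1 : ψ c ⟨j.1 - (n - E), by have := j.isLt; omega⟩ = c j := by
        simp only [hψ]
        congr 1
        apply Fin.ext; simp; omega
      have h2 : v' ⟨j.1 - (n - E), by have := j.isLt; omega⟩ = v j := by
        rw [hv]
        simp only [dif_neg (by omega : ¬ j.1 < n - E)]
      rw [h1, h2]
      exact hj
    · intro j hj j' hj' heq
      simp only [Finset.mem_coe, Finset.mem_filter, Finset.mem_univ, true_and] at hj hj'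
      have hge := hjge j hj
      have hge' := hjge j' hj'
      have := congrArg Fin.val heq
      simp only at this
      apply Fin.ext
      omega
  -- conclude
  have hmap : A.filter (fun x => hammingDist x v' ≤ rn) ⊆
      (C.filter fun c => hammingDist c v ≤ rn).image ψ := by
    intro x hx
    obtain ⟨hxA, hxd⟩ := Finset.mem_filter.mp hx
    obtain ⟨c, hcD, hcx⟩ := Finset.mem_image.mp hxA
    refine Finset.mem_image.mpr ⟨c, ?_, hcx⟩
    refine Finset.mem_filter.mpr ⟨Finset.mem_of_mem_filter c hcD, ?_⟩
    calc hammingDist c v ≤ hammingDist (ψ c) v' := hdist c hcD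
      _ = hammingDist x v' := by rw [hcx]
      _ ≤ rn := hxd
  have hfinal : L + 1 ≤ (C.filter fun c => hammingDist c v ≤ rn).card := by
    calc L + 1 ≤ #(A.filter fun x => hammingDist x v' ≤ rn) := hv'
      _ ≤ #((C.filter fun c => hammingDist c v ≤ rn).image ψ) :=
          Finset.card_le_card hmap
      _ ≤ _ := Finset.card_image_le
  have := hLD v
  omega
end

section
/- For integers q ≥ 2, 1 ≤ L ≤ q, and r ∈ [0, L/(L+1)) with rn ∈ ℕ and rn ≡ L-1 (mod L), if n is sufficiently large with respect to r and L, then every (r,L) list-decodable code in [q]^n has size at most q^(n - ⌊((L+1)/L)·rn⌋). -/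
open Finset

/-- Auxiliary: we can carve pairwise disjoint blocks of prescribed sizes out of a
finite set `T`, provided the total size fits into `T`. -/
lemma exists_disjoint_blocks {α β : Type*} [DecidableEq α] [DecidableEq β]
    (E : Finset β) (size : β → ℕ) :
    ∀ T : Finset α, (∑ w ∈ E, size w) ≤ T.card →
      ∃ B : β → Finset α,
        (∀ w ∈ E, B w ⊆ T ∧ (B w).card = size w) ∧
        (∀ w ∈ E, ∀ w' ∈ E, w ≠ w' → Disjoint (B w) (B w')) := by
  induction E using Finset.induction_on with
  | empty =>
    intro T _
    exact ⟨fun _ => ∅, by simp, by simp⟩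
  | @insert a E' ha ih =>
    intro T hT
    rw [Finset.sum_insert ha] at hT
    obtain ⟨Ba, hBaT, hBacard⟩ :=
      Finset.exists_subset_card_eq (s := T) (n := size a) (le_trans (Nat.le_add_right _ _) hT)
    have hcard' : (∑ w ∈ E', size w) ≤ (T \ Ba).card := by
      rw [Finset.card_sdiff_of_subset hBaT, hBacard]
      omega
    obtain ⟨B', hB'1, hB'2⟩ := ih (T \ Ba) hcard'
    refine ⟨fun w => if w = a then Ba else B' w, ?_, ?_⟩
    · intro w hw
      rcases Finset.mem_insert.mp hw with rfl | hw'
      · simp [hBaT, hBacard]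
      · have hwa : w ≠ a := by rintro rfl; exact ha hw'
        refine ⟨?_, ?_⟩
        · simpa [hwa] using (hB'1 w hw').1.trans (Finset.sdiff_subset)
        · simpa [hwa] using (hB'1 w hw').2
    · have hd : ∀ w ∈ E', Disjoint Ba (B' w) := by
        intro w hw
        exact Finset.disjoint_of_subset_right (hB'1 w hw).1 Finset.disjoint_sdiff
      intro w hw w' hw' hne
      rcases Finset.mem_insert.mp hw with rfl | hw1 <;>
        rcases Finset.mem_insert.mp hw' with rfl | hw2
      · exact absurd rfl hne
      · have hw'a : w' ≠ w := fun h => hne h.symm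
        simpa [hw'a] using hd w' hw2
      · have hwa : w ≠ w' := hne
        simpa [hwa] using (hd w hw1).symm
      · have hwa : w ≠ a := by rintro rfl; exact ha hw1
        have hw'a : w' ≠ a := by rintro rfl; exact ha hw2
        simpa [hwa, hw'a] using hB'2 w hw1 w' hw2 hne

/-- For q ≥ 2, 1 ≤ L ≤ q, r ∈ [0, L/(L+1)) with rn ∈ ℕ and rn ≡ L-1 (mod L),
for all sufficiently large n (with respect to r, L), every (r,L) list-decodable
code in [q]^n has size at most q^(n - ⌊((L+1)/L)·rn⌋). -/
theorem stmt_2 (q L : ℕ) (r : ℝ)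
    (hq : 2 ≤ q) (hL1 : 1 ≤ L) (hLq : L ≤ q)
    (hr0 : 0 ≤ r) (hr1 : r < (L : ℝ) / (L + 1)) :
    ∃ N : ℕ, ∀ n rn : ℕ, N ≤ n →
      (rn : ℝ) = r * n → rn % L = L - 1 →
      ∀ C : Finset (Fin n → Fin q),
        (∀ v : Fin n → Fin q,
          (C.filter (fun c => hammingDist c v ≤ rn)).card ≤ L) →
        C.card ≤ q ^ (n - ((L + 1) * rn) / L) := by
  classical
  obtain ⟨J, rfl⟩ : ∃ J, L = J + 1 := ⟨L - 1, by omega⟩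
  refine ⟨1, fun n rn hn hrn hmod C hC => ?_⟩
  by_contra hcon
  push_neg at hcon
  -- arithmetic setup
  set m := (J + 1 + 1) * rn / (J + 1) with hm_def
  have hmod' : rn % (J + 1) = J := by simpa using hmod
  set s := rn / (J + 1) with hs_def
  have hsL : rn = (J + 1) * s + J := by
    conv_lhs => rw [← Nat.div_add_mod rn (J + 1)]
    rw [hmod']
  have key : (J + 1 + 1) * rn = (J + 1) * (rn + s) + J := by
    calc (J + 1 + 1) * rn = (J + 1) * rn + rn := by ring
      _ = (J + 1) * rn + ((J + 1) * s + J) := by rw [← hsL]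
      _ = (J + 1) * (rn + s) + J := by ring
  have hm : m = rn + s := by
    rw [hm_def, key, Nat.mul_add_div (by omega), Nat.div_eq_of_lt (by omega), add_zero]
  -- m < n
  have hnR : (1 : ℝ) ≤ (n : ℝ) := by exact_mod_cast hn
  have hr1' : r * ((J : ℝ) + 1 + 1) < (J : ℝ) + 1 := by
    rw [lt_div_iff₀ (by positivity)] at hr1
    push_cast at hr1
    linarith
  have hltR : (((J + 1 + 1) * rn : ℕ) : ℝ) < ((n * (J + 1) : ℕ) : ℝ) := by
    push_cast
    rw [hrn]
    nlinarith [hr1', hnR, hr0]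
  have hlt : (J + 1 + 1) * rn < n * (J + 1) := by exact_mod_cast hltR
  have hmn : m < n := by
    rw [hm]
    have h3 : (J + 1) * (rn + s) < (J + 1) * n := by
      have h4 : (J + 1) * (rn + s) + J < n * (J + 1) := by omega
      calc (J + 1) * (rn + s) ≤ (J + 1) * (rn + s) + J := Nat.le_add_right _ _
        _ < n * (J + 1) := h4
        _ = (J + 1) * n := Nat.mul_comm _ _
    exact Nat.lt_of_mul_lt_mul_left h3
  clear hm_def hs_def key hltR hlt hr1' hnR hrn hr1 hr0 hmod hmod'
  clear_value m s
  -- choose the coordinate window S of size m + 1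
  obtain ⟨S, -, hScard⟩ := Finset.exists_subset_card_eq (s := (Finset.univ : Finset (Fin n))) (n := m + 1)
    (by rw [Finset.card_univ, Fintype.card_fin]; omega)
  -- pigeonhole on projection outside S : some fiber has ≥ q + 1 codewords
  have hcardfun : (Finset.univ : Finset ((i : {x // x ∈ Sᶜ}) → Fin q)).card
      = q ^ (n - (m + 1)) := by
    rw [Finset.card_univ, Fintype.card_fun]
    simp [Finset.card_compl, hScard]
  have hpigcond : (Finset.univ : Finset ((i : {x // x ∈ Sᶜ}) → Fin q)).card * q < C.card := by
    rw [hcardfun]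
    have : q ^ (n - (m + 1)) * q = q ^ (n - m) := by
      rw [← pow_succ]
      congr 1
      omega
    rw [this]
    exact hcon
  obtain ⟨b, -, hb⟩ :=
    Finset.exists_lt_card_fiber_of_mul_lt_card_of_maps_to
      (f := fun (c : Fin n → Fin q) => fun (i : {x // x ∈ Sᶜ}) => c i.1)
      (fun a _ => Finset.mem_univ _) hpigcond
  obtain ⟨D, hDsub, hDcard⟩ := Finset.exists_subset_card_eq (n := q + 1) hb
  clear hb hpigcond hcardfun
  have hDC : D ⊆ C := hDsub.trans (Finset.filter_subset _ _)
  have hfiber : ∀ c ∈ D, ∀ c' ∈ D, ∀ i, i ∉ S → c i = c' i := by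
    intro c hc c' hc' i hi
    have h1 := (Finset.mem_filter.mp (hDsub hc)).2
    have h2 := (Finset.mem_filter.mp (hDsub hc')).2
    have := congrFun h1 ⟨i, Finset.mem_compl.mpr hi⟩
    have that := congrFun h2 ⟨i, Finset.mem_compl.mpr hi⟩
    simp only at this that
    rw [this, that]
  -- pigeonhole inside D at a coordinate j₀ ∈ S
  obtain ⟨j₀, hj₀S⟩ := Finset.card_pos.mp (show 0 < S.card by omega)
  obtain ⟨x, hxD, y, hyD, hxy, hxyj⟩ :=
    Finset.exists_ne_map_eq_of_card_lt_of_maps_to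
      (t := (Finset.univ : Finset (Fin q)))
      (by rw [hDcard, Finset.card_univ, Fintype.card_fin]; omega)
      (fun (a : Fin n → Fin q) (_ : a ∈ D) => Finset.mem_univ (a j₀))
  -- the extra L - 1 codewords
  obtain ⟨F, hFsub, hFcard⟩ := Finset.exists_subset_card_eq (s := D \ {x, y}) (n := J) (by
    have hxysub : ({x, y} : Finset (Fin n → Fin q)) ⊆ D := by
      intro z hz
      rcases Finset.mem_insert.mp hz with rfl | hz
      · exact hxD
      · rw [Finset.mem_singleton.mp hz]; exact hyD
    rw [Finset.card_sdiff_of_subset hxysub, hDcard, Finset.card_pair hxy]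
    omega)
  have hxF : x ∉ F := fun h => (Finset.mem_sdiff.mp (hFsub h)).2 (by simp)
  have hyF : y ∉ F := fun h => (Finset.mem_sdiff.mp (hFsub h)).2 (by simp)
  set E := insert x (insert y F) with hE_def
  have hED : ∀ w ∈ E, w ∈ D := by
    intro w hw
    rcases Finset.mem_insert.mp hw with rfl | hw
    · exact hxD
    rcases Finset.mem_insert.mp hw with rfl | hw
    · exact hyD
    · exact (Finset.mem_sdiff.mp (hFsub hw)).1
  have hEcard : E.card = J + 2 := by
    rw [hE_def, Finset.card_insert_of_notMem (by simp [hxy, hxF]),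
      Finset.card_insert_of_notMem hyF, hFcard]
  -- block sizes
  obtain ⟨size, hsize_def⟩ : ∃ size : (Fin n → Fin q) → ℕ,
      size = fun w => if w = x ∨ w = y then s else s + 1 := ⟨_, rfl⟩
  set T := S.erase j₀ with hT_def
  have hTcard : T.card = m := by
    rw [hT_def, Finset.card_erase_of_mem hj₀S, hScard]
    omega
  have hsum : (∑ w ∈ E, size w) ≤ T.card := by
    have h1 : (∑ w ∈ F, size w) = J * (s + 1) := by
      have hc : ∀ w ∈ F, size w = s + 1 := by
        intro w hw
        have hwx : w ≠ x := fun h => hxF (h ▸ hw)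
        have hwy : w ≠ y := fun h => hyF (h ▸ hw)
        simp [hsize_def, hwx, hwy]
      rw [Finset.sum_congr rfl hc, Finset.sum_const, hFcard, smul_eq_mul]
    rw [hE_def, Finset.sum_insert (by simp [hxy, hxF]), Finset.sum_insert hyF, h1]
    have hsx : size x = s := by simp [hsize_def]
    have hsy : size y = s := by simp [hsize_def]
    rw [hsx, hsy, hTcard, hm]
    have h2 : s + (s + J * (s + 1)) = rn + s := by rw [hsL]; ring
    exact le_of_eq h2
  obtain ⟨B, hB1, hB2⟩ := exists_disjoint_blocks E size T hsum
  -- the center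
  obtain ⟨v, hv_def⟩ : ∃ v : Fin n → Fin q, v = fun i =>
      if i = j₀ then x j₀ else
        if h : ∃ w, w ∈ E ∧ i ∈ B w then h.choose i else x i := ⟨_, rfl⟩
  have hvj₀ : v j₀ = x j₀ := by rw [hv_def]; simp
  have hvB : ∀ w ∈ E, ∀ i ∈ B w, v i = w i := by
    intro w hw i hi
    have hiT : i ∈ T := (hB1 w hw).1 hi
    have hij : i ≠ j₀ := Finset.ne_of_mem_erase hiT
    have hex : ∃ w', w' ∈ E ∧ i ∈ B w' := ⟨w, hw, hi⟩
    rw [hv_def]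
    simp only [if_neg hij, dif_pos hex]
    obtain ⟨hch1, hch2⟩ := hex.choose_spec
    by_cases hcw : hex.choose = w
    · rw [hcw]
    · exact absurd hi (Finset.disjoint_left.mp (hB2 _ hch1 w hw hcw) hch2)
  have hvout : ∀ w ∈ E, ∀ i, i ∉ S → v i = w i := by
    intro w hw i hi
    have hij : i ≠ j₀ := fun h => hi (h ▸ hj₀S)
    have hnex : ¬∃ w', w' ∈ E ∧ i ∈ B w' := by
      rintro ⟨w', hw', hiw'⟩
      exact hi (Finset.erase_subset _ _ ((hB1 w' hw').1 hiw'))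
    rw [hv_def]
    simp only [if_neg hij, dif_neg hnex]
    exact hfiber x hxD w (hED w hw) i hi
  -- distance bound
  have hbound : ∀ (w : Fin n → Fin q) (A : Finset (Fin n)),
      (∀ i ∈ A, w i = v i) → hammingDist w v ≤ n - A.card := by
    intro w A hA
    have hsub : Finset.univ.filter (fun i => w i ≠ v i) ⊆ Finset.univ \ A := by
      intro i hi
      simp only [Finset.mem_filter, Finset.mem_univ, true_and] at hi
      simp only [Finset.mem_sdiff, Finset.mem_univ, true_and]
      exact fun hiA => hi (hA i hiA)
    calc hammingDist w v = (Finset.univ.filter (fun i => w i ≠ v i)).card := rfl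
      _ ≤ (Finset.univ \ A).card := Finset.card_le_card hsub
      _ = n - A.card := by
          rw [Finset.card_sdiff_of_subset (Finset.subset_univ A), Finset.card_univ, Fintype.card_fin]
  have hSccard : (Sᶜ : Finset (Fin n)).card = n - (m + 1) := by
    rw [Finset.card_compl, Fintype.card_fin, hScard]
  have hdist : ∀ w ∈ E, hammingDist w v ≤ rn := by
    intro w hw
    have hBS : B w ⊆ S := ((hB1 w hw).1).trans (Finset.erase_subset _ _)
    by_cases hwxy : w = x ∨ w = y
    · -- agreement set Sᶜ ∪ insert j₀ (B w)
      have hj₀B : j₀ ∉ B w := fun h => (Finset.mem_erase.mp ((hB1 w hw).1 h)).1 rfl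
      set A := (Sᶜ : Finset (Fin n)) ∪ insert j₀ (B w) with hA_def
      have hAagree : ∀ i ∈ A, w i = v i := by
        intro i hi
        rcases Finset.mem_union.mp hi with hi | hi
        · exact (hvout w hw i (Finset.mem_compl.mp hi)).symm
        rcases Finset.mem_insert.mp hi with rfl | hi
        · rw [hvj₀]
          rcases hwxy with rfl | rfl
          · rfl
          · exact hxyj.symm
        · exact (hvB w hw i hi).symm
      have hAcard : A.card = (n - (m + 1)) + (s + 1) := by
        rw [hA_def, Finset.card_union_of_disjoint, hSccard,
          Finset.card_insert_of_notMem hj₀B, (hB1 w hw).2]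
        · have : size w = s := by simp [hsize_def, hwxy]
          rw [this]
        · rw [Finset.disjoint_left]
          intro i hi hins
          rcases Finset.mem_insert.mp hins with rfl | hins
          · exact (Finset.mem_compl.mp hi) hj₀S
          · exact (Finset.mem_compl.mp hi) (hBS hins)
      have := hbound w A hAagree
      rw [hAcard] at this
      omega
    · -- agreement set Sᶜ ∪ B w
      set A := (Sᶜ : Finset (Fin n)) ∪ B w with hA_def
      have hAagree : ∀ i ∈ A, w i = v i := by
        intro i hi
        rcases Finset.mem_union.mp hi with hi | hi
        · exact (hvout w hw i (Finset.mem_compl.mp hi)).symm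
        · exact (hvB w hw i hi).symm
      have hAcard : A.card = (n - (m + 1)) + (s + 1) := by
        rw [hA_def, Finset.card_union_of_disjoint, hSccard, (hB1 w hw).2]
        · have : size w = s + 1 := by simp [hsize_def, hwxy]
          rw [this]
        · rw [Finset.disjoint_left]
          intro i hi hins
          exact (Finset.mem_compl.mp hi) (hBS hins)
      have := hbound w A hAagree
      rw [hAcard] at this
      omega
  -- conclusion
  have hsubfil : E ⊆ C.filter (fun c => hammingDist c v ≤ rn) := by
    intro w hw
    exact Finset.mem_filter.mpr ⟨hDC (hED w hw), hdist w hw⟩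
  have hle := Finset.card_le_card hsubfil
  have := hC v
  rw [hEcard] at hle
  omega
end

section
/- For a prime power q, integers n and L ≥ 2, and r ∈ [0, L/(L+1)) with rn ∈ ℕ, if n - ⌈((L+1)/L)·rn⌉ + 1 > (L-1)·q/(q-1), then no linear code over 𝔽_q of length n and dimension n - ⌈((L+1)/L)·rn⌉ + 1 is (r,L) list-decodable. -/
open Finset

set_option linter.unusedSectionVars false
set_option linter.unusedVariables false
set_option maxHeartbeats 1000000

section ListDecodingAux





private lemma exists_systematic' {F : Type*} [Field F] {n : ℕ} :
    ∀ (k : ℕ) (C : Submodule F (Fin n → F)), Module.finrank F C = k →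
    ∃ S : Finset (Fin n), S.card = k ∧
      ∃ g : Fin n → (Fin n → F), (∀ j ∈ S, g j ∈ C) ∧
        (∀ j ∈ S, g j j = 1) ∧ (∀ j ∈ S, ∀ j' ∈ S, j' ≠ j → g j j' = 0) := by
  intro k
  induction k with
  | zero =>
    intro C _
    exact ⟨∅, rfl, fun _ => 0, by simp, by simp, by simp⟩
  | succ k ih =>
    intro C hC
    have hCne : C ≠ ⊥ := by
      intro h
      rw [h, finrank_bot] at hC
      omega
    obtain ⟨w, hwC, hw0⟩ := Submodule.exists_mem_ne_zero_of_ne_bot hCne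
    have hex : ∃ j0, w j0 ≠ 0 := by
      by_contra h
      push_neg at h
      exact hw0 (funext h)
    obtain ⟨j0, hj0⟩ := hex
    set w' : Fin n → F := (w j0)⁻¹ • w with hw'
    have hw'C : w' ∈ C := C.smul_mem _ hwC
    have hw'j0 : w' j0 = 1 := by
      simp [hw', inv_mul_cancel₀ hj0]
    let f : C →ₗ[F] F := (LinearMap.proj j0).comp C.subtype
    have hfsurj : Function.Surjective f := by
      intro a
      exact ⟨a • ⟨w', hw'C⟩, by simp [f, hw'j0]⟩
    have hker : Module.finrank F (LinearMap.ker f) = k := by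
      have h1 := LinearMap.finrank_range_add_finrank_ker f
      rw [LinearMap.range_eq_top.2 hfsurj] at h1
      simp only [finrank_top, Module.finrank_self] at h1
      omega
    set C' : Submodule F (Fin n → F) := (LinearMap.ker f).map C.subtype with hC'def
    have hC'le : C' ≤ C := Submodule.map_subtype_le _ _
    have hC'mem : ∀ x, x ∈ C' ↔ (x ∈ C ∧ x j0 = 0) := by
      intro x
      constructor
      · rintro ⟨⟨y, hy⟩, hk, rfl⟩
        refine ⟨hy, ?_⟩
        simpa [f] using hk
      · rintro ⟨hx, hx0⟩
        exact ⟨⟨x, hx⟩, by simpa [f] using hx0, rfl⟩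
    have hC'rank : Module.finrank F C' = k := by
      rw [hC'def, Submodule.finrank_map_subtype_eq]
      exact hker
    obtain ⟨S', hS'card, g', hg'C, hg'diag, hg'off⟩ := ih C' hC'rank
    have hzero : ∀ j' ∈ S', g' j' j0 = 0 := fun j' hj' =>
      ((hC'mem (g' j')).1 (hg'C j' hj')).2
    have hj0S' : j0 ∉ S' := by
      intro h
      have h1 := hg'diag j0 h
      have h2 := hzero j0 h
      rw [h1] at h2
      exact one_ne_zero h2
    classical
    refine ⟨insert j0 S', by rw [Finset.card_insert_of_notMem hj0S', hS'card], ?_⟩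
    set G0 : Fin n → F := w' - ∑ j' ∈ S', (w' j') • g' j' with hG0
    have hG0app : ∀ c, G0 c = w' c - ∑ j' ∈ S', (w' j') * g' j' c := by
      intro c
      simp [hG0, Finset.sum_apply]
    have hG0j0 : G0 j0 = 1 := by
      rw [hG0app, hw'j0]
      have hs : ∀ j' ∈ S', w' j' * g' j' j0 = 0 := fun j' hj' => by
        rw [hzero j' hj', mul_zero]
      rw [Finset.sum_congr rfl hs, Finset.sum_const_zero, sub_zero]
    have hG0S' : ∀ j' ∈ S', G0 j' = 0 := by
      intro j' hj'S'
      rw [hG0app]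
      rw [Finset.sum_eq_single j' (fun b hb hbne => by
            rw [hg'off b hb j' hj'S' (Ne.symm hbne), mul_zero])
          (fun hc => absurd hj'S' hc)]
      rw [hg'diag j' hj'S', mul_one, sub_self]
    refine ⟨Function.update g' j0 G0, ?_, ?_, ?_⟩
    · intro j hj
      by_cases h : j = j0
      · subst h
        rw [Function.update_self]
        refine C.sub_mem hw'C (Submodule.sum_mem _ fun j' hj' => ?_)
        exact C.smul_mem _ (hC'le (hg'C j' hj'))
      · rw [Function.update_of_ne h]
        rcases Finset.mem_insert.1 hj with h' | h'
        · exact absurd h' h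
        · exact hC'le (hg'C j h')
    · intro j hj
      by_cases h : j = j0
      · rw [h, Function.update_self]
        exact hG0j0
      · rw [Function.update_of_ne h]
        rcases Finset.mem_insert.1 hj with h' | h'
        · exact absurd h' h
        · exact hg'diag j h'
    · intro j hj j' hj' hne
      by_cases h : j = j0
      · have hj'S' : j' ∈ S' := by
          rcases Finset.mem_insert.1 hj' with h' | h'
          · exact absurd (h'.trans h.symm) hne
          · exact h'
        rw [h, Function.update_self]
        exact hG0S' j' hj'S'
      · have hjS' : j ∈ S' := by
          rcases Finset.mem_insert.1 hj with h' | h'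
          · exact absurd h' h
          · exact h'
        rw [Function.update_of_ne h]
        by_cases h2 : j' = j0
        · subst h2
          exact hzero j hjS'
        · have hj'S' : j' ∈ S' := by
            rcases Finset.mem_insert.1 hj' with h' | h'
            · exact absurd h' h2
            · exact h'
          exact hg'off j hjS' j' hj'S' hne





/-- Isolated patches builder. -/
private lemma iso_build' {F : Type*} [Field F] [DecidableEq F] {ι : Type*} [Fintype ι] [DecidableEq ι] (d : ℕ) :
    ∀ (t : ℕ) (u : Fin t → ι → F) (Ω : Finset ι),
      (∀ i, t * d ≤ (Ω.filter (fun c => u i c ≠ 0)).card) →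
      ∃ (A : Finset ι) (v : ι → F) (β : Fin t → F),
        A ⊆ Ω ∧ A.card = t * d ∧ (∀ c, c ∉ A → v c = 0) ∧
        (∀ i, β i ≠ 0) ∧
        (∀ i, d ≤ (A.filter fun c => v c = β i * u i c ∧ u i c ≠ 0).card) := by
  intro t
  induction t with
  | zero =>
    intro u Ω _
    exact ⟨∅, 0, fun _ => 1, by simp, by simp, by simp, by simp, fun i => i.elim0⟩
  | succ t ih =>
    intro u Ω hsupp
    -- patch for column 0
    have h0 : d ≤ (Ω.filter (fun c => u 0 c ≠ 0)).card := by
      have := hsupp 0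
      nlinarith [this]
    obtain ⟨B, hBsub, hBcard⟩ := Finset.exists_subset_card_eq h0
    have hBΩ : B ⊆ Ω := hBsub.trans (Finset.filter_subset _ _)
    have hBsupp : ∀ c ∈ B, u 0 c ≠ 0 := fun c hc => (Finset.mem_filter.1 (hBsub hc)).2
    -- recurse
    obtain ⟨A', v', β', hA'sub, hA'card, hv'0, hβ'0, hβ'agr⟩ :=
      ih (fun i => u i.succ) (Ω \ B) (by
        intro i
        have h1 := hsupp i.succ
        have h2 : ((Ω \ B).filter (fun c => u i.succ c ≠ 0)) =
            (Ω.filter (fun c => u i.succ c ≠ 0)) \ B := by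
          ext c; simp only [Finset.mem_filter, Finset.mem_sdiff]; tauto
        rw [h2]
        have h3 := Finset.le_card_sdiff B (Ω.filter (fun c => u i.succ c ≠ 0))
        have h4 : (t+1) * d = t * d + d := by ring
        omega)
    have hdisj : Disjoint B A' := by
      have : A' ⊆ Ω \ B := hA'sub
      intro X hX1 hX2
      intro x hx
      have h1 := hX2 hx
      have h2 := hX1 hx
      have := Finset.mem_sdiff.1 (this h1)
      exact absurd h2 (by simpa using this.2)
    set vv : ι → F := fun c => if c ∈ B then u 0 c else v' c with hvv
    set ββ : Fin (t+1) → F := Fin.cons (1 : F) β' with hββ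
    have hββ0 : ββ 0 = 1 := rfl
    have hββs : ∀ j : Fin t, ββ j.succ = β' j := fun j => by simp [hββ]
    have hvvB : ∀ c ∈ B, vv c = u 0 c := fun c hc => by simp [hvv, if_pos hc]
    have hvvA' : ∀ c ∈ A', vv c = v' c := by
      intro c hc
      have hcB : c ∉ B := Finset.disjoint_right.1 hdisj hc
      simp [hvv, if_neg hcB]
    refine ⟨B ∪ A', vv, ββ, ?_, ?_, ?_, ?_, ?_⟩
    · exact Finset.union_subset hBΩ (hA'sub.trans (Finset.sdiff_subset))
    · rw [Finset.card_union_of_disjoint hdisj, hBcard, hA'card]; ring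
    · intro c hc
      have hcB : c ∉ B := fun h => hc (Finset.mem_union_left _ h)
      have hcA : c ∉ A' := fun h => hc (Finset.mem_union_right _ h)
      simp only [hvv, if_neg hcB]
      exact hv'0 c hcA
    · intro i
      refine Fin.cases ?_ ?_ i
      · rw [hββ0]; exact one_ne_zero
      · intro j; rw [hββs j]; exact hβ'0 j
    · intro i
      refine Fin.cases ?_ ?_ i
      · have hsub : B ⊆ (B ∪ A').filter fun c => vv c = ββ 0 * u 0 c ∧ u 0 c ≠ 0 := by
          intro c hc
          refine Finset.mem_filter.2 ⟨Finset.mem_union_left _ hc, ?_, hBsupp c hc⟩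
          rw [hvvB c hc, hββ0, one_mul]
        calc d = B.card := hBcard.symm
        _ ≤ _ := Finset.card_le_card hsub
      · intro j
        have hsub : (A'.filter fun c => v' c = β' j * u j.succ c ∧ u j.succ c ≠ 0) ⊆
            ((B ∪ A').filter fun c => vv c = ββ j.succ * u j.succ c ∧ u j.succ c ≠ 0) := by
          intro c hc
          obtain ⟨hcA, hcv, hcu⟩ := Finset.mem_filter.1 hc
          refine Finset.mem_filter.2 ⟨Finset.mem_union_right _ hcA, ?_, hcu⟩
          rw [hvvA' c hcA, hββs j]
          exact hcv
        calc d ≤ _ := hβ'agr j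
        _ ≤ _ := Finset.card_le_card hsub






/-- Chain builder. -/
private lemma chain_build' {F : Type*} [Field F] [DecidableEq F] {ι : Type*} [Fintype ι] [DecidableEq ι] (d : ℕ) (hd : 2 ≤ d) :
    ∀ (t : ℕ) (σ : ℕ) (u : Fin (t+1) → ι → F) (Ω : Finset ι) (c0 : ι) (val : F),
      val ≠ 0 → c0 ∉ Ω → u 0 c0 ≠ 0 →
      (∀ i, σ ≤ (Ω.filter (fun c => u i c ≠ 0)).card) →
      ((t+1) * (d-1) ≤ σ) →
      (Ω.card + t * (d-1) ≤ 2 * σ) →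
      ∃ (A : Finset ι) (v : ι → F) (β : Fin (t+1) → F),
        A ⊆ Ω ∧ A.card = (t+1) * (d-1) ∧ (∀ c, c ∉ A → v c = 0) ∧
        (∀ i, β i ≠ 0) ∧ (β 0 * u 0 c0 = val) ∧
        (d - 1 ≤ (A.filter fun c => v c = β 0 * u 0 c ∧ u 0 c ≠ 0).card) ∧
        (∀ i : Fin t, d ≤ (A.filter fun c => v c = β i.succ * u i.succ c ∧ u i.succ c ≠ 0).card) := by
  intro t
  induction t with
  | zero =>
    intro σ u Ω c0 val hval hc0Ω hu0c0 hsupp hA _hB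
    set β0 : F := val * (u 0 c0)⁻¹ with hβ0
    have hβ0ne : β0 ≠ 0 := mul_ne_zero hval (inv_ne_zero hu0c0)
    have havail : d - 1 ≤ (Ω.filter (fun c => u 0 c ≠ 0)).card := by
      have := hsupp 0
      have h1 : 1 * (d-1) ≤ σ := hA
      omega
    obtain ⟨B, hBsub, hBcard⟩ := Finset.exists_subset_card_eq havail
    have hBΩ : B ⊆ Ω := hBsub.trans (Finset.filter_subset _ _)
    have hBsupp : ∀ c ∈ B, u 0 c ≠ 0 := fun c hc => (Finset.mem_filter.1 (hBsub hc)).2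
    refine ⟨B, fun c => if c ∈ B then β0 * u 0 c else 0, fun _ => β0, hBΩ, by
      rw [hBcard]; ring, fun c hc => if_neg hc, fun _ => hβ0ne, ?_, ?_, fun i => i.elim0⟩
    · rw [hβ0]
      field_simp
    · have hsub : B ⊆ B.filter fun c => (if c ∈ B then β0 * u 0 c else 0) = β0 * u 0 c ∧ u 0 c ≠ 0 := by
        intro c hc
        exact Finset.mem_filter.2 ⟨hc, if_pos hc, hBsupp c hc⟩
      calc d - 1 = B.card := hBcard.symm
      _ ≤ _ := Finset.card_le_card hsub
  | succ t ih =>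
    intro σ u Ω c0 val hval hc0Ω hu0c0 hsupp hA hB
    set β0 : F := val * (u 0 c0)⁻¹ with hβ0
    have hβ0ne : β0 ≠ 0 := mul_ne_zero hval (inv_ne_zero hu0c0)
    -- pick B0 of size d-2 in supp of column 0
    have havail0 : d - 2 ≤ (Ω.filter (fun c => u 0 c ≠ 0)).card := by
      have := hsupp 0
      have h1 : (t+2) * (d-1) ≤ σ := hA
      have h2 : d - 1 ≤ (t+2) * (d-1) := by nlinarith
      omega
    obtain ⟨B0, hB0sub, hB0card⟩ := Finset.exists_subset_card_eq havail0
    have hB0Ω : B0 ⊆ Ω := hB0sub.trans (Finset.filter_subset _ _)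
    have hB0supp : ∀ c ∈ B0, u 0 c ≠ 0 := fun c hc => (Finset.mem_filter.1 (hB0sub hc)).2
    -- pick c1 in supp(u 0) ∩ supp(u 1) outside B0
    set X : Finset ι := (Ω.filter (fun c => u 0 c ≠ 0)) ∩ (Ω.filter (fun c => u 1 c ≠ 0)) with hX
    have hXcard : (t+1) * (d-1) ≤ X.card := by
      rw [hX]
      have h1 := Finset.card_inter_add_card_union
        (Ω.filter (fun c => u 0 c ≠ 0)) (Ω.filter (fun c => u 1 c ≠ 0))
      have h2 : ((Ω.filter (fun c => u 0 c ≠ 0)) ∪ (Ω.filter (fun c => u 1 c ≠ 0))).card ≤ Ω.card :=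
        Finset.card_le_card (Finset.union_subset (Finset.filter_subset _ _) (Finset.filter_subset _ _))
      have h3 := hsupp 0
      have h4 := hsupp 1
      omega
    have hXB0 : (X \ B0).Nonempty := by
      rw [← Finset.card_pos]
      have h1 := Finset.le_card_sdiff B0 X
      have h2 : d - 1 ≤ (t+1) * (d-1) := by nlinarith
      omega
    obtain ⟨c1, hc1⟩ := hXB0
    have hc1X : c1 ∈ X := (Finset.mem_sdiff.1 hc1).1
    have hc1B0 : c1 ∉ B0 := (Finset.mem_sdiff.1 hc1).2
    have hc1u0 : u 0 c1 ≠ 0 := (Finset.mem_filter.1 (Finset.mem_inter.1 hc1X).1).2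
    have hc1u1 : u 1 c1 ≠ 0 := (Finset.mem_filter.1 (Finset.mem_inter.1 hc1X).2).2
    have hc1Ω : c1 ∈ Ω := (Finset.mem_filter.1 (Finset.mem_inter.1 hc1X).1).1
    set IB : Finset ι := insert c1 B0 with hIB
    have hIBcard : IB.card = d - 1 := by
      rw [hIB, Finset.card_insert_of_notMem hc1B0, hB0card]
      omega
    have hIBΩ : IB ⊆ Ω := by
      rw [hIB]
      exact Finset.insert_subset hc1Ω hB0Ω
    have hIBsupp : ∀ c ∈ IB, u 0 c ≠ 0 := by
      intro c hc
      rcases Finset.mem_insert.1 hc with h | h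
      · subst h; exact hc1u0
      · exact hB0supp c h
    set val' : F := β0 * u 0 c1 with hval'
    have hval'ne : val' ≠ 0 := mul_ne_zero hβ0ne hc1u0
    set Ω' : Finset ι := Ω \ IB with hΩ'
    have hΩ'card : Ω'.card = Ω.card - (d-1) := by
      rw [hΩ', Finset.card_sdiff_of_subset hIBΩ, hIBcard]
    have hc1Ω' : c1 ∉ Ω' := by
      rw [hΩ']
      simp [hIB]
    -- recursion
    obtain ⟨A', v', β', hA'sub, hA'card, hv'0, hβ'0, hhook', hagr0', hagr'⟩ :=
      ih (σ - (d-1)) (fun i => u i.succ) Ω' c1 val' hval'ne hc1Ω' (by exact hc1u1)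
        (by
          intro i
          have h1 := hsupp i.succ
          have h2 : ((Ω').filter (fun c => u i.succ c ≠ 0)) =
              (Ω.filter (fun c => u i.succ c ≠ 0)) \ IB := by
            rw [hΩ']
            ext c; simp only [Finset.mem_filter, Finset.mem_sdiff]; tauto
          rw [h2]
          have h3 := Finset.le_card_sdiff IB (Ω.filter (fun c => u i.succ c ≠ 0))
          omega)
        (by
          have h1 : (t+2) * (d-1) ≤ σ := hA
          have h2 : (t+2) * (d-1) = (t+1)*(d-1) + (d-1) := by ring
          omega)
        (by
          have h1 : Ω.card + (t+1) * (d-1) ≤ 2 * σ := hB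
          have h2 : (t+1) * (d-1) = t*(d-1) + (d-1) := by ring
          have h3 : (d-1) ≤ σ := le_trans (by nlinarith : (d:ℕ)-1 ≤ (t+2)*(d-1)) hA
          have h4 : IB.card ≤ Ω.card := Finset.card_le_card hIBΩ
          rw [hΩ'card]
          omega)
    have hA'Ω' : A' ⊆ Ω' := hA'sub
    have hdisj : Disjoint IB A' := by
      rw [Finset.disjoint_left]
      intro a ha ha'
      have := hA'Ω' ha'
      rw [hΩ', Finset.mem_sdiff] at this
      exact this.2 ha
    set A : Finset ι := IB ∪ A' with hAdef
    set vv : ι → F := fun c => if c ∈ IB then β0 * u 0 c else v' c with hvv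
    set ββ : Fin (t+2) → F := Fin.cons β0 β' with hββ
    have hββ0 : ββ 0 = β0 := rfl
    have hββs : ∀ j : Fin (t+1), ββ j.succ = β' j := fun j => by simp [hββ]
    have hvvIB : ∀ c ∈ IB, vv c = β0 * u 0 c := fun c hc => by simp only [hvv, if_pos hc]
    have hvvA' : ∀ c ∈ A', vv c = v' c := by
      intro c hc
      have : c ∉ IB := Finset.disjoint_right.1 hdisj hc
      simp only [hvv, if_neg this]
    refine ⟨A, vv, ββ, ?_, ?_, ?_, ?_, ?_, ?_, ?_⟩
    · exact Finset.union_subset hIBΩ (hA'Ω'.trans (by rw [hΩ']; exact Finset.sdiff_subset))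
    · rw [hAdef, Finset.card_union_of_disjoint hdisj, hIBcard, hA'card]
      ring
    · intro c hc
      have hcIB : c ∉ IB := fun h => hc (Finset.mem_union_left _ h)
      have hcA' : c ∉ A' := fun h => hc (Finset.mem_union_right _ h)
      simp only [hvv, if_neg hcIB]
      exact hv'0 c hcA'
    · intro i
      refine Fin.cases ?_ ?_ i
      · rw [hββ0]; exact hβ0ne
      · intro j; rw [hββs j]; exact hβ'0 j
    · rw [hββ0, hβ0]
      field_simp
    · -- column 0: IB gives d-1 agreements
      have hsub : IB ⊆ A.filter fun c => vv c = ββ 0 * u 0 c ∧ u 0 c ≠ 0 := by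
        intro c hc
        refine Finset.mem_filter.2 ⟨Finset.mem_union_left _ hc, ?_, hIBsupp c hc⟩
        rw [hvvIB c hc, hββ0]
      calc d - 1 = IB.card := hIBcard.symm
      _ ≤ _ := Finset.card_le_card hsub
    · intro i
      refine Fin.cases ?_ ?_ i
      · -- column 1: hook c1 + recursion's d-1
        have hc1A' : c1 ∉ A' := fun h => hc1Ω' (hA'Ω' h)
        have hsub : insert c1 (A'.filter fun c => v' c = β' 0 * u (0:Fin (t+1)).succ c ∧ u (0:Fin (t+1)).succ c ≠ 0)
            ⊆ A.filter fun c => vv c = ββ (0:Fin (t+1)).succ * u (0:Fin (t+1)).succ c ∧ u (0:Fin (t+1)).succ c ≠ 0 := by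
          intro c hc
          rcases Finset.mem_insert.1 hc with h | h
          · rw [h]
            refine Finset.mem_filter.2 ⟨Finset.mem_union_left _ (Finset.mem_insert_self _ _), ?_, ?_⟩
            · rw [hvvIB c1 (Finset.mem_insert_self _ _), hββs]
              rw [hhook', hval']
            · exact hc1u1
          · obtain ⟨hcA, hcv, hcu⟩ := Finset.mem_filter.1 h
            refine Finset.mem_filter.2 ⟨Finset.mem_union_right _ hcA, ?_, hcu⟩
            rw [hvvA' c hcA, hββs]
            exact hcv
        have hcard : d ≤ (insert c1 (A'.filter fun c => v' c = β' 0 * u (0:Fin (t+1)).succ c ∧ u (0:Fin (t+1)).succ c ≠ 0)).card := by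
          rw [Finset.card_insert_of_notMem (fun h => hc1A' (Finset.mem_of_mem_filter _ h))]
          have h1 : d - 1 ≤ (A'.filter fun c => v' c = β' 0 * u (0:Fin (t+1)).succ c ∧ u (0:Fin (t+1)).succ c ≠ 0).card := hagr0'
          omega
        exact le_trans hcard (Finset.card_le_card hsub)
      · intro j
        have hsub : (A'.filter fun c => v' c = β' j.succ * u j.succ.succ c ∧ u j.succ.succ c ≠ 0)
            ⊆ A.filter fun c => vv c = ββ j.succ.succ * u j.succ.succ c ∧ u j.succ.succ c ≠ 0 := by
          intro c hc
          obtain ⟨hcA, hcv, hcu⟩ := Finset.mem_filter.1 hc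
          refine Finset.mem_filter.2 ⟨Finset.mem_union_right _ hcA, ?_, hcu⟩
          rw [hvvA' c hcA, hββs]
          exact hcv
        exact le_trans (hagr' j) (Finset.card_le_card hsub)






private lemma ham_split' {F : Type*} [Field F] [Fintype F] [DecidableEq F] {n : ℕ} (S : Finset (Fin n)) (x v : Fin n → F) :
    hammingDist x v = (S.filter fun c => x c ≠ v c).card + (Sᶜ.filter fun c => x c ≠ v c).card := by
  have h1 : hammingDist x v = (Finset.univ.filter fun c => x c ≠ v c).card := rfl
  rw [h1, ← Finset.union_compl S, Finset.filter_union,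
    Finset.card_union_of_disjoint
      (Finset.disjoint_filter_filter disjoint_compl_right)]

private lemma dist_bound' {F : Type*} [Field F] [Fintype F] [DecidableEq F] {n : ℕ} (S : Finset (Fin n)) (w : Fin n → F) (j : Fin n) (hj : j ∈ S)
    (hoff : ∀ j' ∈ S, j' ≠ j → w j' = 0)
    (β : F) (v : Fin n → F) (hvS : ∀ c ∈ S, v c = 0)
    (d0 : ℕ) (hd0 : d0 ≤ (Sᶜ.filter fun c => β * w c = v c).card) :
    hammingDist (fun c => β * w c) v ≤ 1 + (Sᶜ.card - d0) := by
  rw [ham_split' S]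
  have hS : (S.filter fun c => β * w c ≠ v c) ⊆ {j} := by
    intro c hc
    obtain ⟨hcS, hcne⟩ := Finset.mem_filter.1 hc
    rw [Finset.mem_singleton]
    by_contra hcj
    exact hcne (by rw [hoff c hcS hcj, mul_zero, hvS c hcS])
  have h1 : (S.filter fun c => β * w c ≠ v c).card ≤ 1 := by
    calc (S.filter fun c => β * w c ≠ v c).card ≤ ({j} : Finset (Fin n)).card :=
      Finset.card_le_card hS
    _ = 1 := Finset.card_singleton j
  have h2 : (Sᶜ.filter fun c => β * w c ≠ v c).card ≤ Sᶜ.card - d0 := by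
    have e1 : (Sᶜ.filter fun c => β * w c ≠ v c) = Sᶜ \ (Sᶜ.filter fun c => β * w c = v c) :=
      Finset.filter_not _ _
    rw [e1, Finset.card_sdiff_of_subset (Finset.filter_subset _ _)]
    omega
  omega

private lemma count_final' {F : Type*} [Field F] [Fintype F] [DecidableEq F] {n : ℕ} (C : Submodule F (Fin n → F)) (S : Finset (Fin n)) (g : Fin n → Fin n → F)
    (hgC : ∀ j ∈ S, g j ∈ C) (hdiag : ∀ j ∈ S, g j j = 1)
    (hoff : ∀ j ∈ S, ∀ j' ∈ S, j' ≠ j → g j j' = 0)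
    (v : Fin n → F) (s L : ℕ) (P : Finset (Fin n × F))
    (hP : ∀ p ∈ P, p.1 ∈ S ∧ p.2 ≠ 0 ∧ hammingDist (fun c => p.2 * g p.1 c) v ≤ s)
    (h0 : hammingDist (0 : Fin n → F) v ≤ s) (hLP : L ≤ P.card) :
    ¬ ({c ∈ (C : Set (Fin n → F)) | hammingDist c v ≤ s}.ncard ≤ L) := by
  intro hcon
  set Φ : Fin n × F → (Fin n → F) := fun p => fun c => p.2 * g p.1 c with hΦ
  have hinj : Set.InjOn Φ P := by
    intro p hp p' hp' heq
    obtain ⟨h1S, h1ne, _⟩ := hP p hp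
    obtain ⟨h2S, h2ne, _⟩ := hP p' hp'
    have hval := congrFun heq p.1
    simp only [hΦ] at hval
    rw [hdiag p.1 h1S, mul_one] at hval
    by_cases hj : p'.1 = p.1
    · rw [hj, hdiag p.1 h1S, mul_one] at hval
      exact Prod.ext hj.symm hval
    · rw [hoff p'.1 h2S p.1 h1S (fun hcc => hj hcc.symm), mul_zero] at hval
      exact absurd hval h1ne
  set W : Finset (Fin n → F) := insert 0 (P.image Φ) with hW
  have h0img : (0 : Fin n → F) ∉ P.image Φ := by
    rw [Finset.mem_image]
    rintro ⟨p, hp, hp0⟩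
    obtain ⟨h1S, h1ne, _⟩ := hP p hp
    have := congrFun hp0 p.1
    simp only [hΦ, hdiag p.1 h1S, mul_one, Pi.zero_apply] at this
    exact h1ne this
  have hWcard : W.card = P.card + 1 := by
    rw [hW, Finset.card_insert_of_notMem h0img, Finset.card_image_of_injOn hinj]
  have hWsub : (W : Set (Fin n → F)) ⊆ {c ∈ (C : Set (Fin n → F)) | hammingDist c v ≤ s} := by
    intro x hx
    simp only [hW, Finset.coe_insert, Set.mem_insert_iff, Finset.coe_image, Set.mem_image] at hx
    rcases hx with rfl | ⟨p, hp, rfl⟩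
    · exact ⟨C.zero_mem, h0⟩
    · obtain ⟨h1S, h1ne, h1d⟩ := hP p (by exact_mod_cast hp)
      have hmem : Φ p ∈ C := by
        have : Φ p = p.2 • g p.1 := by
          funext c
          simp [hΦ, Pi.smul_apply, smul_eq_mul]
        rw [this]
        exact C.smul_mem _ (hgC p.1 h1S)
      exact ⟨hmem, h1d⟩
  have hfin : ({c ∈ (C : Set (Fin n → F)) | hammingDist c v ≤ s}).Finite := Set.toFinite _
  have := Set.ncard_le_ncard hWsub hfin
  rw [Set.ncard_coe_finset] at this
  omega


end ListDecodingAux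

/-- For a prime power q (card of a finite field F), L ≥ 2, r ∈ [0, L/(L+1))
with rn ∈ ℕ, if n - ⌈((L+1)/L)·rn⌉ + 1 > (L-1)·q/(q-1), then no linear code
over F of length n and dimension n - ⌈((L+1)/L)·rn⌉ + 1 is (r,L)
list-decodable. -/
theorem stmt_4 (F : Type*) [Field F] [Fintype F] [DecidableEq F]
    (L n rn : ℕ) (r : ℝ)
    (hL : 2 ≤ L)
    (hr0 : 0 ≤ r) (hr1 : r < (L : ℝ) / (L + 1))
    (hrn : (rn : ℝ) = r * n)
    (k : ℕ) (hk : k = n - ((L + 1) * rn + L - 1) / L + 1)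
    (hcond : ((L : ℝ) - 1) * (Fintype.card F) / ((Fintype.card F) - 1) <
      (k : ℝ))
    (C : Submodule F (Fin n → F)) (hdim : Module.finrank F C = k) :
    ¬ (∀ v : Fin n → F,
        {c ∈ (C : Set (Fin n → F)) | hammingDist c v ≤ rn}.ncard ≤ L) := by
  intro hcon
  set q := Fintype.card F with hqdef
  have hq2 : 2 ≤ q := Fintype.one_lt_card
  -- integer form of hcond
  have hcondℕ : (L-1) * q + 1 ≤ k * (q-1) := by
    have hq1R : (0:ℝ) < (q:ℝ) - 1 := by
      have : (2:ℝ) ≤ (q:ℝ) := by exact_mod_cast hq2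
      linarith
    rw [div_lt_iff₀ hq1R] at hcond
    have e1 : (((L-1) * q : ℕ) : ℝ) = ((L:ℝ)-1) * (q:ℝ) := by
      rw [Nat.cast_mul, Nat.cast_sub (by omega : 1 ≤ L), Nat.cast_one]
    have e2 : ((k * (q-1) : ℕ) : ℝ) = (k:ℝ) * ((q:ℝ)-1) := by
      rw [Nat.cast_mul, Nat.cast_sub (by omega : 1 ≤ q), Nat.cast_one]
    have h3 : (((L-1) * q : ℕ) : ℝ) < ((k * (q-1) : ℕ) : ℝ) := by rw [e1, e2]; exact hcond
    exact_mod_cast h3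
  -- dimension bound
  have hkn : k ≤ n := by
    have hfr : Module.finrank F (Fin n → F) = n := by
      simp [Module.finrank_fintype_fun_eq_card]
    have h := Submodule.finrank_le C
    rw [hdim, hfr] at h
    exact h
  -- key integer consequences
  have hL1k : L - 1 < k := by
    have h1 : (L-1) * (q-1) ≤ (L-1) * q := Nat.mul_le_mul_left _ (by omega)
    have h2 : (L-1) * (q-1) < k * (q-1) := by omega
    exact Nat.lt_of_mul_lt_mul_right h2
  set g0 := k - (L - 1) with hg0def
  have hg0L : L ≤ g0 * (q-1) := by
    have e1 : g0 * (q-1) + (L-1) * (q-1) = k * (q-1) := by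
      rw [hg0def, ← Nat.add_mul]
      congr 1
      omega
    have e2 : (L-1) * q = (L-1) * (q-1) + (L-1) := by
      conv_lhs => rw [show q = (q-1)+1 by omega]
      rw [Nat.mul_succ]
    omega
  -- rn = 0 case
  rcases Nat.eq_zero_or_pos rn with hs0 | hs1
  · rw [hs0] at hk
    have : ((L + 1) * 0 + L - 1) / L = 0 := Nat.div_eq_of_lt (by omega)
    rw [this] at hk
    omega
  -- d and its properties
  set d := (rn + L - 1) / L with hddef
  have hdmod := Nat.div_add_mod (rn + L - 1) L
  rw [← hddef] at hdmod
  have hdmodlt : (rn + L - 1) % L < L := Nat.mod_lt _ (by omega)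
  have hdub : L * d ≤ rn + L - 1 := by omega
  have hdlb : rn ≤ L * d := by omega
  have hd1 : 1 ≤ d := by
    rcases Nat.eq_zero_or_pos d with h | h
    · rw [h, mul_zero] at hdlb; omega
    · exact h
  -- T = rn + d
  have hT : ((L + 1) * rn + L - 1) / L = rn + d := by
    have e0 : (L+1) * rn = rn * L + rn := by ring
    have e : (L + 1) * rn + L - 1 = (rn + L - 1) + L * rn := by
      have e1 : L * rn = rn * L := by ring
      omega
    rw [e, Nat.add_mul_div_left _ _ (by omega : 0 < L)]
    try omega
  -- rn + d ≤ n
  have hn1 : 1 ≤ n := by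
    by_contra h
    push_neg at h
    interval_cases n
    simp at hrn
    omega
  have hTn : rn + d ≤ n := by
    have hlt : (rn:ℝ) * ((L:ℝ)+1) < (L:ℝ) * (n:ℝ) := by
      have hn0 : (0:ℝ) < (n:ℝ) := by exact_mod_cast hn1
      have h1 : r * n < ((L:ℝ) / ((L:ℝ)+1)) * n := mul_lt_mul_of_pos_right hr1 hn0
      have hL0 : (0:ℝ) < (L:ℝ)+1 := by positivity
      rw [hrn]
      calc r * (n:ℝ) * ((L:ℝ)+1) < (((L:ℝ) / ((L:ℝ)+1)) * n) * ((L:ℝ)+1) := by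
            exact mul_lt_mul_of_pos_right h1 hL0
      _ = (L:ℝ) * n := by field_simp
    have hltℕ : rn * (L+1) < L * n := by
      have : ((rn * (L+1) : ℕ) : ℝ) < ((L * n : ℕ) : ℝ) := by push_cast; linarith
      exact_mod_cast this
    have h2 : (L + 1) * rn + L - 1 < (n+1) * L := by
      have e : (L+1) * rn = rn * (L+1) := by ring
      have e2 : (n+1)*L = L*n + L := by ring
      omega
    have h3 := (Nat.div_lt_iff_lt_mul (by omega : 0 < L)).2 h2
    rw [hT] at h3
    omega
  -- m = n - k
  have hm : n - k = rn + d - 1 := by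
    rw [hk, hT]
    omega
  have hkval : k = n - (rn + d) + 1 := by rw [hk, hT]
  -- systematic family
  obtain ⟨S, hScard, g, hgC, hgdiag, hgoff⟩ := exists_systematic' k C hdim
  have hSc : Sᶜ.card = rn + d - 1 := by
    rw [Finset.card_compl, hScard]
    simp only [Fintype.card_fin]
    omega
  -- dichotomy
  set heavyP : Fin n → Prop := fun j => rn ≤ (Sᶜ.filter fun c => g j c ≠ 0).card with hheavyP
  have hdec : DecidablePred heavyP := fun j => by rw [hheavyP]; infer_instance
  set lightset := S.filter (fun j => ¬ heavyP j) with hlightdef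
  set heavyset := S.filter heavyP with hheavydef
  have hpart : heavyset.card + lightset.card = k := by
    rw [hheavydef, hlightdef, Finset.card_filter_add_card_filter_not, hScard]
  by_cases hcase : g0 ≤ lightset.card
  · -- CASE 1 : many light columns, v = 0
    have hlightS : ∀ j ∈ lightset, j ∈ S := fun j hj => Finset.mem_of_mem_filter j hj
    have hlightlt : ∀ j ∈ lightset, (Sᶜ.filter fun c => g j c ≠ 0).card < rn := by
      intro j hj
      have h2 := (Finset.mem_filter.1 hj).2
      rw [hheavyP] at h2
      omega
    set P : Finset (Fin n × F) := lightset ×ˢ ((Finset.univ : Finset F).erase 0) with hPdef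
    have hPcard : L ≤ P.card := by
      rw [hPdef, Finset.card_product, Finset.card_erase_of_mem (Finset.mem_univ _),
        Finset.card_univ, ← hqdef]
      calc L ≤ g0 * (q-1) := hg0L
      _ ≤ lightset.card * (q-1) := Nat.mul_le_mul_right _ hcase
    have hPall : ∀ p ∈ P, p.1 ∈ S ∧ p.2 ≠ 0 ∧
        hammingDist (fun c => p.2 * g p.1 c) (0 : Fin n → F) ≤ rn := by
      intro p hp
      rw [hPdef, Finset.mem_product] at hp
      obtain ⟨hp1, hp2⟩ := hp
      have hp2ne : p.2 ≠ 0 := Finset.ne_of_mem_erase hp2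
      refine ⟨hlightS _ hp1, hp2ne, ?_⟩
      have hmatch : d ≤ (Sᶜ.filter fun c => p.2 * g p.1 c = (0 : Fin n → F) c).card := by
        have hpartc := Finset.card_filter_add_card_filter_not
          (s := Sᶜ) (p := fun c => g p.1 c ≠ 0)
        have hlt := hlightlt p.1 hp1
        have hsub : (Sᶜ.filter fun c => ¬ (g p.1 c ≠ 0)) ⊆
            (Sᶜ.filter fun c => p.2 * g p.1 c = (0 : Fin n → F) c) := by
          intro c hc
          obtain ⟨h1, h2⟩ := Finset.mem_filter.1 hc
          rw [not_not] at h2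
          exact Finset.mem_filter.2 ⟨h1, by simp [h2]⟩
        have hcc := Finset.card_le_card hsub
        omega
      have hdb := dist_bound' S (g p.1) p.1 (hlightS _ hp1)
        (fun j' hj' hne => hgoff p.1 (hlightS _ hp1) j' hj' hne) p.2 0
        (fun c _ => rfl) d hmatch
      calc hammingDist (fun c => p.2 * g p.1 c) (0 : Fin n → F) ≤ 1 + (Sᶜ.card - d) := hdb
      _ ≤ rn := by omega
    have h0 : hammingDist (0 : Fin n → F) (0 : Fin n → F) ≤ rn := by
      rw [hammingDist_self]
      omega
    exact count_final' C S g hgC hgdiag hgoff 0 rn L P hPall h0 hPcard (hcon 0)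
  · -- CASE 2 : at least L heavy columns
    push_neg at hcase
    have hheavyL : L ≤ heavyset.card := by omega
    obtain ⟨HL, hHLsub, hHLcard⟩ := Finset.exists_subset_card_eq hheavyL
    have hHLS : ∀ j ∈ HL, j ∈ S := fun j hj => Finset.mem_of_mem_filter j (hHLsub hj)
    have hHLheavy : ∀ j ∈ HL, rn ≤ (Sᶜ.filter fun c => g j c ≠ 0).card := fun j hj =>
      (Finset.mem_filter.1 (hHLsub hj)).2
    by_cases hd2 : 2 ≤ d
    · -- CASE 2b : chain + iso
      set D0 := L * d - rn with hD0def
      have hD0a : D0 + rn = L * d := by omega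
      have hD0L : D0 + 1 ≤ L := by omega
      -- enumeration of HL
      set hen := HL.orderIsoOfFin hHLcard with hhendef
      set en : Fin L → Fin n := fun i => (hen i : Fin n) with hendef
      have heninj : Function.Injective en := by
        intro a b hab
        have h1 : (hen a) = (hen b) := Subtype.ext hab
        exact hen.injective h1
      have henHL : ∀ i, en i ∈ HL := fun i => (hen i).2
      set uC : Fin (D0+1) → Fin n → F := fun i => g (en (Fin.castLE hD0L i)) with huC
      have huCdef : ∀ i c, uC i c = g (en (Fin.castLE hD0L i)) c := fun i c => rfl
      -- c0
      have hccard : rn ≤ (Sᶜ.filter fun c => uC 0 c ≠ 0).card := by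
        have := hHLheavy _ (henHL (Fin.castLE hD0L 0))
        exact this
      have hne0 : (Sᶜ.filter fun c => uC 0 c ≠ 0).Nonempty := Finset.card_pos.1 (by omega)
      obtain ⟨c0, hc0mem⟩ := hne0
      have hc0Sc : c0 ∈ Sᶜ := (Finset.mem_filter.1 hc0mem).1
      have hc0u : uC 0 c0 ≠ 0 := (Finset.mem_filter.1 hc0mem).2
      set Ω1 := Sᶜ.erase c0 with hΩ1def
      have hc0Ω1 : c0 ∉ Ω1 := by rw [hΩ1def]; exact Finset.notMem_erase _ _
      have hΩ1card : Ω1.card = rn + d - 2 := by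
        rw [hΩ1def, Finset.card_erase_of_mem hc0Sc]
        omega
      have hfiltΩ1 : ∀ j ∈ HL, rn - 1 ≤ (Ω1.filter fun c => g j c ≠ 0).card := by
        intro j hj
        have h1 : (Ω1.filter fun c => g j c ≠ 0) = (Sᶜ.filter fun c => g j c ≠ 0).erase c0 := by
          rw [hΩ1def]
          ext c
          simp only [Finset.mem_filter, Finset.mem_erase]
          tauto
        rw [h1]
        have h2 := hHLheavy j hj
        by_cases hm : c0 ∈ (Sᶜ.filter fun c => g j c ≠ 0)
        · rw [Finset.card_erase_of_mem hm]; omega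
        · rw [Finset.erase_eq_of_notMem hm]; omega
      have hsupp1 : ∀ i : Fin (D0+1), rn - 1 ≤ (Ω1.filter fun c => uC i c ≠ 0).card :=
        fun i => hfiltΩ1 _ (henHL _)
      -- arithmetic identities
      have hmulL : L * (d-1) + L = L * d := by
        have hdd : (d - 1) + 1 = d := by omega
        calc L * (d-1) + L = L * ((d-1)+1) := by ring
        _ = L * d := by rw [hdd]
      have he1 : D0 * (d-1) + D0 = D0 * d := by
        have hdd : (d-1)+1 = d := by omega
        calc D0 * (d-1) + D0 = D0 * ((d-1)+1) := by ring
        _ = D0 * d := by rw [hdd]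
      have he2 : (D0+1) * d = D0 * d + d := by ring
      have he3 : (D0+1) * d ≤ L * d := Nat.mul_le_mul_right _ hD0L
      have he4 : (D0+1)*(d-1) + (D0+1) = (D0+1)*d := by
        have hdd : (d-1)+1 = d := by omega
        calc (D0+1)*(d-1) + (D0+1) = (D0+1)*((d-1)+1) := by ring
        _ = _ := by rw [hdd]
      have hA' : (D0+1) * (d-1) ≤ rn - 1 := by
        have h1 : (D0+1) * (d-1) ≤ L * (d-1) := Nat.mul_le_mul_right _ hD0L
        omega
      have hB' : Ω1.card + D0 * (d-1) ≤ 2 * (rn - 1) := by omega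
      obtain ⟨A1, v1, β1, hA1sub, hA1card, hv10, hβ10, hhook, hagr0, hagr⟩ :=
        chain_build' d hd2 D0 (rn-1) uC Ω1 c0 (uC 0 c0) hc0u hc0Ω1 hc0u hsupp1 hA' hB'
      -- iso part
      set ilen := L - (D0+1) with hilendef
      have hidx : ∀ i : Fin ilen, D0 + 1 + i.1 < L := fun i => by
        have h1 := i.2
        omega
      set uI : Fin ilen → Fin n → F := fun i => g (en ⟨D0+1+i.1, hidx i⟩) with huI
      have huIdef : ∀ i c, uI i c = g (en ⟨D0+1+i.1, hidx i⟩) c := fun i c => rfl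
      set Ω2 := Ω1 \ A1 with hΩ2def
      have he5 : ilen * d + (D0+1) * d = L * d := by
        have hsum : ilen + (D0+1) = L := by omega
        calc ilen * d + (D0+1)*d = (ilen + (D0+1)) * d := by ring
        _ = L * d := by rw [hsum]
      have hsupp2 : ∀ i : Fin ilen, ilen * d ≤ (Ω2.filter fun c => uI i c ≠ 0).card := by
        intro i
        have h1 : (Ω2.filter fun c => uI i c ≠ 0) = (Ω1.filter fun c => uI i c ≠ 0) \ A1 := by
          rw [hΩ2def]
          ext c
          simp only [Finset.mem_filter, Finset.mem_sdiff]
          tauto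
        rw [h1]
        have h2 : rn - 1 ≤ (Ω1.filter fun c => uI i c ≠ 0).card := hfiltΩ1 _ (henHL _)
        have h3 := Finset.le_card_sdiff A1 (Ω1.filter fun c => uI i c ≠ 0)
        omega
      obtain ⟨A2, v2, β2, hA2sub, hA2card, hv20, hβ20, hagr2⟩ := iso_build' d ilen uI Ω2 hsupp2
      -- final center v
      set v : Fin n → F := fun c => if c = c0 then uC 0 c0 else if c ∈ A1 then v1 c else v2 c with hv
      have hA1Sc : A1 ⊆ Sᶜ := hA1sub.trans (by rw [hΩ1def]; exact Finset.erase_subset _ _)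
      have hA2Ω1 : A2 ⊆ Ω1 := hA2sub.trans (by rw [hΩ2def]; exact Finset.sdiff_subset)
      have hA2Sc : A2 ⊆ Sᶜ := hA2Ω1.trans (by rw [hΩ1def]; exact Finset.erase_subset _ _)
      have hc0A1 : c0 ∉ A1 := fun h => hc0Ω1 (hA1sub h)
      have hc0A2 : c0 ∉ A2 := fun h => hc0Ω1 (hA2Ω1 h)
      have hA1A2 : ∀ c ∈ A2, c ∉ A1 := by
        intro c hc
        have h1 := hA2sub hc
        rw [hΩ2def, Finset.mem_sdiff] at h1
        exact h1.2
      have hvc0 : v c0 = uC 0 c0 := by rw [hv]; simp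
      have hvA1 : ∀ c ∈ A1, v c = v1 c := by
        intro c hc
        have hne : ¬ c = c0 := fun h => hc0A1 (by rw [← h]; exact hc)
        rw [hv]
        simp only [if_neg hne, if_pos hc]
      have hvA2 : ∀ c ∈ A2, v c = v2 c := by
        intro c hc
        have hne : ¬ c = c0 := fun h => hc0A2 (by rw [← h]; exact hc)
        rw [hv]
        simp only [if_neg hne, if_neg (hA1A2 c hc)]
      have hvS : ∀ c ∈ S, v c = 0 := by
        intro c hcS
        have h1 : ¬ c = c0 := fun h => (Finset.mem_compl.1 hc0Sc) (by rw [← h]; exact hcS)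
        have h2 : c ∉ A1 := fun h => (Finset.mem_compl.1 (hA1Sc h)) hcS
        have h3 : c ∉ A2 := fun h => (Finset.mem_compl.1 (hA2Sc h)) hcS
        rw [hv]
        simp only [if_neg h1, if_neg h2]
        exact hv20 c h3
      -- distance of 0
      have h0 : hammingDist (0 : Fin n → F) v ≤ rn := by
        have hsub : (Finset.univ.filter fun c => (0 : Fin n → F) c ≠ v c) ⊆
            insert c0 (A1 ∪ A2) := by
          intro c hc
          have h2 := (Finset.mem_filter.1 hc).2
          by_contra hn
          simp only [Finset.mem_insert, Finset.mem_union, not_or] at hn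
          obtain ⟨hn1, hn2, hn3⟩ := hn
          apply h2
          rw [hv]
          simp only [Pi.zero_apply, if_neg hn1, if_neg hn2]
          exact (hv20 c hn3).symm
        have hcard2 : (insert c0 (A1 ∪ A2)).card ≤ 1 + (A1.card + A2.card) := by
          have hc1 := Finset.card_insert_le c0 (A1 ∪ A2)
          have hc2 := Finset.card_union_le A1 A2
          omega
        have heq : hammingDist (0 : Fin n → F) v =
            (Finset.univ.filter fun c => (0 : Fin n → F) c ≠ v c).card := rfl
        rw [heq]
        have h3 := Finset.card_le_card hsub
        omega
      -- pair families
      set P1 := (Finset.univ : Finset (Fin (D0+1))).image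
        (fun i => (en (Fin.castLE hD0L i), β1 i)) with hP1def
      set P2 := (Finset.univ : Finset (Fin ilen)).image
        (fun i => (en ⟨D0+1+i.1, hidx i⟩, β2 i)) with hP2def
      have hP1card : P1.card = D0 + 1 := by
        rw [hP1def, Finset.card_image_of_injective _ ?_, Finset.card_univ, Fintype.card_fin]
        intro a b hab
        have h1 : en (Fin.castLE hD0L a) = en (Fin.castLE hD0L b) := congrArg Prod.fst hab
        have h2 := heninj h1
        have h3 : (Fin.castLE hD0L a).1 = (Fin.castLE hD0L b).1 := congrArg Fin.val h2
        exact Fin.ext h3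
      have hP2card : P2.card = ilen := by
        rw [hP2def, Finset.card_image_of_injective _ ?_, Finset.card_univ, Fintype.card_fin]
        intro a b hab
        have h1 : en ⟨D0+1+a.1, hidx a⟩ = en ⟨D0+1+b.1, hidx b⟩ := congrArg Prod.fst hab
        have h2 := heninj h1
        have h3 : D0+1+a.1 = D0+1+b.1 := congrArg Fin.val h2
        exact Fin.ext (by omega)
      have hP12 : Disjoint P1 P2 := by
        rw [Finset.disjoint_left]
        intro p hp1 hp2
        rw [hP1def, Finset.mem_image] at hp1
        rw [hP2def, Finset.mem_image] at hp2
        obtain ⟨i, _, hpi⟩ := hp1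
        obtain ⟨i', _, hpi'⟩ := hp2
        have h1 : en (Fin.castLE hD0L i) = en ⟨D0+1+i'.1, hidx i'⟩ :=
          congrArg Prod.fst (hpi.trans hpi'.symm)
        have h2 := heninj h1
        have h3 : (Fin.castLE hD0L i).1 = D0+1+i'.1 := congrArg Fin.val h2
        have h4 : (Fin.castLE hD0L i).1 = i.1 := rfl
        have h5 := i.2
        omega
      set P := P1 ∪ P2 with hPdef
      have hPcard : L ≤ P.card := by
        rw [hPdef, Finset.card_union_of_disjoint hP12, hP1card, hP2card]
        omega
      -- distances for chain columns
      have hdistC : ∀ i : Fin (D0+1),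
          hammingDist (fun c => β1 i * g (en (Fin.castLE hD0L i)) c) v ≤ rn := by
        intro i
        have hjS : en (Fin.castLE hD0L i) ∈ S := hHLS _ (henHL _)
        have hmatch : d ≤ (Sᶜ.filter fun c =>
            β1 i * g (en (Fin.castLE hD0L i)) c = v c).card := by
          refine Fin.cases ?_ ?_ i
          · have hsub : insert c0 (A1.filter fun c => v1 c = β1 0 * uC 0 c ∧ uC 0 c ≠ 0)
                ⊆ Sᶜ.filter fun c => β1 0 * g (en (Fin.castLE hD0L 0)) c = v c := by
              intro c hc
              rcases Finset.mem_insert.1 hc with h | h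
              · rw [h]
                refine Finset.mem_filter.2 ⟨hc0Sc, ?_⟩
                rw [hvc0, ← huCdef 0 c0]
                exact hhook
              · obtain ⟨hcA, hcv, hcu⟩ := Finset.mem_filter.1 h
                refine Finset.mem_filter.2 ⟨hA1Sc hcA, ?_⟩
                rw [hvA1 c hcA, hcv, huCdef 0 c]
            have hcardin : d ≤ (insert c0 (A1.filter fun c =>
                v1 c = β1 0 * uC 0 c ∧ uC 0 c ≠ 0)).card := by
              rw [Finset.card_insert_of_notMem
                (fun h => hc0A1 (Finset.mem_of_mem_filter _ h))]
              omega
            exact le_trans hcardin (Finset.card_le_card hsub)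
          · intro i'
            have hsub : (A1.filter fun c => v1 c = β1 i'.succ * uC i'.succ c ∧ uC i'.succ c ≠ 0)
                ⊆ Sᶜ.filter fun c => β1 i'.succ * g (en (Fin.castLE hD0L i'.succ)) c = v c := by
              intro c hc
              obtain ⟨hcA, hcv, hcu⟩ := Finset.mem_filter.1 hc
              refine Finset.mem_filter.2 ⟨hA1Sc hcA, ?_⟩
              rw [hvA1 c hcA, hcv, huCdef i'.succ c]
            exact le_trans (hagr i') (Finset.card_le_card hsub)
        have hdb := dist_bound' S (g (en (Fin.castLE hD0L i))) _ hjS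
          (fun j' hj' hne => hgoff _ hjS j' hj' hne) (β1 i) v hvS d hmatch
        calc hammingDist (fun c => β1 i * g (en (Fin.castLE hD0L i)) c) v
            ≤ 1 + (Sᶜ.card - d) := hdb
        _ ≤ rn := by omega
      -- distances for iso columns
      have hdistI : ∀ i : Fin ilen,
          hammingDist (fun c => β2 i * g (en ⟨D0+1+i.1, hidx i⟩) c) v ≤ rn := by
        intro i
        have hjS : en ⟨D0+1+i.1, hidx i⟩ ∈ S := hHLS _ (henHL _)
        have hmatch : d ≤ (Sᶜ.filter fun c =>
            β2 i * g (en ⟨D0+1+i.1, hidx i⟩) c = v c).card := by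
          have hsub : (A2.filter fun c => v2 c = β2 i * uI i c ∧ uI i c ≠ 0)
              ⊆ Sᶜ.filter fun c => β2 i * g (en ⟨D0+1+i.1, hidx i⟩) c = v c := by
            intro c hc
            obtain ⟨hcA, hcv, hcu⟩ := Finset.mem_filter.1 hc
            refine Finset.mem_filter.2 ⟨hA2Sc hcA, ?_⟩
            rw [hvA2 c hcA, hcv, huIdef i c]
          exact le_trans (hagr2 i) (Finset.card_le_card hsub)
        have hdb := dist_bound' S (g (en ⟨D0+1+i.1, hidx i⟩)) _ hjS
          (fun j' hj' hne => hgoff _ hjS j' hj' hne) (β2 i) v hvS d hmatch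
        calc hammingDist (fun c => β2 i * g (en ⟨D0+1+i.1, hidx i⟩) c) v
            ≤ 1 + (Sᶜ.card - d) := hdb
        _ ≤ rn := by omega
      have hPall : ∀ p ∈ P, p.1 ∈ S ∧ p.2 ≠ 0 ∧
          hammingDist (fun c => p.2 * g p.1 c) v ≤ rn := by
        intro p hp
        rw [hPdef, Finset.mem_union] at hp
        rcases hp with hp | hp
        · rw [hP1def, Finset.mem_image] at hp
          obtain ⟨i, _, rfl⟩ := hp
          exact ⟨hHLS _ (henHL _), hβ10 i, hdistC i⟩
        · rw [hP2def, Finset.mem_image] at hp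
          obtain ⟨i, _, rfl⟩ := hp
          exact ⟨hHLS _ (henHL _), hβ20 i, hdistI i⟩
      exact count_final' C S g hgC hgdiag hgoff v rn L P hPall h0 hPcard (hcon v)
    · -- CASE 2a : d = 1
      have hd1' : d = 1 := by omega
      have hScrn : Sᶜ.card = rn := by omega
      have hScne : Sᶜ.Nonempty := Finset.card_pos.1 (by omega)
      obtain ⟨c0, hc0⟩ := hScne
      have hfull : ∀ j ∈ HL, g j c0 ≠ 0 := by
        intro j hj
        have h1 : (Sᶜ.filter fun c => g j c ≠ 0) = Sᶜ :=
          Finset.eq_of_subset_of_card_le (Finset.filter_subset _ _)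
            (by rw [hScrn]; exact hHLheavy j hj)
        have h2 : c0 ∈ Sᶜ.filter fun c => g j c ≠ 0 := by rw [h1]; exact hc0
        exact (Finset.mem_filter.1 h2).2
      set v : Fin n → F := fun c => if c = c0 then 1 else 0 with hv
      have hc0S : c0 ∉ S := Finset.mem_compl.1 hc0
      have hvS : ∀ c ∈ S, v c = 0 := by
        intro c hcS
        rw [hv]
        simp only
        rw [if_neg (show ¬ c = c0 from fun h => hc0S (by rw [← h]; exact hcS))]
      set P := HL.image (fun j => (j, (g j c0)⁻¹)) with hPdef
      have hPcard : L ≤ P.card := by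
        rw [hPdef, Finset.card_image_of_injective _
          (fun a b h => by simpa using congrArg Prod.fst h), hHLcard]
      have hPall : ∀ p ∈ P, p.1 ∈ S ∧ p.2 ≠ 0 ∧
          hammingDist (fun c => p.2 * g p.1 c) v ≤ rn := by
        intro p hp
        rw [hPdef, Finset.mem_image] at hp
        obtain ⟨j, hjHL, rfl⟩ := hp
        refine ⟨hHLS j hjHL, inv_ne_zero (hfull j hjHL), ?_⟩
        have hmatch : (1:ℕ) ≤ (Sᶜ.filter fun c => (g j c0)⁻¹ * g j c = v c).card := by
          have hmem : c0 ∈ Sᶜ.filter fun c => (g j c0)⁻¹ * g j c = v c := by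
            refine Finset.mem_filter.2 ⟨hc0, ?_⟩
            rw [hv]
            simp only [if_pos rfl]
            exact inv_mul_cancel₀ (hfull j hjHL)
          exact Finset.card_pos.2 ⟨c0, hmem⟩
        have hdb := dist_bound' S (g j) j (hHLS j hjHL)
          (fun j' hj' hne => hgoff j (hHLS j hjHL) j' hj' hne) ((g j c0)⁻¹) v hvS 1 hmatch
        calc hammingDist (fun c => (g j c0)⁻¹ * g j c) v ≤ 1 + (Sᶜ.card - 1) := hdb
        _ ≤ rn := by omega
      have h0 : hammingDist (0 : Fin n → F) v ≤ rn := by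
        have hsub : (Finset.univ.filter fun c => (0 : Fin n → F) c ≠ v c) ⊆ {c0} := by
          intro c hc
          have h2 := (Finset.mem_filter.1 hc).2
          rw [Finset.mem_singleton]
          by_contra hne
          apply h2
          rw [hv]
          simp only [Pi.zero_apply, if_neg hne]
        have heq : hammingDist (0 : Fin n → F) v =
            (Finset.univ.filter fun c => (0 : Fin n → F) c ≠ v c).card := rfl
        rw [heq]
        calc _ ≤ ({c0} : Finset (Fin n)).card := Finset.card_le_card hsub
        _ = 1 := Finset.card_singleton c0
        _ ≤ rn := hs1
      exact count_final' C S g hgC hgdiag hgoff v rn L P hPall h0 hPcard (hcon v)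
end

section
/- For a prime power q, an integer L ≥ 2, and r ∈ [0, L/(L+1)) with rn ∈ ℕ, there exists n(r,L) such that for all n ≥ n(r,L), every linear [n,k]_q code that is (r,L) list-decodable satisfies k ≤ n - ⌈((L+1)/L)·rn⌉. -/
-- count of residues i mod k in Fin m
lemma aux_mod_count (m k i : ℕ) (hi : i < k) :
    m / k ≤ ((Finset.univ : Finset (Fin m)).filter (fun x => x.val % k = i)).card := by
  rcases Nat.eq_zero_or_pos (m / k) with h0 | hpos
  · simp [h0]
  have hm : 0 < m := by
    rcases Nat.eq_zero_or_pos m with h | h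
    · subst h; simp at hpos
    · exact h
  have hk : 0 < k := by omega
  rw [← Finset.card_range (m / k)]
  apply Finset.card_le_card_of_injOn (fun y => (⟨(y * k + i) % m, Nat.mod_lt _ hm⟩ : Fin m))
  · intro y hy
    simp only [Finset.mem_coe, Finset.mem_range] at hy
    have hlt : y * k + i < m := by
      have h1 : y + 1 ≤ m / k := hy
      have h2 : (y + 1) * k ≤ (m / k) * k := Nat.mul_le_mul_right _ h1
      have h3 : (m / k) * k ≤ m := Nat.div_mul_le_self m k
      have : (y + 1) * k = y * k + k := by ring
      omega
    simp only [Finset.mem_coe, Finset.mem_filter, Finset.mem_univ, true_and]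
    rw [Nat.mod_eq_of_lt hlt]
    calc (y * k + i) % k = (i + y * k) % k := by rw [Nat.add_comm]
      _ = i % k := Nat.add_mul_mod_self_right i y k
      _ = i := Nat.mod_eq_of_lt hi
  · intro y hy y' hy' hee
    simp only [Finset.mem_coe, Finset.mem_range] at hy hy'
    have hlt : y * k + i < m := by
      have h2 : (y + 1) * k ≤ (m / k) * k := Nat.mul_le_mul_right _ hy
      have h3 : (m / k) * k ≤ m := Nat.div_mul_le_self m k
      have : (y + 1) * k = y * k + k := by ring
      omega
    have hlt' : y' * k + i < m := by
      have h2 : (y' + 1) * k ≤ (m / k) * k := Nat.mul_le_mul_right _ hy'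
      have h3 : (m / k) * k ≤ m := Nat.div_mul_le_self m k
      have : (y' + 1) * k = y' * k + k := by ring
      omega
    have : (y * k + i) % m = (y' * k + i) % m := by
      simpa [Fin.ext_iff] using hee
    rw [Nat.mod_eq_of_lt hlt, Nat.mod_eq_of_lt hlt'] at this
    have : y * k = y' * k := by omega
    exact Nat.eq_of_mul_eq_mul_right hk this

lemma aux_arith (L e t s s' b c0 : ℕ) (hL : 2 ≤ L)
    (hb2 : s' ≤ b * (L + 1) + L) (hfib : L + 3 ≤ c0) (hs'c : s' + c0 ≤ s)
    (hs : s ≤ t + L) (ht : t * L ≤ (L + 1) * e + L - 1) :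
    s' ≤ e + b := by
  have htL : 1 ≤ (L + 1) * e + L := le_add_of_le_right (by omega)
  have ht' : t * L + 1 ≤ (L + 1) * e + L := by omega
  have c4 : (t : ℤ) * L + 1 ≤ (L + 1) * e + L := by exact_mod_cast ht'
  have c5 : (s' : ℤ) ≤ b * (L + 1) + L := by exact_mod_cast hb2
  have c2 : (s' : ℤ) + (L + 3) ≤ s := by
    have : s' + (L + 3) ≤ s := by omega
    exact_mod_cast this
  have c3 : (s : ℤ) ≤ t + L := by exact_mod_cast hs
  have hL' : (2 : ℤ) ≤ L := by exact_mod_cast hL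
  have key : (s' : ℤ) ≤ e + b := by
    nlinarith [mul_le_mul_of_nonneg_left (show (s' : ℤ) ≤ t - 3 by linarith)
      (show (0 : ℤ) ≤ L by linarith)]
  exact_mod_cast key

set_option maxHeartbeats 2000000 in
/-- For a prime power q (card of finite field F), L ≥ 2, r ∈ [0, L/(L+1))
with rn ∈ ℕ, there exists n(r,L) such that for all n ≥ n(r,L), every linear
[n,k]_q code that is (r,L) list-decodable has k ≤ n - ⌈((L+1)/L)·rn⌉. -/

theorem stmt_5 (F : Type*) [Field F] [Fintype F] [DecidableEq F]
    (L : ℕ) (r : ℝ)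
    (hL : 2 ≤ L)
    (hr0 : 0 ≤ r) (hr1 : r < (L : ℝ) / (L + 1)) :
    ∃ N : ℕ, ∀ n rn : ℕ, N ≤ n → (rn : ℝ) = r * n →
      ∀ C : Submodule F (Fin n → F),
        (∀ v : Fin n → F,
          {c ∈ (C : Set (Fin n → F)) | hammingDist c v ≤ rn}.ncard ≤ L) →
        Module.finrank F C ≤ n - ((L + 1) * rn + L - 1) / L := by
  classical
  set q := Fintype.card F with hq
  have hq2 : 2 ≤ q := Fintype.one_lt_card
  set P := q ^ (L + 1) with hP
  have hc : 0 < (L : ℝ) - (L + 1) * r := by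
    have hL1 : (0 : ℝ) < (L : ℝ) + 1 := by positivity
    rw [lt_div_iff₀ hL1] at hr1
    nlinarith
  refine ⟨⌈((L : ℝ) * L) / ((L : ℝ) - (L + 1) * r)⌉₊ + ⌈((P * (L + 3) : ℕ) : ℝ) / r⌉₊ + 1, ?_⟩
  intro n e hn he C hLD
  set k := Module.finrank F C with hk
  set t := ((L + 1) * e + L - 1) / L with htdef
  -- trivial case e = 0
  rcases Nat.eq_zero_or_pos e with he0 | he1
  · subst he0
    have ht0 : t = 0 := by
      rw [htdef]
      apply Nat.div_eq_of_lt
      omega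
    rw [ht0, Nat.sub_zero]
    calc k ≤ Module.finrank F (Fin n → F) := Submodule.finrank_le C
      _ = n := Module.finrank_fin_fun F
  -- main case
  have hrpos : 0 < r := by
    rcases hr0.lt_or_eq with h | h
    · exact h
    · exfalso
      rw [← h, zero_mul] at he
      have : e = 0 := by exact_mod_cast he
      omega
  -- numeric facts
  have hn1 : (⌈((L : ℝ) * L) / ((L : ℝ) - (L + 1) * r)⌉₊ : ℕ) ≤ n := by omega
  have hn2 : (⌈((P * (L + 3) : ℕ) : ℝ) / r⌉₊ : ℕ) ≤ n := by omega
  have hnum1 : (L + 1) * e + L * L ≤ L * n := by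
    have h1 : ((L : ℝ) * L) / ((L : ℝ) - (L + 1) * r) ≤ n := (Nat.ceil_le.mp hn1)
    have h2 : (L : ℝ) * L ≤ n * ((L : ℝ) - (L + 1) * r) := by
      rw [div_le_iff₀ hc] at h1
      linarith
    have h3 : ((L : ℝ) + 1) * e + L * L ≤ L * n := by
      rw [he]
      nlinarith
    exact_mod_cast h3
  have hnumP : P * (L + 3) ≤ e := by
    have h1 : ((P * (L + 3) : ℕ) : ℝ) / r ≤ n := Nat.ceil_le.mp hn2
    have h2 : ((P * (L + 3) : ℕ) : ℝ) ≤ r * n := by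
      rw [div_le_iff₀ hrpos] at h1
      linarith
    rw [← he] at h2
    exact_mod_cast h2
  have htL : t * L ≤ (L + 1) * e + L - 1 := Nat.div_mul_le_self _ L
  have htn : t + L ≤ n := by
    have h1 : (t + L) * L < (n + 1) * L := by
      have e1 : (t + L) * L = t * L + L * L := by ring
      have e2 : (n + 1) * L = L * n + L := by ring
      have h3 : 1 ≤ (L + 1) * e + L := le_add_of_le_right (by omega)
      omega
    have := Nat.lt_of_mul_lt_mul_right h1
    omega
  clear htdef
  clear_value t
  -- contradiction setup
  by_contra hcon
  push_neg at hcon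
  -- hcon : n - t < k
  -- kernel of restriction to first n - (t+L) coordinates
  let g0 : Fin (n - (t + L)) → Fin n := fun i => ⟨i.val, lt_of_lt_of_le i.isLt (Nat.sub_le n (t + L))⟩
  have hg0 : Function.Injective g0 := by
    intro a b hab
    have : (g0 a).val = (g0 b).val := congrArg Fin.val hab
    exact Fin.ext this
  set ρ : (Fin n → F) →ₗ[F] (Fin (n - (t + L)) → F) := LinearMap.funLeft F F g0 with hρ
  have hρsurj : Function.Surjective ρ := LinearMap.funLeft_surjective_of_injective F F g0 hg0
  have hWrank : Module.finrank F (LinearMap.ker ρ) = t + L := by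
    have h1 := LinearMap.finrank_range_add_finrank_ker ρ
    rw [LinearMap.range_eq_top.mpr hρsurj, finrank_top, Module.finrank_fin_fun,
      Module.finrank_fin_fun] at h1
    omega
  set K : Submodule F (Fin n → F) := C ⊓ LinearMap.ker ρ with hKdef
  have hKrank : L + 1 ≤ Module.finrank F K := by
    have h2 := Submodule.finrank_sup_add_finrank_inf_eq C (LinearMap.ker ρ)
    have h3 : Module.finrank F ↥(C ⊔ LinearMap.ker ρ) ≤ n := by
      calc Module.finrank F ↥(C ⊔ LinearMap.ker ρ) ≤ Module.finrank F (Fin n → F) :=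
            Submodule.finrank_le _
        _ = n := Module.finrank_fin_fun F
    rw [hWrank] at h2
    rw [← hKdef] at h2
    omega
  obtain ⟨d0, hd0⟩ := exists_linearIndependent_of_le_finrank (R := F) (M := ↥K) hKrank
  set d : Fin (L + 1) → (Fin n → F) := fun i => (d0 i : Fin n → F) with hddef
  have hd : LinearIndependent F d := hd0.map' K.subtype (Submodule.ker_subtype K)
  have hdC : ∀ i, d i ∈ C := fun i => ((Submodule.mem_inf.mp (d0 i).2).1)
  have hdker : ∀ i (j : Fin n), j.val < n - (t + L) → d i j = 0 := by
    intro i j hj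
    have hmem : d i ∈ LinearMap.ker ρ := (Submodule.mem_inf.mp (d0 i).2).2
    have h0 : ρ (d i) = 0 := LinearMap.mem_ker.mp hmem
    have := congrFun h0 ⟨j.val, hj⟩
    simpa [hρ, LinearMap.funLeft, g0] using this
  -- support set
  set g : Fin n → (Fin (L + 1) → F) := fun j i => d i j with hgdef
  set S : Finset (Fin n) := Finset.univ.filter (fun j => g j ≠ 0) with hSdef
  have hSsupp : ∀ i (j : Fin n), j ∉ S → d i j = 0 := by
    intro i j hj
    rw [hSdef] at hj
    simp only [Finset.mem_filter, Finset.mem_univ, true_and, not_not] at hj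
    exact congrFun hj i
  have hScard : S.card ≤ t + L := by
    have hmem : ∀ j ∈ S, n - (t + L) ≤ j.val := by
      intro j hj
      by_contra hlt
      push_neg at hlt
      rw [hSdef] at hj
      simp only [Finset.mem_filter, Finset.mem_univ, true_and] at hj
      exact hj (funext fun i => hdker i j hlt)
    calc S.card ≤ (Finset.range (t + L)).card := by
          apply Finset.card_le_card_of_injOn (fun j => j.val - (n - (t + L)))
          · intro j hj
            have h1 := hmem j hj
            have h2 := j.isLt
            simp only [Finset.mem_coe, Finset.mem_range]
            omega
          · intro a ha b hb hab
            have h1 := hmem a (by simpa using ha)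
            have h2 := hmem b (by simpa using hb)
            have hab' : a.val - (n - (t + L)) = b.val - (n - (t + L)) := hab
            apply Fin.ext
            omega
      _ = t + L := Finset.card_range _
  -- choice of the pattern w
  have hwex : ∃ w : Fin (L + 1) → F, w ≠ 0 ∧
      (e < S.card → L + 3 ≤ (S.filter (fun j => g j = w)).card) := by
    rcases lt_or_ge e S.card with hlt | hle
    · have hcard : (Finset.univ : Finset (Fin (L + 1) → F)).card = P := by
        rw [Finset.card_univ, hP, hq]
        simp [Fintype.card_fun]
      obtain ⟨w, -, hwc⟩ := Finset.exists_le_card_fiber_of_mul_le_card_of_maps_to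
        (f := g) (s := S) (t := (Finset.univ : Finset (Fin (L + 1) → F))) (n := L + 3)
        (fun a _ => Finset.mem_univ _) ⟨0, Finset.mem_univ 0⟩
        (by rw [hcard]; omega)
      refine ⟨w, ?_, fun _ => hwc⟩
      have hne : (S.filter (fun j => g j = w)).Nonempty := by
        apply Finset.card_pos.mp
        omega
      obtain ⟨j, hj⟩ := hne
      simp only [Finset.mem_filter] at hj
      have hjS := hj.1
      rw [hSdef] at hjS
      simp only [Finset.mem_filter, Finset.mem_univ, true_and] at hjS
      rw [← hj.2]
      exact hjS
    · refine ⟨fun _ => 1, ?_, fun h => absurd h (not_lt.mpr hle)⟩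
      intro h
      have := congrFun h ⟨0, by omega⟩
      simp at this
  obtain ⟨w, hw0, hwfib⟩ := hwex
  set S0 : Finset (Fin n) := S.filter (fun j => g j = w) with hS0def
  set S' : Finset (Fin n) := S \ S0 with hS'def
  set s' := S'.card with hs'def
  -- the functional with pattern w and its kernel
  set φ : (Fin (L + 1) → F) →ₗ[F] F := ∑ i, w i • LinearMap.proj i with hφdef
  have hφapp : ∀ a : Fin (L + 1) → F, φ a = ∑ i, w i * a i := by
    intro a
    rw [hφdef]
    simp [LinearMap.sum_apply]
  have hφrange : Module.finrank F (LinearMap.range φ) ≤ 1 := by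
    calc Module.finrank F (LinearMap.range φ) ≤ Module.finrank F F := Submodule.finrank_le _
      _ = 1 := Module.finrank_self F
  have hkerφ : L ≤ Module.finrank F (LinearMap.ker φ) := by
    have h1 := LinearMap.finrank_range_add_finrank_ker φ
    rw [Module.finrank_fin_fun] at h1
    omega
  have hcardker : L + 1 ≤ Fintype.card (LinearMap.ker φ) := by
    rw [Module.card_eq_pow_finrank (K := F) (V := LinearMap.ker φ)]
    calc L + 1 ≤ 2 ^ L := Nat.lt_two_pow_self (n := L)
      _ ≤ q ^ L := Nat.pow_le_pow_left hq2 L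
      _ ≤ q ^ Module.finrank F (LinearMap.ker φ) := Nat.pow_le_pow_right (by omega) hkerφ
  obtain ⟨cc⟩ : Nonempty (Fin (L + 1) ↪ LinearMap.ker φ) :=
    Function.Embedding.nonempty_of_card_le (by simpa using hcardker)
  -- the L+1 codewords
  set Cw : Fin (L + 1) → (Fin n → F) := fun i => ∑ l, ((cc i : Fin (L + 1) → F) l) • d l
    with hCwdef
  have hCwC : ∀ i, Cw i ∈ C :=
    fun i => Submodule.sum_mem _ (fun l _ => Submodule.smul_mem _ _ (hdC l))
  have hCwapp : ∀ i (j : Fin n), Cw i j = ∑ l, ((cc i : Fin (L + 1) → F) l) * d l j := by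
    intro i j
    rw [hCwdef]
    simp [Finset.sum_apply]
  have hCwinj : Function.Injective Cw := by
    intro i i' hii
    apply cc.injective
    apply Subtype.ext
    funext l
    have hzero : ∑ l, (((cc i : Fin (L + 1) → F) l) - ((cc i' : Fin (L + 1) → F) l)) • d l
        = 0 := by
      simp only [sub_smul, Finset.sum_sub_distrib]
      rw [sub_eq_zero]
      exact hii
    have := Fintype.linearIndependent_iff.mp hd _ hzero l
    exact sub_eq_zero.mp this
  have hCwsupp : ∀ i (j : Fin n), j ∉ S' → Cw i j = 0 := by
    intro i j hj
    by_cases hjS : j ∈ S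
    · -- then j ∈ S0, so g j = w
      have hjS0 : j ∈ S0 := by
        by_contra hno
        exact hj (by rw [hS'def, Finset.mem_sdiff]; exact ⟨hjS, hno⟩)
      rw [hS0def] at hjS0
      simp only [Finset.mem_filter] at hjS0
      have hgw : g j = w := hjS0.2
      have hdij : ∀ l, d l j = w l := fun l => congrFun hgw l
      rw [hCwapp]
      have hker := (cc i).2
      rw [LinearMap.mem_ker] at hker
      have := hφapp (cc i : Fin (L + 1) → F)
      rw [hker] at this
      calc ∑ l, ((cc i : Fin (L + 1) → F) l) * d l j
          = ∑ l, w l * ((cc i : Fin (L + 1) → F) l) := by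
            apply Finset.sum_congr rfl
            intro l _
            rw [hdij l, mul_comm]
        _ = 0 := this.symm
    · rw [hCwapp]
      apply Finset.sum_eq_zero
      intro l _
      rw [hSsupp l j hjS, mul_zero]
  -- block assignment and center v
  set eqv := S'.equivFin with heqv
  set blockOf : Fin n → Fin (L + 1) := fun j =>
    if h : j ∈ S' then ⟨(eqv ⟨j, h⟩).val % (L + 1), Nat.mod_lt _ (by omega)⟩ else 0
    with hblock
  set v : Fin n → F := fun j => if h : j ∈ S' then Cw (blockOf j) j else 0 with hvdef
  set M : Fin (L + 1) → Finset (Fin n) := fun i => S'.filter (fun j => blockOf j = i) with hM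
  have hMsub : ∀ i, M i ⊆ S' := fun i => Finset.filter_subset _ _
  have hMcard : ∀ i, s' / (L + 1) ≤ (M i).card := by
    intro i
    have hbij : (M i).card = ((Finset.univ : Finset (Fin S'.card)).filter
        (fun x => x.val % (L + 1) = i.val)).card := by
      refine Finset.card_bij' (fun j hj => eqv ⟨j, (hMsub i) hj⟩)
        (fun x _ => ((eqv.symm x : {y // y ∈ S'}) : Fin n)) ?_ ?_ ?_ ?_
      · intro j hj
        simp only [Finset.mem_filter, Finset.mem_univ, true_and]
        have hjS' : j ∈ S' := (hMsub i) hj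
        have hj2 := hj
        rw [hM] at hj2
        simp only [Finset.mem_filter] at hj2
        have hbl := hj2.2
        rw [hblock] at hbl
        simp only [dif_pos hjS'] at hbl
        have := congrArg Fin.val hbl
        simpa using this
      · intro x hx
        rw [hM]
        simp only [Finset.mem_filter]
        refine ⟨(eqv.symm x).2, ?_⟩
        rw [hblock]
        simp only [dif_pos (eqv.symm x).2]
        apply Fin.ext
        simp only [Finset.mem_filter, Finset.mem_univ, true_and] at hx
        simpa [Subtype.coe_eta, Equiv.apply_symm_apply] using hx
      · intro j hj
        simp [Equiv.symm_apply_apply]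
      · intro x hx
        simp [Subtype.coe_eta, Equiv.apply_symm_apply]
    rw [hbij]
    exact aux_mod_count S'.card (L + 1) i.val (by omega)
  -- distance bound
  have hdist : ∀ i, hammingDist (Cw i) v ≤ s' - (M i).card := by
    intro i
    have hsub2 : (Finset.univ.filter (fun j => Cw i j ≠ v j)) ⊆ S' \ M i := by
      intro j hj
      simp only [Finset.mem_filter, Finset.mem_univ, true_and] at hj
      rw [Finset.mem_sdiff]
      constructor
      · by_contra hns
        apply hj
        rw [hvdef]
        simp only [dif_neg hns]
        exact hCwsupp i j hns
      · intro hMi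
        apply hj
        have hjS' : j ∈ S' := (hMsub i) hMi
        have hbl : blockOf j = i := by
          rw [hM] at hMi
          exact (Finset.mem_filter.mp hMi).2
        rw [hvdef]
        simp only [dif_pos hjS']
        rw [hbl]
    have hle0 : hammingDist (Cw i) v ≤ (S' \ M i).card := by
      rw [hammingDist]
      exact Finset.card_le_card hsub2
    calc hammingDist (Cw i) v ≤ (S' \ M i).card := hle0
      _ = s' - (M i).card := by rw [Finset.card_sdiff_of_subset (hMsub i)]
  -- all Cw i are within distance e of v
  have hball : ∀ i, hammingDist (Cw i) v ≤ e := by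
    intro i
    refine le_trans (hdist i) ?_
    have hMi := hMcard i
    rcases lt_or_ge e S.card with hlt | hle
    · have hfib := hwfib hlt
      obtain hdm := Nat.div_add_mod s' (L + 1)
      have hm0 : s' % (L + 1) < L + 1 := Nat.mod_lt _ (by omega)
      have hb2 : s' ≤ (s' / (L + 1)) * (L + 1) + L := by
        calc s' = (L + 1) * (s' / (L + 1)) + s' % (L + 1) := hdm.symm
          _ ≤ (L + 1) * (s' / (L + 1)) + L := by omega
          _ = (s' / (L + 1)) * (L + 1) + L := by ring
      have hs'S : s' + S0.card = S.card := by
        have h1 : S0 ⊆ S := Finset.filter_subset _ _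
        have h2 : S'.card = S.card - S0.card := Finset.card_sdiff_of_subset h1
        have h3 : S0.card ≤ S.card := Finset.card_le_card h1
        omega
      have key : s' ≤ e + s' / (L + 1) :=
        aux_arith L e t S.card s' (s' / (L + 1)) S0.card hL hb2 hfib (le_of_eq hs'S) hScard htL
      omega
    · have hle2 : s' ≤ S.card := by
        rw [hs'def, hS'def]
        exact Finset.card_le_card Finset.sdiff_subset
      omega
  -- contradiction with list-decodability
  have hsubset : Set.range Cw ⊆ {c ∈ (C : Set (Fin n → F)) | hammingDist c v ≤ e} := by
    rintro x ⟨i, rfl⟩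
    exact ⟨hCwC i, hball i⟩
  have hL1 : L + 1 ≤ {c ∈ (C : Set (Fin n → F)) | hammingDist c v ≤ e}.ncard := by
    have h1 : (Set.range Cw).ncard = L + 1 := by
      rw [← Nat.card_coe_set_eq, Nat.card_range_of_injective hCwinj,
        Nat.card_eq_fintype_card, Fintype.card_fin]
    rw [← h1]
    exact Set.ncard_le_ncard hsubset (Set.toFinite _)
  have := hLD v
  omega
end

section
/- Let C ⊆ [q]^n be (r,ℓ,L) list-recoverable with rn ∈ ℕ, t = ⌊ℓ·rn/(L+1-ℓ)⌋, and m = rn + t. Then for every product set B = S_{m+1} × ⋯ × S_n with each |S_i| ≤ ℓ, there are at most L codewords c ∈ C with (c_{m+1},…,c_n) ∈ B. -/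
lemma aux_mod (Λ a j : ℕ) (hΛ : 0 < Λ) (hj : j < Λ) : (a + (Λ + j - a % Λ) % Λ) % Λ = j := by
  have ha : a % Λ < Λ := Nat.mod_lt _ hΛ
  rw [Nat.add_mod_mod]
  have h2 : a + (Λ + j - a % Λ) = Λ * (a / Λ) + (Λ + j) := by
    have := Nat.div_add_mod a Λ
    omega
  rw [h2, Nat.mul_add_mod, Nat.add_mod_left, Nat.mod_eq_of_lt hj]

lemma aux_canc {Λ a k1 k2 : ℕ} (h1 : k1 < Λ) (h2 : k2 < Λ) (h : (a + k1) % Λ = (a + k2) % Λ) : k1 = k2 := by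
  have : k1 ≡ k2 [MOD Λ] := Nat.ModEq.add_left_cancel' a h
  rwa [Nat.ModEq, Nat.mod_eq_of_lt h1, Nat.mod_eq_of_lt h2] at this

lemma aux_klt (Λ d a j k : ℕ) (hΛ : 0 < Λ) (hdΛ : d ≤ Λ) (hj : j < Λ) (hk : k < d)
    (hres : (a + k) % Λ = j) : (Λ + j - a % Λ) % Λ < d := by
  have h1 := aux_mod Λ a j hΛ hj
  have h2 : (Λ + j - a % Λ) % Λ = k :=
    aux_canc (Nat.mod_lt _ hΛ) (lt_of_lt_of_le hk hdΛ) (by rw [h1, hres])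
  omega

lemma aux_res (Λ rn j : ℕ) (hΛ : 0 < Λ) :
    (((Finset.range (rn*Λ)).filter (fun x => x % Λ = j))).card ≤ rn := by
  have h : (((Finset.range (rn*Λ)).filter (fun x => x % Λ = j))).card ≤ (Finset.range rn).card := by
    apply Finset.card_le_card_of_injOn (fun x => x / Λ)
    · intro x hx
      simp only [Finset.mem_coe, Finset.mem_filter, Finset.mem_range] at hx ⊢
      exact Nat.div_lt_of_lt_mul (by rw [Nat.mul_comm]; exact hx.1)
    · intro x hx y hy hxy
      simp only [Finset.mem_coe, Finset.mem_filter, Finset.mem_range] at hx hy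
      have hxy' : x / Λ = y / Λ := by simpa using hxy
      have e3 : Λ * (x / Λ) = Λ * (y / Λ) := by rw [hxy']
      have h1 : x % Λ = j := hx.2
      have h2 : y % Λ = j := hy.2
      have := Nat.div_add_mod x Λ
      have := Nat.div_add_mod y Λ
      omega
  simpa using h

open Classical in
lemma aux_count (Λ d m rn n j : ℕ) (hΛ : 0 < Λ) (hd : 0 < d) (hdΛ : d ≤ Λ) (hj : j < Λ)
    (hmd : m * d ≤ rn * Λ) :
    ((Finset.univ : Finset (Fin n)).filter
      (fun i : Fin n => (i : ℕ) < m ∧ ∃ k, k < d ∧ ((i : ℕ) * d + k) % Λ = j)).card ≤ rn := by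
  refine le_trans ?_ (aux_res Λ rn j hΛ)
  apply Finset.card_le_card_of_injOn
    (fun i : Fin n => (i : ℕ) * d + (Λ + j - ((i : ℕ) * d) % Λ) % Λ)
  · intro i hi
    simp only [Finset.mem_coe, Finset.mem_filter, Finset.mem_univ, true_and] at hi
    obtain ⟨him, k, hk, hres⟩ := hi
    have hklt := aux_klt Λ d ((i : ℕ) * d) j k hΛ hdΛ hj hk hres
    simp only [Finset.mem_coe, Finset.mem_filter, Finset.mem_range]
    constructor
    · have h1 : (i : ℕ) * d + (Λ + j - ((i : ℕ) * d) % Λ) % Λ < ((i : ℕ) + 1) * d := by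
        rw [Nat.add_mul, Nat.one_mul]; omega
      have h2 : ((i : ℕ) + 1) * d ≤ m * d := Nat.mul_le_mul_right d him
      omega
    · exact aux_mod Λ ((i : ℕ) * d) j hΛ hj
  · intro i1 hi1 i2 hi2 heq
    simp only [Finset.mem_coe, Finset.mem_filter, Finset.mem_univ, true_and] at hi1 hi2
    obtain ⟨him1, k1, hk1, hres1⟩ := hi1
    obtain ⟨him2, k2, hk2, hres2⟩ := hi2
    have hklt1 := aux_klt Λ d ((i1 : ℕ) * d) j k1 hΛ hdΛ hj hk1 hres1
    have hklt2 := aux_klt Λ d ((i2 : ℕ) * d) j k2 hΛ hdΛ hj hk2 hres2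
    have heq' : (i1 : ℕ) * d + (Λ + j - ((i1 : ℕ) * d) % Λ) % Λ
        = (i2 : ℕ) * d + (Λ + j - ((i2 : ℕ) * d) % Λ) % Λ := by simpa using heq
    have e1 : ((i1 : ℕ) * d + (Λ + j - ((i1 : ℕ) * d) % Λ) % Λ) / d = (i1 : ℕ) := by
      rw [Nat.add_comm, Nat.add_mul_div_right _ _ hd, Nat.div_eq_of_lt hklt1, Nat.zero_add]
    have e2 : ((i2 : ℕ) * d + (Λ + j - ((i2 : ℕ) * d) % Λ) % Λ) / d = (i2 : ℕ) := by
      rw [Nat.add_comm, Nat.add_mul_div_right _ _ hd, Nat.div_eq_of_lt hklt2, Nat.zero_add]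
    apply Fin.ext
    rw [← e1, ← e2, heq']

/-- Let C be (r,ℓ,L) list-recoverable, t = ⌊ℓ·rn/(L+1-ℓ)⌋ and m = rn + t.
For any product set B = S_{m+1} × ⋯ × S_n with |S_i| ≤ ℓ, at most L codewords
c ∈ C satisfy (c_{m+1},…,c_n) ∈ B. -/
theorem stmt_11 (q ℓ L n rn : ℕ) (r : ℝ)
    (hq : 2 ≤ q) (hℓ : 1 ≤ ℓ) (hL : ℓ ≤ L)
    (hr0 : 0 ≤ r) (hr1 : r < 1 - (ℓ : ℝ) / (L + 1))
    (hrn : (rn : ℝ) = r * n)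
    (C : Finset (Fin n → Fin q))
    (hLR : ∀ S : Fin n → Finset (Fin q), (∀ i, (S i).card ≤ ℓ) →
      (C.filter (fun c =>
        (Finset.univ.filter (fun i => c i ∉ S i)).card ≤ rn)).card ≤ L)
    (m : ℕ) (hm : m = rn + ℓ * rn / (L + 1 - ℓ))
    (S : Fin n → Finset (Fin q)) (hS : ∀ i, (S i).card ≤ ℓ) :
    (C.filter (fun c => ∀ i : Fin n, m ≤ (i : ℕ) → c i ∈ S i)).card ≤ L := by
  classical
  set d := L + 1 - ℓ with hddef
  set Λ := L + 1 with hΛdef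
  have hd1 : 1 ≤ d := by omega
  have hdΛ : d ≤ Λ := by omega
  have hΛ0 : 0 < Λ := by omega
  by_contra hcon
  -- extract Λ = L+1 codewords
  obtain ⟨T, hTsub, hTcard⟩ :=
    Finset.exists_subset_card_eq (show Λ ≤ _ from Nat.lt_of_not_le hcon)
  clear hcon
  let e : Fin Λ → (Fin n → Fin q) := fun j => (T.equivFin.symm (Fin.cast hTcard.symm j) : Fin n → Fin q)
  have he_mem : ∀ j, e j ∈ T := fun j => (T.equivFin.symm (Fin.cast hTcard.symm j)).2
  have he_inj : Function.Injective e := by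
    intro a b hab
    have h1 : T.equivFin.symm (Fin.cast hTcard.symm a) = T.equivFin.symm (Fin.cast hTcard.symm b) :=
      Subtype.ext hab
    have h2 := T.equivFin.symm.injective h1
    simpa [Fin.ext_iff] using congrArg Fin.val h2
  have heC : ∀ j : Fin Λ, e j ∈ C ∧ ∀ i : Fin n, m ≤ (i : ℕ) → e j i ∈ S i := by
    intro j
    have := hTsub (he_mem j)
    simpa using Finset.mem_filter.1 this
  -- the uncovered predicate
  let P : ℕ → ℕ → Prop := fun iv jv => ∃ k, k < d ∧ (iv * d + k) % Λ = jv
  -- new lists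
  let S' : Fin n → Finset (Fin q) := fun i =>
    if (i : ℕ) < m then
      ((Finset.univ.filter (fun j : Fin Λ => ¬ P (i : ℕ) (j : ℕ))).image (fun j => e j i))
    else S i
  -- each list has ≤ ℓ elements
  have hcov : ∀ iv : ℕ, d ≤ (Finset.univ.filter (fun j : Fin Λ => P iv (j : ℕ))).card := by
    intro iv
    have h : (Finset.univ : Finset (Fin d)).card ≤
        (Finset.univ.filter (fun j : Fin Λ => P iv (j : ℕ))).card := by
      apply Finset.card_le_card_of_injOn
        (fun k : Fin d => (⟨(iv * d + (k : ℕ)) % Λ, Nat.mod_lt _ hΛ0⟩ : Fin Λ))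
      · intro k _
        simp only [Finset.mem_coe, Finset.mem_filter, Finset.mem_univ, true_and]
        exact ⟨(k : ℕ), k.2, rfl⟩
      · intro k1 _ k2 _ hk
        have hv : (iv * d + (k1 : ℕ)) % Λ = (iv * d + (k2 : ℕ)) % Λ := by
          simpa [Fin.ext_iff] using hk
        exact Fin.ext (aux_canc (lt_of_lt_of_le k1.2 hdΛ) (lt_of_lt_of_le k2.2 hdΛ) hv)
    simpa using h
  have hS' : ∀ i, (S' i).card ≤ ℓ := by
    intro i
    by_cases hi : (i : ℕ) < m
    · show (if (i : ℕ) < m then _ else S i).card ≤ ℓ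
      rw [if_pos hi]
      refine le_trans Finset.card_image_le ?_
      have hsum := Finset.card_filter_add_card_filter_not
        (s := (Finset.univ : Finset (Fin Λ))) (p := fun j : Fin Λ => P (i : ℕ) (j : ℕ))
      have hc := hcov (i : ℕ)
      have hu : (Finset.univ : Finset (Fin Λ)).card = Λ := by simp
      omega
    · show (if (i : ℕ) < m then _ else S i).card ≤ ℓ
      rw [if_neg hi]
      exact hS i
  -- m*d ≤ rn*Λ
  have hmd : m * d ≤ rn * Λ := by
    have ht : (ℓ * rn / d) * d ≤ ℓ * rn := Nat.div_mul_le_self _ _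
    have hdl : d + ℓ = Λ := by omega
    calc m * d = rn * d + (ℓ * rn / d) * d := by rw [hm, Nat.add_mul]
    _ ≤ rn * d + ℓ * rn := by omega
    _ = rn * (d + ℓ) := by ring
    _ = rn * Λ := by rw [hdl]
  -- each of the Λ codewords has ≤ rn mismatches w.r.t. S'
  have hmem : ∀ j : Fin Λ, e j ∈ C.filter (fun c =>
      (Finset.univ.filter (fun i => c i ∉ S' i)).card ≤ rn) := by
    intro j
    rw [Finset.mem_filter]
    refine ⟨(heC j).1, ?_⟩
    have hsubj : (Finset.univ.filter (fun i : Fin n => e j i ∉ S' i)) ⊆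
        (Finset.univ.filter (fun i : Fin n => (i : ℕ) < m ∧ P (i : ℕ) (j : ℕ))) := by
      intro i hi
      simp only [Finset.mem_filter, Finset.mem_univ, true_and] at hi ⊢
      by_cases him : (i : ℕ) < m
      · refine ⟨him, ?_⟩
        by_contra hP
        apply hi
        show e j i ∈ (if (i : ℕ) < m then _ else S i)
        rw [if_pos him]
        exact Finset.mem_image.2 ⟨j, Finset.mem_filter.2 ⟨Finset.mem_univ _, hP⟩, rfl⟩
      · exfalso
        apply hi
        show e j i ∈ (if (i : ℕ) < m then _ else S i)
        rw [if_neg him]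
        exact (heC j).2 i (Nat.le_of_not_lt him)
    refine le_trans (Finset.card_le_card hsubj) ?_
    exact aux_count Λ d m rn n (j : ℕ) hΛ0 hd1 hdΛ j.2 hmd
  -- contradiction with list-recoverability
  have hbound := hLR S' hS'
  have himg : (Finset.univ.image e) ⊆ C.filter (fun c =>
      (Finset.univ.filter (fun i => c i ∉ S' i)).card ≤ rn) := by
    intro c hc
    obtain ⟨j, _, rfl⟩ := Finset.mem_image.1 hc
    exact hmem j
  have hcard : (Finset.univ.image e).card = Λ := by
    rw [Finset.card_image_of_injective _ he_inj, Finset.card_univ, Fintype.card_fin]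
  have hfin : Λ ≤ L := le_trans (hcard ▸ Finset.card_le_card himg) hbound
  exact absurd hfin (Nat.not_succ_le_self L)
end

section
/- Let L ≥ 1 be an integer, γ ∈ (0,1), r ∈ [0, L/(L+1)) with rn ∈ ℕ, and q sufficiently large as a function of n, r, L, γ. Let C ⊆ [q]^n be an (r,L) list-decodable code with |C| = q^(n - ⌊((L+1)/L)·rn⌋ - ε) for an integer ε ≥ 0 satisfying (L-1)(ε+1) ≤ ⌊rn/L⌋. Then C contains a subcode of size at least γ|C| with minimum Hamming distance at least ⌊((L+1)/L)·rn⌋ - (L-1)(ε+1) + 1. -/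
open Finset

lemma dist_le_of_mismatch {n q : ℕ} (x y : Fin n → Fin q) (M : Finset (Fin n))
    (h : ∀ j, x j ≠ y j → j ∈ M) : hammingDist x y ≤ M.card := by
  refine Finset.card_le_card ?_
  intro j hj
  simp only [Finset.mem_filter, Finset.mem_univ, true_and] at hj
  exact h j hj

lemma alloc_s13 {n q : ℕ} (b : ℕ) :
    ∀ (ws : List (Fin n → Fin q)) (R : Finset (Fin n)) (base : Fin n → Fin q),
      ws.length * b ≤ R.card →
      ∃ v : Fin n → Fin q, (∀ j, j ∉ R → v j = base j) ∧
        ∀ z ∈ ws, ∃ P ⊆ R, P.card = b ∧ ∀ j ∈ P, v j = z j := by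
  intro ws
  induction ws with
  | nil => intro R base _; exact ⟨base, fun j _ => rfl, by simp⟩
  | cons z tail ih =>
    intro R base hR
    classical
    obtain ⟨P, hPR, hPcard⟩ : ∃ P ⊆ R, P.card = b := by
      apply Finset.exists_subset_card_eq
      rw [List.length_cons, Nat.succ_mul] at hR
      omega
    obtain ⟨v', hv'off, hv'blocks⟩ := ih (R \ P) base (by
      rw [Finset.card_sdiff_of_subset hPR, hPcard]
      rw [List.length_cons, Nat.succ_mul] at hR
      omega)
    refine ⟨fun j => if j ∈ P then z j else v' j, ?_, ?_⟩
    · intro j hj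
      show (if j ∈ P then z j else v' j) = base j
      rw [if_neg (fun hP => hj (hPR hP))]
      exact hv'off j (by simp [hj])
    · intro z' hz'
      rcases List.mem_cons.mp hz' with rfl | hz'
      · exact ⟨P, hPR, hPcard, fun j hj => if_pos hj⟩
      · obtain ⟨P', hP'R, hP'card, hP'⟩ := hv'blocks z' hz'
        refine ⟨P', fun j hj => (Finset.mem_sdiff.mp (hP'R hj)).1, hP'card, ?_⟩
        intro j hj
        show (if j ∈ P then z j else v' j) = z' j
        rw [if_neg (Finset.mem_sdiff.mp (hP'R hj)).2]
        exact hP' j hj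

lemma exists_center_s13 {n q : ℕ} (ρ b w : ℕ) (c c' : Fin n → Fin q)
    (others : List (Fin n → Fin q)) (T : Finset (Fin n))
    (hw : w = ρ + b) (hT : T.card = w)
    (hA : (Finset.univ.filter (fun j => c j ≠ c' j)) ⊆ T)
    (h1 : others.length * b + b ≤ w)
    (h2 : others.length * b + 2*b + (Finset.univ.filter (fun j => c j ≠ c' j)).card ≤ 2*w)
    (hAgree : ∀ z ∈ others, ∀ j, j ∉ T → z j = c j) :
    ∃ v : Fin n → Fin q, hammingDist v c ≤ ρ ∧ hammingDist v c' ≤ ρ ∧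
      ∀ z ∈ others, hammingDist v z ≤ ρ := by
  classical
  set A := Finset.univ.filter (fun j => c j ≠ c' j) with hAdef
  set t := A.card with htdef
  set Z := others.length * b with hZdef
  have htw : t ≤ w := hT ▸ Finset.card_le_card hA
  obtain ⟨g, a, hg1, hg2, hg3, hg4⟩ :
      ∃ g a, g ≤ w - t ∧ g + a = b ∧ a + a ≤ t ∧ Z + (g + a + a) ≤ w := by
    rcases le_total b (w - t) with h | h
    · exact ⟨b, 0, h, by omega, by omega, by omega⟩
    · exact ⟨w - t, b - (w - t), le_refl _, by omega, by omega, by omega⟩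
  obtain ⟨G, hGsub, hGcard⟩ :=
    Finset.exists_subset_card_eq (show g ≤ (T \ A).card by
      rw [Finset.card_sdiff_of_subset hA, hT]; omega)
  obtain ⟨A0, hA0sub, hA0card⟩ :=
    Finset.exists_subset_card_eq (show a ≤ A.card by omega)
  obtain ⟨A1, hA1sub, hA1card⟩ :=
    Finset.exists_subset_card_eq (show a ≤ (A \ A0).card by
      rw [Finset.card_sdiff_of_subset hA0sub, hA0card]; omega)
  have hA1A : A1 ⊆ A := hA1sub.trans Finset.sdiff_subset
  have hGA : ∀ j ∈ G, j ∉ A := fun j hj => (Finset.mem_sdiff.mp (hGsub hj)).2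
  have hGT : G ⊆ T := hGsub.trans Finset.sdiff_subset
  have hAT : A ⊆ T := hA
  have d1 : Disjoint G A0 :=
    Finset.disjoint_left.mpr fun j hG hA0 => hGA j hG (hA0sub hA0)
  have d2 : Disjoint (G ∪ A0) A1 := by
    rw [Finset.disjoint_left]
    intro j hj hA1
    rcases Finset.mem_union.mp hj with hG | hA0
    · exact hGA j hG (hA1A hA1)
    · exact (Finset.mem_sdiff.mp (hA1sub hA1)).2 hA0
  have hUT : G ∪ A0 ∪ A1 ⊆ T := by
    refine Finset.union_subset (Finset.union_subset hGT ?_) ?_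
    · exact (hA0sub.trans hAT)
    · exact hA1A.trans hAT
  have hUcard : (G ∪ A0 ∪ A1).card = g + a + a := by
    rw [Finset.card_union_of_disjoint d2, Finset.card_union_of_disjoint d1,
      hGcard, hA0card, hA1card]
  set R := T \ (G ∪ A0 ∪ A1) with hRdef
  have hRcard : R.card = w - (g + a + a) := by
    rw [hRdef, Finset.card_sdiff_of_subset hUT, hT, hUcard]
  obtain ⟨v, hvoff, hvblocks⟩ :=
    alloc_s13 b others R (fun j => if j ∈ A1 then c' j else c j) (by rw [hRcard]; omega)
  have hmemA : ∀ j, j ∈ A ↔ c j ≠ c' j := by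
    intro j; simp [hAdef]
  have hvR : ∀ j, j ∉ R → v j = if j ∈ A1 then c' j else c j := hvoff
  refine ⟨v, ?_, ?_, ?_⟩
  · have hd := dist_le_of_mismatch v c (T \ (G ∪ A0)) ?_
    · rw [Finset.card_sdiff_of_subset (Finset.union_subset hGT (hA0sub.trans hAT)),
        Finset.card_union_of_disjoint d1, hGcard, hA0card, hT] at hd
      omega
    · intro j hj
      rw [Finset.mem_sdiff, Finset.mem_union]
      by_cases hR : j ∈ R
      · have := Finset.mem_sdiff.mp hR
        simp only [Finset.mem_union, not_or] at this
        exact ⟨this.1, fun h => h.elim this.2.1.1 this.2.1.2⟩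
      · have hvj := hvR j hR
        by_cases h1j : j ∈ A1
        · rw [if_pos h1j] at hvj
          refine ⟨hAT (hA1A h1j), ?_⟩
          rintro (h | h)
          · exact hGA j h (hA1A h1j)
          · exact (Finset.mem_sdiff.mp (hA1sub h1j)).2 h
        · rw [if_neg h1j] at hvj
          exact absurd hvj hj
  · have hd := dist_le_of_mismatch v c' (T \ (G ∪ A1)) ?_
    · rw [Finset.card_sdiff_of_subset, Finset.card_union_of_disjoint, hGcard, hA1card, hT] at hd
      · omega
      · exact Finset.disjoint_left.mpr fun j hG hA1 => hGA j hG (hA1A hA1)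
      · exact Finset.union_subset hGT (hA1A.trans hAT)
    · intro j hj
      rw [Finset.mem_sdiff, Finset.mem_union]
      by_cases hR : j ∈ R
      · have := Finset.mem_sdiff.mp hR
        simp only [Finset.mem_union, not_or] at this
        exact ⟨this.1, fun h => h.elim this.2.1.1 this.2.2⟩
      · have hvj := hvR j hR
        by_cases h1j : j ∈ A1
        · rw [if_pos h1j] at hvj
          exact absurd hvj hj
        · rw [if_neg h1j] at hvj
          have hjA : j ∈ A := (hmemA j).mpr (by rw [← hvj]; exact hj)
          exact ⟨hAT hjA, by rintro (h | h); exact hGA j h hjA; exact h1j h⟩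
  · intro z hz
    obtain ⟨P, hPR, hPcard, hPv⟩ := hvblocks z hz
    have hPT : P ⊆ T := hPR.trans Finset.sdiff_subset
    have hd := dist_le_of_mismatch v z (T \ P) ?_
    · rw [Finset.card_sdiff_of_subset hPT, hPcard, hT] at hd
      omega
    · intro j hj
      rw [Finset.mem_sdiff]
      have hjP : j ∉ P := fun h => hj (hPv j h)
      refine ⟨?_, hjP⟩
      by_contra hjT
      have hjR : j ∉ R := fun h => hjT (Finset.mem_sdiff.mp h).1
      have hvj := hvR j hjR
      rw [if_neg (fun h => hjT (hAT (hA1A h)))] at hvj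
      exact hj (by rw [hvj, hAgree z hz j hjT])

lemma hammingDist_eq_card {n q : ℕ} (x y : Fin n → Fin q) [DecidablePred (fun j => x j ≠ y j)] :
    hammingDist x y = (Finset.univ.filter (fun j => x j ≠ y j)).card := by
  rw [hammingDist]
  exact congrArg Finset.card (Finset.filter_congr_decidable Finset.univ (fun j => x j ≠ y j) _)

lemma fiber_bound {n q L : ℕ} (ρ b w m K : ℕ) (hL : 1 ≤ L) (hw : w = ρ + b)
    (h1 : (L-1)*b + b ≤ w) (h2 : (L-1)*b + 2*b + m ≤ 2*w + K)
    (C : Finset (Fin n → Fin q))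
    (hLD : ∀ v, (C.filter (fun c => hammingDist c v ≤ ρ)).card ≤ L)
    (T : Finset (Fin n)) (hT : T.card = w) :
    (C.filter (fun x => ∃ y ∈ C, y ≠ x ∧
      (Finset.univ.filter (fun j => x j ≠ y j)) ⊆ T ∧ hammingDist x y + K ≤ m)).card
      ≤ L * q ^ (n - w) := by
  classical
  set π : (Fin n → Fin q) → ((Tᶜ : Finset (Fin n)) → Fin q) :=
    fun x => fun j => x j.1 with hπ
  set BadT := C.filter (fun x => ∃ y ∈ C, y ≠ x ∧
      (Finset.univ.filter (fun j => x j ≠ y j)) ⊆ T ∧ hammingDist x y + K ≤ m) with hBdef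
  have claim : ∀ x ∈ BadT, (C.filter (fun z => π z = π x)).card ≤ L := by
    intro x hx
    obtain ⟨hxC, y, hyC, hyx, hsub, hdist⟩ := Finset.mem_filter.mp hx
    by_contra hcon
    push_neg at hcon
    set F := C.filter (fun z => π z = π x) with hFdef
    have hxF : x ∈ F := Finset.mem_filter.mpr ⟨hxC, rfl⟩
    have hπy : π y = π x := by
      funext j
      have hjT : j.1 ∉ T := Finset.mem_compl.mp j.2
      show y j.1 = x j.1
      by_contra hne
      exact hjT (hsub (Finset.mem_filter.mpr ⟨Finset.mem_univ _, Ne.symm hne⟩))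
    have hyF : y ∈ F := Finset.mem_filter.mpr ⟨hyC, hπy⟩
    have hpair : ({y, x} : Finset (Fin n → Fin q)) ⊆ F := by
      intro z hz
      rcases Finset.mem_insert.mp hz with rfl | hz
      · exact hyF
      · rw [Finset.mem_singleton.mp hz]; exact hxF
    have hpc : ({y, x} : Finset (Fin n → Fin q)).card = 2 := Finset.card_pair hyx
    obtain ⟨S, hS1, hS2, hS3⟩ := Finset.exists_subsuperset_card_eq hpair
      (by rw [hpc]; omega) (by omega : L + 1 ≤ F.card)
    set others := (S \ {y, x}).toList with hodef
    have hlen : others.length = L - 1 := by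
      rw [hodef, Finset.length_toList, Finset.card_sdiff_of_subset hS1, hS3, hpc]
      omega
    have hagreeS : ∀ z ∈ S, ∀ j, j ∉ T → z j = x j := by
      intro z hz j hj
      have hzF : π z = π x := (Finset.mem_filter.mp (hS2 hz)).2
      exact congrFun hzF ⟨j, Finset.mem_compl.mpr hj⟩
    have hAcard : (Finset.univ.filter (fun j => x j ≠ y j)).card = hammingDist x y :=
      (hammingDist_eq_card x y).symm
    obtain ⟨v, hvx, hvy, hvz⟩ := exists_center_s13 ρ b w x y others T hw hT hsub
      (by rw [hlen]; exact h1)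
      (by rw [hlen, hAcard]; omega)
      (fun z hz j hj => hagreeS z (Finset.mem_sdiff.mp (Finset.mem_toList.mp hz)).1 j hj)
    have hSsub : S ⊆ C.filter (fun c => hammingDist c v ≤ ρ) := by
      intro z hz
      refine Finset.mem_filter.mpr ⟨(Finset.mem_filter.mp (hS2 hz)).1, ?_⟩
      rw [hammingDist_comm]
      by_cases hzy : z = y
      · subst hzy; exact hvy
      · by_cases hzx : z = x
        · subst hzx; exact hvx
        · refine hvz z (Finset.mem_toList.mpr ?_)
          rw [Finset.mem_sdiff]
          exact ⟨hz, by simp [hzy, hzx]⟩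
    have := (Finset.card_le_card hSsub).trans (hLD v)
    omega
  calc BadT.card ≤ L * (BadT.image π).card := by
        apply Finset.card_le_mul_card_image
        intro aa haa
        obtain ⟨x, hx, rfl⟩ := Finset.mem_image.mp haa
        refine le_trans (Finset.card_le_card ?_) (claim x hx)
        intro z hz
        have := Finset.mem_filter.mp hz
        exact Finset.mem_filter.mpr ⟨(Finset.mem_filter.mp this.1).1, this.2⟩
    _ ≤ L * q ^ (n - w) := by
        refine Nat.mul_le_mul_left _ ?_
        refine le_trans (Finset.card_le_univ _) ?_
        have : Fintype.card ((Tᶜ : Finset (Fin n)) → Fin q) = q ^ (n - w) := by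
          rw [Fintype.card_fun, Fintype.card_coe, Finset.card_compl, Fintype.card_fin,
            Fintype.card_fin, hT]
        exact this.le


/-- For L ≥ 1, γ ∈ (0,1), r ∈ [0, L/(L+1)) with rn ∈ ℕ, and q sufficiently
large (as a function of n, r, L, γ): every (r,L) list-decodable code
C ⊆ [q]^n with |C| = q^(n - ⌊((L+1)/L)·rn⌋ - ε), where ε ≥ 0 is an integer
with (L-1)(ε+1) ≤ ⌊rn/L⌋, contains a subcode of size at least γ|C| and
minimum distance at least ⌊((L+1)/L)·rn⌋ - (L-1)(ε+1) + 1. -/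
theorem stmt_13 (L n rn ε : ℕ) (r γ : ℝ)
    (hL : 1 ≤ L) (hγ0 : 0 < γ) (hγ1 : γ < 1)
    (hr0 : 0 ≤ r) (hr1 : r < (L : ℝ) / (L + 1))
    (hrn : (rn : ℝ) = r * n)
    (hε : (L - 1) * (ε + 1) ≤ rn / L) :
    ∃ Q : ℕ, ∀ q : ℕ, Q ≤ q →
      ∀ C : Finset (Fin n → Fin q),
        (∀ v : Fin n → Fin q,
          (C.filter (fun c => hammingDist c v ≤ rn)).card ≤ L) →
        C.card = q ^ (n - ((L + 1) * rn) / L - ε) →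
        ∃ C' ⊆ C, γ * C.card ≤ (C'.card : ℝ) ∧
          ∀ c₁ ∈ C', ∀ c₂ ∈ C', c₁ ≠ c₂ →
            ((L + 1) * rn) / L - (L - 1) * (ε + 1) + 1 ≤ hammingDist c₁ c₂ := by

  classical
  obtain ⟨L', rfl⟩ : ∃ L', L = L' + 1 := ⟨L - 1, by omega⟩
  set f := rn / (L' + 1) with hfdef
  set e := ε + 1 with hedef
  set K := L' * e with hKdef
  set m := rn + f with hmdef
  set b := f + e with hbdef
  set w := rn + b with hwdef
  have hgoalK : (L' + 1 - 1) * (ε + 1) = K := by rw [hKdef, hedef]; congr 1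
  have hm : ((L' + 1 + 1) * rn) / (L' + 1) = m := by
    have : (L' + 1 + 1) * rn = (L' + 1) * rn + rn := by ring
    rw [this, Nat.mul_add_div (by omega)]
  have hX : L' * f + f ≤ rn := by
    calc L' * f + f = f * (L' + 1) := by ring
    _ ≤ rn := Nat.div_mul_le_self rn (L' + 1)
  have hKf : K ≤ f := by
    have := hε
    rwa [show (L' + 1 - 1) = L' from rfl] at this
  have hKm : K ≤ m := le_trans hKf (by omega)
  have h1 : (L' + 1 - 1) * b + b ≤ w := by
    rw [show (L' + 1 - 1) = L' from rfl, hbdef, hwdef, hbdef]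
    have : L' * (f + e) = L' * f + L' * e := by ring
    rw [this]
    have h2 : L' * e ≤ f := hKf
    omega
  have h2 : (L' + 1 - 1) * b + 2 * b + m ≤ 2 * w + K := by
    rw [show (L' + 1 - 1) = L' from rfl, hbdef, hwdef, hmdef, hbdef, hKdef]
    have : L' * (f + e) = L' * f + L' * e := by ring
    rw [this]
    omega
  set N := (n.choose (m + ε + 1)) * (L' + 1) with hNdef
  refine ⟨⌈((N : ℝ)) / (1 - γ)⌉₊ + 1, ?_⟩
  intro q hq C hLD hCcard
  have hγ' : (0 : ℝ) < 1 - γ := by linarith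
  have hqN : (N : ℝ) ≤ (1 - γ) * q := by
    have h1q : ((N : ℝ) / (1 - γ)) ≤ (⌈((N : ℝ)) / (1 - γ)⌉₊ : ℝ) := Nat.le_ceil _
    have h2q : ((⌈((N : ℝ)) / (1 - γ)⌉₊ : ℝ)) ≤ q := by
      have : (⌈((N : ℝ)) / (1 - γ)⌉₊ : ℕ) ≤ q := by omega
      exact_mod_cast this
    have := (div_le_iff₀ hγ').mp (h1q.trans h2q)
    linarith
  rw [hm] at hCcard
  by_cases hn : n ≤ m + ε
  · have hz : n - m - ε = 0 := by omega
    rw [hz, pow_zero] at hCcard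
    refine ⟨C, Finset.Subset.refl _, ?_, ?_⟩
    · rw [hCcard]; push_cast; linarith
    · intro c₁ h₁ c₂ h₂ hne
      exact absurd (Finset.card_le_one.mp (le_of_eq hCcard) c₁ h₁ c₂ h₂) hne
  · have hwn : m + ε + 1 ≤ n := by omega
    have hww : w = m + ε + 1 := by rw [hwdef, hbdef, hmdef, hedef]; ring
    set P : (Fin n → Fin q) → Prop :=
      fun x => ∃ y ∈ C, y ≠ x ∧ hammingDist x y + K ≤ m with hPdef
    set Bad := C.filter P with hBdef
    set C' := C.filter (fun x => ¬ P x) with hC'def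
    have hsplit : Bad.card + C'.card = C.card :=
      Finset.card_filter_add_card_filter_not P
    refine ⟨C', Finset.filter_subset _ _, ?_, ?_⟩
    · -- size bound
      have hBadsub : Bad ⊆ (Finset.powersetCard w (Finset.univ : Finset (Fin n))).biUnion
          (fun T => C.filter (fun x => ∃ y ∈ C, y ≠ x ∧
            (Finset.univ.filter (fun j => x j ≠ y j)) ⊆ T ∧ hammingDist x y + K ≤ m)) := by
        intro x hx
        obtain ⟨hxC, y, hyC, hyx, hdist⟩ := Finset.mem_filter.mp hx
        have hAcard : (Finset.univ.filter (fun j => x j ≠ y j)).card = hammingDist x y :=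
          (hammingDist_eq_card x y).symm
        obtain ⟨T, hT1, _, hT2⟩ := Finset.exists_subsuperset_card_eq
          (Finset.subset_univ (Finset.univ.filter (fun j => x j ≠ y j)))
          (show (Finset.univ.filter (fun j => x j ≠ y j)).card ≤ w by omega)
          (by rw [Finset.card_univ, Fintype.card_fin]; omega)
        exact Finset.mem_biUnion.mpr ⟨T, Finset.mem_powersetCard_univ.mpr hT2,
          Finset.mem_filter.mpr ⟨hxC, y, hyC, hyx, hT1, hdist⟩⟩
      have hBadcard : Bad.card ≤ (n.choose w) * ((L' + 1) * q ^ (n - w)) := by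
        calc Bad.card ≤ ((Finset.powersetCard w (Finset.univ : Finset (Fin n))).biUnion
              (fun T => C.filter (fun x => ∃ y ∈ C, y ≠ x ∧
                (Finset.univ.filter (fun j => x j ≠ y j)) ⊆ T ∧
                hammingDist x y + K ≤ m))).card := Finset.card_le_card hBadsub
          _ ≤ ∑ T ∈ Finset.powersetCard w (Finset.univ : Finset (Fin n)),
              (C.filter (fun x => ∃ y ∈ C, y ≠ x ∧
                (Finset.univ.filter (fun j => x j ≠ y j)) ⊆ T ∧
                hammingDist x y + K ≤ m)).card := Finset.card_biUnion_le
          _ ≤ (Finset.powersetCard w (Finset.univ : Finset (Fin n))).card •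
              ((L' + 1) * q ^ (n - w)) := by
              apply Finset.sum_le_card_nsmul
              intro T hT
              exact fiber_bound rn b w m K (by omega) rfl h1 h2 C hLD T
                (Finset.mem_powersetCard_univ.mp hT)
          _ = (n.choose w) * ((L' + 1) * q ^ (n - w)) := by
              rw [smul_eq_mul, Finset.card_powersetCard, Finset.card_univ, Fintype.card_fin]
      -- real arithmetic
      have hexp : n - w + 1 = n - m - ε := by omega
      have hBR : (Bad.card : ℝ) ≤ (1 - γ) * (C.card : ℝ) := by
        have hcast : (Bad.card : ℝ) ≤ (N : ℝ) * (q : ℝ) ^ (n - w) := by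
          have := hBadcard
          have h' : (n.choose w) * ((L' + 1) * q ^ (n - w)) = N * q ^ (n - w) := by
            rw [hNdef, hww]; ring
          rw [h'] at this
          exact_mod_cast this
        calc (Bad.card : ℝ) ≤ (N : ℝ) * (q : ℝ) ^ (n - w) := hcast
          _ ≤ ((1 - γ) * q) * (q : ℝ) ^ (n - w) := by
              apply mul_le_mul_of_nonneg_right hqN (by positivity)
          _ = (1 - γ) * ((q : ℝ) ^ (n - w + 1)) := by ring
          _ = (1 - γ) * (C.card : ℝ) := by
              rw [hexp, hCcard]; push_cast; ring
      have hCC : (Bad.card : ℝ) + (C'.card : ℝ) = (C.card : ℝ) := by exact_mod_cast hsplit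
      linarith
    · intro c₁ h₁ c₂ h₂ hne
      obtain ⟨h₁C, hnP⟩ := Finset.mem_filter.mp h₁
      have h₂C : c₂ ∈ C := (Finset.mem_filter.mp h₂).1
      have hfar : ¬ (hammingDist c₁ c₂ + K ≤ m) := fun h => hnP ⟨c₂, h₂C, hne.symm, h⟩
      rw [hm, hgoalK]
      omega
end

section
/- Let C ⊆ [q]^n be an (r,L) list-decodable code with rn ∈ ℕ, rn = La + b with 0 ≤ b < L, m = ⌊((L+1)/L)·rn⌋ + ε + 1 where ε ≥ 0 is an integer with (L-1)(ε+1) ≤ ⌊rn/L⌋. If w ∈ [q]^{n-m} is bad for a set I ⊆ [n] of size n-m (meaning there exist two codewords c¹, c² ∈ C with c¹_I = c²_I = w agreeing on at least L(ε+1) additional coordinates outside I), then there are at most L codewords c ∈ C with c_I = w. -/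
lemma alloc_aux {α β : Type*} [DecidableEq α] [DecidableEq β] (need : β → ℕ) :
    ∀ (T : Finset β) (D : Finset α), (∑ b ∈ T, need b) ≤ D.card →
    ∃ B : β → Finset α, (∀ b ∈ T, B b ⊆ D ∧ (B b).card = need b) ∧
      ∀ b ∈ T, ∀ b' ∈ T, b ≠ b' → Disjoint (B b) (B b') := by
  intro T
  induction T using Finset.induction_on with
  | empty => intro D _; exact ⟨fun _ => ∅, by simp, by simp⟩
  | @insert b T hb ih =>
    intro D hD
    rw [Finset.sum_insert hb] at hD
    obtain ⟨Bb, hBbD, hBbcard⟩ :=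
      Finset.exists_subset_card_eq (s := D) (n := need b) (le_trans (Nat.le_add_right _ _) hD)
    obtain ⟨B, hB1, hB2⟩ := ih (D \ Bb) (by
      rw [Finset.card_sdiff_of_subset hBbD, hBbcard]; omega)
    have hdisj : ∀ y ∈ T, Disjoint Bb (B y) := fun y hy =>
      Finset.disjoint_left.mpr
        (fun i hi hiy => (Finset.mem_sdiff.mp ((hB1 y hy).1 hiy)).2 hi)
    refine ⟨Function.update B b Bb, ?_, ?_⟩
    · intro x hx
      rcases Finset.mem_insert.mp hx with h | hxT
      · subst h; simp [Function.update_self, hBbD, hBbcard]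
      · have hxb : x ≠ b := by rintro rfl; exact hb hxT
        rw [Function.update_of_ne hxb]
        exact ⟨(hB1 x hxT).1.trans Finset.sdiff_subset, (hB1 x hxT).2⟩
    · intro x hx y hy hxy
      rcases Finset.mem_insert.mp hx with h | hxT <;>
        rcases Finset.mem_insert.mp hy with h' | hyT
      · exact absurd (h.trans h'.symm) hxy
      · subst h
        have hyb : y ≠ x := by rintro rfl; exact hb hyT
        rw [Function.update_self, Function.update_of_ne hyb]
        exact hdisj y hyT
      · subst h'
        have hxb : x ≠ y := by rintro rfl; exact hb hxT
        rw [Function.update_self, Function.update_of_ne hxb]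
        exact (hdisj x hxT).symm
      · have hxb : x ≠ b := by rintro rfl; exact hb hxT
        have hyb : y ≠ b := by rintro rfl; exact hb hyT
        rw [Function.update_of_ne hxb, Function.update_of_ne hyb]
        exact hB2 x hxT y hyT hxy

/-- Bad-vector claim: let C ⊆ [q]^n be (r,L) list-decodable, rn = La + b with
0 ≤ b < L, m = ⌊((L+1)/L)·rn⌋ + ε + 1 with (L-1)(ε+1) ≤ ⌊rn/L⌋. If
w ∈ [q]^{n-m} is bad for a set I of size n - m (two distinct codewords agree
with w on I and agree on at least L(ε+1) further coordinates outside I), then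
at most L codewords c ∈ C satisfy c_I = w. -/
theorem stmt_14 (q L n rn a b ε : ℕ) (r : ℝ)
    (hL : 1 ≤ L)
    (hr0 : 0 ≤ r) (hr1 : r < (L : ℝ) / (L + 1))
    (hrn : (rn : ℝ) = r * n)
    (hab : rn = L * a + b) (hb : b < L)
    (hε : (L - 1) * (ε + 1) ≤ rn / L)
    (m : ℕ) (hm : m = ((L + 1) * rn) / L + ε + 1)
    (C : Finset (Fin n → Fin q))
    (hLD : ∀ v : Fin n → Fin q,
      (C.filter (fun c => hammingDist c v ≤ rn)).card ≤ L)
    (I : Finset (Fin n)) (hI : I.card = n - m) (w : I → Fin q)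
    (hbad : ∃ c₁ ∈ C, ∃ c₂ ∈ C, c₁ ≠ c₂ ∧
      (∀ i : I, c₁ i = w i) ∧ (∀ i : I, c₂ i = w i) ∧
      L * (ε + 1) ≤
        (Finset.univ.filter (fun i : Fin n => i ∉ I ∧ c₁ i = c₂ i)).card) :
    (C.filter (fun c => ∀ i : I, c i = w i)).card ≤ L := by
  classical
  obtain ⟨K, hK⟩ : ∃ K, L = K + 1 := ⟨L - 1, by omega⟩
  obtain ⟨c₁, hc₁C, c₂, hc₂C, hne, hw₁, hw₂, hagree⟩ := hbad
  by_contra hcon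
  push_neg at hcon
  set F := C.filter (fun c => ∀ i : I, c i = w i) with hF
  set J := Finset.univ.filter (fun i : Fin n => i ∉ I ∧ c₁ i = c₂ i) with hJ
  have hc₁F : c₁ ∈ F := Finset.mem_filter.mpr ⟨hc₁C, hw₁⟩
  have hc₂F : c₂ ∈ F := Finset.mem_filter.mpr ⟨hc₂C, hw₂⟩
  have hpair : ({c₁, c₂} : Finset _) ⊆ F := by
    intro x hx
    rcases Finset.mem_insert.mp hx with h | h
    · exact h ▸ hc₁F
    · exact (Finset.mem_singleton.mp h) ▸ hc₂F
  obtain ⟨T, hpairT, hTF, hTcard⟩ :=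
    Finset.exists_subsuperset_card_eq (n := L + 1) hpair
      (by rw [Finset.card_pair hne]; omega) hcon
  have hc₁T : c₁ ∈ T := hpairT (Finset.mem_insert_self _ _)
  have hc₂T : c₂ ∈ T := hpairT (by simp)
  -- arithmetic
  have hL0 : 0 < L := hL
  have hdiv1 : (L + 1) * rn / L = (L + 1) * a + b := by
    have h1 : (L + 1) * rn = L * ((L + 1) * a + b) + b := by rw [hab]; ring
    rw [h1, Nat.mul_add_div hL0, Nat.div_eq_of_lt hb, Nat.add_zero]
  have hdiv2 : rn / L = a := by
    rw [hab, Nat.mul_add_div hL0, Nat.div_eq_of_lt hb, Nat.add_zero]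
  have hε' : K * (ε + 1) ≤ a := by
    have hK' : L - 1 = K := by omega
    rw [hdiv2, hK'] at hε; exact hε
  have hm' : m = rn + (a + ε + 1) := by
    rw [hm, hdiv1, hab, hK]; ring
  -- sets
  set D : Finset (Fin n) := Finset.univ \ I with hD
  have hDI : ∀ i ∈ D, i ∉ I := fun i hi => (Finset.mem_sdiff.mp hi).2
  have hDcard : D.card = n - I.card := by
    rw [hD, Finset.card_sdiff_of_subset (Finset.subset_univ I), Finset.card_univ,
      Fintype.card_fin]
  obtain ⟨t, ht⟩ : ∃ t, D.card = t := ⟨_, rfl⟩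
  have htn : t ≤ n := by omega
  have htm : t ≤ m := by omega
  obtain ⟨p, hp⟩ : ∃ p, t - rn = p := ⟨_, rfl⟩
  obtain ⟨s, hs⟩ : ∃ s, min (L * (ε + 1)) p = s := ⟨_, rfl⟩
  have hsp : s ≤ p := hs ▸ min_le_right _ _
  have hsL : s ≤ L * (ε + 1) := hs ▸ min_le_left _ _
  have hpa : p ≤ a + ε + 1 := by omega
  obtain ⟨KP, hKP⟩ : ∃ x, K * p = x := ⟨_, rfl⟩
  have hLp : L * p = KP + p := by rw [← hKP, hK]; ring
  have hC1 : L * p ≤ rn + s := by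
    rcases le_total p (L * (ε + 1)) with h | h
    · have hsval : s = p := by rw [← hs]; exact min_eq_right h
      have h1 : K * p ≤ K * (a + ε + 1) := Nat.mul_le_mul_left _ hpa
      have h2 : K * (a + ε + 1) = K * a + K * (ε + 1) := by ring
      have h4 : K * a + a = L * a := by rw [hK]; ring
      have h5 : L * p = K * p + p := by rw [hK]; ring
      linarith [hε', hab.le]
    · have hsval : s = L * (ε + 1) := by rw [← hs]; exact min_eq_left h
      have h1 : L * p ≤ L * (a + ε + 1) := Nat.mul_le_mul_left _ hpa
      have h2 : L * (a + ε + 1) = L * a + L * (ε + 1) := by ring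
      linarith [hab.le]
  obtain ⟨d, hd⟩ : ∃ d, p = d + s := ⟨p - s, by omega⟩
  have hkey : KP + 2 * d + s ≤ t := by
    rcases le_or_gt t rn with h | h
    · have hp0 : p = 0 := by omega
      have : KP = 0 := by rw [← hKP, hp0]; ring
      omega
    · omega
  -- the agreement set J and S'
  have hJD : J ⊆ D := by
    intro i hi
    rw [hJ, Finset.mem_filter] at hi
    exact Finset.mem_sdiff.mpr ⟨Finset.mem_univ _, hi.2.1⟩
  obtain ⟨S', hS'J, hS'card⟩ :=
    Finset.exists_subset_card_eq (s := J) (n := s) (le_trans hsL hagree)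
  have hS'D : S' ⊆ D := hS'J.trans hJD
  have hS'eq : ∀ i ∈ S', c₁ i = c₂ i := fun i hi =>
    ((Finset.mem_filter.mp (hS'J hi)).2).2
  have hS'I : ∀ i ∈ S', i ∉ I := fun i hi =>
    ((Finset.mem_filter.mp (hS'J hi)).2).1
  -- needs and allocation
  set need : (Fin n → Fin q) → ℕ := fun c => if c = c₁ ∨ c = c₂ then d else p
    with hneed
  have hsum : (∑ c ∈ T, need c) ≤ (D \ S').card := by
    have e2 : c₂ ∈ T.erase c₁ := Finset.mem_erase.mpr ⟨hne.symm, hc₂T⟩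
    have s1 : ∑ c ∈ (T.erase c₁).erase c₂, need c + need c₂
        = ∑ c ∈ T.erase c₁, need c := Finset.sum_erase_add _ _ e2
    have s2 : ∑ c ∈ T.erase c₁, need c + need c₁ = ∑ c ∈ T, need c :=
      Finset.sum_erase_add _ _ hc₁T
    have s3 : ∀ c ∈ (T.erase c₁).erase c₂, need c = p := by
      intro c hc
      rw [Finset.mem_erase, Finset.mem_erase] at hc
      have hno : ¬(c = c₁ ∨ c = c₂) := by push_neg; exact ⟨hc.2.1, hc.1⟩
      simp only [hneed]; rw [if_neg hno]
    have s4 : ∑ c ∈ (T.erase c₁).erase c₂, need c = KP := by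
      rw [Finset.sum_congr rfl s3, Finset.sum_const, smul_eq_mul,
        Finset.card_erase_of_mem e2, Finset.card_erase_of_mem hc₁T, hTcard,
        ← hKP]
      congr 1; omega
    have s5 : need c₁ = d := by simp [hneed]
    have s6 : need c₂ = d := by simp [hneed]
    have s7 : (D \ S').card = t - s := by
      rw [Finset.card_sdiff_of_subset hS'D, hS'card, ht]
    omega
  obtain ⟨B, hB1, hB2⟩ := alloc_aux need T (D \ S') hsum
  -- the center v
  set v : Fin n → Fin q := fun i =>
    if i ∈ S' then c₁ i
    else if h : ∃ c, c ∈ T ∧ i ∈ B c then h.choose i else c₁ i with hv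
  have hvS' : ∀ i ∈ S', v i = c₁ i := by
    intro i hi; rw [hv]; simp only [if_pos hi]
  have hnotex : ∀ i ∈ I, ¬ ∃ c, c ∈ T ∧ i ∈ B c := by
    rintro i hi ⟨c, hcT, hic⟩
    exact hDI i (Finset.sdiff_subset ((hB1 c hcT).1 hic)) hi
  have hvI : ∀ i ∈ I, v i = c₁ i := by
    intro i hi
    have h1 : i ∉ S' := fun h => hS'I i h hi
    rw [hv]; simp only [if_neg h1, dif_neg (hnotex i hi)]
  have hvB : ∀ c ∈ T, ∀ i ∈ B c, v i = c i := by
    intro c hcT i hic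
    have h1 : i ∉ S' := (Finset.mem_sdiff.mp ((hB1 c hcT).1 hic)).2
    have hex : ∃ c', c' ∈ T ∧ i ∈ B c' := ⟨c, hcT, hic⟩
    rw [hv]; simp only [if_neg h1, dif_pos hex]
    obtain ⟨hcT', hic'⟩ := hex.choose_spec
    have heq : hex.choose = c := by
      by_contra hne'
      exact Finset.disjoint_left.mp (hB2 _ hcT' c hcT hne') hic' hic
    rw [heq]
  -- every codeword in T is close to v
  have hdist : ∀ c ∈ T, hammingDist c v ≤ rn := by
    intro c hcT
    have hcw : ∀ i : I, c i = w i := (Finset.mem_filter.mp (hTF hcT)).2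
    have hagrI : ∀ i ∈ I, v i = c i := by
      intro i hi
      rw [hvI i hi, hcw ⟨i, hi⟩, hw₁ ⟨i, hi⟩]
    have hBsub : B c ⊆ D \ S' := (hB1 c hcT).1
    set Y := Finset.univ.filter (fun i => c i ≠ v i) with hY
    have hdist_eq : hammingDist c v = Y.card := by
      rw [hY]; simp [hammingDist]
    rw [hdist_eq]
    by_cases hc12 : c = c₁ ∨ c = c₂
    · -- G = (I ∪ S') ∪ B c
      have hneedc : need c = d := by simp only [hneed]; rw [if_pos hc12]
      have hd1 : Disjoint I S' := Finset.disjoint_left.mpr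
        (fun i hi hiS => hS'I i hiS hi)
      have hd2 : Disjoint (I ∪ S') (B c) := by
        refine Finset.disjoint_left.mpr ?_
        intro i hi hiB
        have h2 := Finset.mem_sdiff.mp (hBsub hiB)
        rcases Finset.mem_union.mp hi with hi | hi
        · exact hDI i (Finset.sdiff_subset (hBsub hiB)) hi
        · exact h2.2 hi
      have hGcard : ((I ∪ S') ∪ B c).card = I.card + s + d := by
        rw [Finset.card_union_of_disjoint hd2, Finset.card_union_of_disjoint hd1,
          hS'card, (hB1 c hcT).2, hneedc]
      have hagrG : ∀ i ∈ (I ∪ S') ∪ B c, v i = c i := by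
        intro i hi
        rcases Finset.mem_union.mp hi with hi | hi
        · rcases Finset.mem_union.mp hi with hi | hi
          · exact hagrI i hi
          · rw [hvS' i hi]
            rcases hc12 with rfl | rfl
            · rfl
            · exact hS'eq i hi
        · exact hvB c hcT i hi
      have hsub : Y ⊆ Finset.univ \ ((I ∪ S') ∪ B c) := by
        intro i hi
        rw [hY, Finset.mem_filter] at hi
        exact Finset.mem_sdiff.mpr
          ⟨Finset.mem_univ _, fun hiG => hi.2 (hagrG i hiG).symm⟩
      have hcard := Finset.card_le_card hsub
      rw [Finset.card_sdiff_of_subset (Finset.subset_univ _), Finset.card_univ,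
        Fintype.card_fin, hGcard] at hcard
      omega
    · -- G = I ∪ B c
      have hneedc : need c = p := by simp only [hneed]; rw [if_neg hc12]
      have hd1 : Disjoint I (B c) := Finset.disjoint_left.mpr
        (fun i hi hiB => hDI i (Finset.sdiff_subset (hBsub hiB)) hi)
      have hGcard : (I ∪ B c).card = I.card + p := by
        rw [Finset.card_union_of_disjoint hd1, (hB1 c hcT).2, hneedc]
      have hagrG : ∀ i ∈ I ∪ B c, v i = c i := by
        intro i hi
        rcases Finset.mem_union.mp hi with hi | hi
        · exact hagrI i hi
        · exact hvB c hcT i hi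
      have hsub : Y ⊆ Finset.univ \ (I ∪ B c) := by
        intro i hi
        rw [hY, Finset.mem_filter] at hi
        exact Finset.mem_sdiff.mpr
          ⟨Finset.mem_univ _, fun hiG => hi.2 (hagrG i hiG).symm⟩
      have hcard := Finset.card_le_card hsub
      rw [Finset.card_sdiff_of_subset (Finset.subset_univ _), Finset.card_univ,
        Fintype.card_fin, hGcard] at hcard
      omega
  -- contradiction with list decodability
  have hTsub : T ⊆ C.filter (fun c => hammingDist c v ≤ rn) := by
    intro c hcT
    exact Finset.mem_filter.mpr
      ⟨(Finset.mem_filter.mp (hTF hcT)).1, hdist c hcT⟩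
  have h1 := Finset.card_le_card hTsub
  have h2 := hLD v
  have h3 : L + 1 ≤ L := by rw [← hTcard]; exact le_trans h1 h2
  omega
end

section
/- For a prime power q, integers 1 ≤ ℓ ≤ q and ℓ ≤ L < ℓq, and r ∈ [0, 1 - ℓ/(L+1)) with rn ∈ ℕ, if C ⊆ 𝔽_q^n is a linear (r,ℓ,L) list-recoverable code of dimension at least 2, then the minimum distance of C satisfies d(C) > rn + ⌊(ℓ/(L+1-ℓ))·rn⌋. -/
/-- For a finite field F with q elements, 1 ≤ ℓ ≤ q, ℓ ≤ L < ℓq,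
r ∈ [0, 1 - ℓ/(L+1)) with rn ∈ ℕ: a linear (r,ℓ,L) list-recoverable code
C ⊆ F^n of dimension at least 2 has minimum distance
d(C) > rn + ⌊(ℓ/(L+1-ℓ))·rn⌋. -/
theorem stmt_15 (F : Type*) [Field F] [Fintype F] [DecidableEq F]
    (ℓ L n rn : ℕ) (r : ℝ)
    (hℓ1 : 1 ≤ ℓ) (hℓq : ℓ ≤ Fintype.card F)
    (hℓL : ℓ ≤ L) (hLq : L < ℓ * Fintype.card F)
    (hr0 : 0 ≤ r) (hr1 : r < 1 - (ℓ : ℝ) / (L + 1))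
    (hrn : (rn : ℝ) = r * n)
    (C : Submodule F (Fin n → F)) (hdim : 2 ≤ Module.finrank F C)
    (hLR : ∀ S : Fin n → Finset F, (∀ i, (S i).card ≤ ℓ) →
      {c ∈ (C : Set (Fin n → F)) |
        (Finset.univ.filter (fun i => c i ∉ S i)).card ≤ rn}.ncard ≤ L) :
    ∀ c ∈ C, c ≠ 0 → rn + ℓ * rn / (L + 1 - ℓ) < hammingNorm c := by
  classical
  intro c hc hc0
  by_contra hcon
  push_neg at hcon
  set q := Fintype.card F with hq
  have hq0 : 0 < q := Fintype.card_pos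
  set w := hammingNorm c with hwdef
  set t := w - rn with ht
  -- key numeric inequality
  have htkey : t * (L + 1) ≤ ℓ * w := by
    rcases le_or_gt w rn with h | h
    · have : t = 0 := by omega
      simp [this]
    · have h1 : t ≤ ℓ * rn / (L + 1 - ℓ) := by omega
      have h2 : t * (L + 1 - ℓ) ≤ ℓ * rn :=
        (Nat.le_div_iff_mul_le (by omega)).mp h1
      have h3 : rn + t = w := by omega
      have hsplit : t * (L + 1) = t * (L + 1 - ℓ) + t * ℓ := by
        have hh : L + 1 - ℓ + ℓ = L + 1 := by omega
        rw [← Nat.mul_add, hh]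
      calc t * (L + 1) = t * (L + 1 - ℓ) + t * ℓ := hsplit
        _ ≤ ℓ * rn + t * ℓ := by omega
        _ = ℓ * (rn + t) := by ring
        _ = ℓ * w := by rw [h3]
  -- second codeword
  have hspan : ¬ C ≤ Submodule.span F {c} := by
    intro hle
    have h1 : Module.finrank F C ≤ Module.finrank F (Submodule.span F {c}) :=
      Submodule.finrank_mono hle
    rw [finrank_span_singleton hc0] at h1
    omega
  obtain ⟨c'', hc''C, hc''⟩ : ∃ x, x ∈ C ∧ x ∉ Submodule.span F {c} := by
    by_contra h; push_neg at h; exact hspan (fun x hx => h x hx)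
  have hindep : ∀ a b : F, a • c + b • c'' = 0 → a = 0 ∧ b = 0 := by
    intro a b hab
    have hb : b = 0 := by
      by_contra hb
      apply hc''
      have h1 : b • c'' = -(a • c) := by
        rw [eq_neg_iff_add_eq_zero, add_comm]; exact hab
      have h2 : c'' = (b⁻¹ * (-a)) • c := by
        have h3 := congrArg (fun x => b⁻¹ • x) h1
        simp only [smul_smul, inv_mul_cancel₀ hb, one_smul, smul_neg] at h3
        rw [h3, mul_neg, neg_smul]
      rw [h2]
      exact Submodule.smul_mem _ _ (Submodule.mem_span_singleton_self c)
    subst hb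
    simp only [zero_smul, add_zero] at hab
    rcases smul_eq_zero.mp hab with h | h
    · exact ⟨h, rfl⟩
    · exact absurd h hc0
  -- embedding of naturals into F
  let e := (Fintype.equivFin F).symm
  let emb : ℕ → F := fun m => e ⟨m % q, Nat.mod_lt _ hq0⟩
  have hembinj : ∀ m m', m < q → m' < q → emb m = emb m' → m = m' := by
    intro m m' hm hm' hmm
    have h := e.injective hmm
    rw [Fin.ext_iff] at h
    simpa [Nat.mod_eq_of_lt hm, Nat.mod_eq_of_lt hm'] using h
  -- the codewords
  let v : ℕ → Fin n → F := fun j => emb (j % q) • c + emb (j / q) • c''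
  have hvC : ∀ j, v j ∈ C := fun j => C.add_mem (C.smul_mem _ hc) (C.smul_mem _ hc''C)
  have hdivlt : ∀ j, j < L + 1 → j / q < ℓ := by
    intro j hj
    rw [Nat.div_lt_iff_lt_mul hq0]
    omega
  have hvinj : ∀ j j', j < L + 1 → j' < L + 1 → v j = v j' → j = j' := by
    intro j j' hj hj' hvv
    have h0 : (emb (j % q) - emb (j' % q)) • c + (emb (j / q) - emb (j' / q)) • c'' = 0 := by
      rw [sub_smul, sub_smul, sub_add_sub_comm]
      show v j - v j' = 0
      rw [hvv, sub_self]
    obtain ⟨h1, h2⟩ := hindep _ _ h0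
    have hm : j % q = j' % q :=
      hembinj _ _ (Nat.mod_lt _ hq0) (Nat.mod_lt _ hq0) (by rwa [sub_eq_zero] at h1)
    have hd : j / q = j' / q :=
      hembinj _ _ ((hdivlt j hj).trans_le hℓq) ((hdivlt j' hj').trans_le hℓq)
        (by rwa [sub_eq_zero] at h2)
    have e1 := Nat.div_add_mod j q
    have e2 := Nat.div_add_mod j' q
    rw [← e1, ← e2, hd, hm]
  -- support
  set supp : Finset (Fin n) := Finset.univ.filter (fun i => c i ≠ 0) with hsupp
  have hsuppcard : supp.card = w := by
    rw [hwdef]; simp [hammingNorm, hsupp]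
  have hmemsupp : ∀ i : Fin n, i ∈ supp ↔ c i ≠ 0 := by
    intro i; simp [hsupp]
  let σ := supp.orderIsoOfFin hsuppcard
  -- lists
  let S : Fin n → Finset F := fun i =>
    if hi : i ∈ supp then
      (Finset.range ℓ).image (fun m => v (((σ.symm ⟨i, hi⟩ : Fin w) * ℓ + m) % (L + 1)) i)
    else
      (Finset.range ℓ).image (fun m => emb m * c'' i)
  have hScard : ∀ i, (S i).card ≤ ℓ := by
    intro i
    show (S i).card ≤ ℓ
    simp only [S]
    split <;> exact Finset.card_image_le.trans (by simp)
  -- mismatch bound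
  have hmis : ∀ j, j < L + 1 →
      (Finset.univ.filter (fun i => v j i ∉ S i)).card ≤ rn := by
    intro j hj
    have hoff : ∀ i : Fin n, i ∉ supp → v j i ∈ S i := by
      intro i hi
      have hci : c i = 0 := by
        by_contra h; exact hi ((hmemsupp i).mpr h)
      have hvj : v j i = emb (j / q) * c'' i := by
        simp [v, hci, smul_eq_mul]
      rw [hvj]
      show _ ∈ S i
      simp only [S]
      rw [dif_neg hi]
      exact Finset.mem_image.mpr ⟨j / q, Finset.mem_range.mpr (hdivlt j hj), rfl⟩
    set Covj : Finset (Fin n) :=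
      supp.filter (fun i => ∀ hi : i ∈ supp,
        ∃ m, m < ℓ ∧ ((σ.symm ⟨i, hi⟩ : Fin w) * ℓ + m) % (L + 1) = j) with hCovj
    have hcovmem : ∀ i ∈ Covj, v j i ∈ S i := by
      intro i hiC
      rw [hCovj, Finset.mem_filter] at hiC
      obtain ⟨hi, hP⟩ := hiC
      obtain ⟨m, hm, hmj⟩ := hP hi
      show v j i ∈ S i
      simp only [S]
      rw [dif_pos hi]
      exact Finset.mem_image.mpr ⟨m, Finset.mem_range.mpr hm, by rw [hmj]⟩
    have hcovcard : t ≤ Covj.card := by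
      rcases Nat.eq_zero_or_pos t with ht0 | ht0
      · omega
      have hw0 : 0 < w := by omega
      have hslt : ∀ d, d < t → j + d * (L + 1) < ℓ * w := by
        intro d hd
        have h1 : j + d * (L + 1) ≤ L + (t - 1) * (L + 1) := by
          have hd1 : d ≤ t - 1 := by omega
          have := Nat.mul_le_mul_right (L + 1) hd1
          omega
        have h2 : L + (t - 1) * (L + 1) < t * (L + 1) := by
          have hh : (t - 1) * (L + 1) + (L + 1) = t * (L + 1) := by
            have h4 : t - 1 + 1 = t := by omega
            rw [← Nat.add_one_mul, h4]
          omega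
        omega
      have hmono : ∀ d d', d < d' → d' < t →
          (j + d * (L + 1)) / ℓ < (j + d' * (L + 1)) / ℓ := by
        intro d d' hdd hd'
        have h1 : j + d * (L + 1) + ℓ ≤ j + d' * (L + 1) := by
          have := Nat.mul_le_mul_right (L + 1) (by omega : d + 1 ≤ d')
          have h2 : (d + 1) * (L + 1) = d * (L + 1) + (L + 1) := by ring
          omega
        calc (j + d * (L + 1)) / ℓ < (j + d * (L + 1)) / ℓ + 1 := Nat.lt_succ_self _
          _ = (j + d * (L + 1) + ℓ) / ℓ := (Nat.add_div_right _ (by omega)).symm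
          _ ≤ (j + d' * (L + 1)) / ℓ := Nat.div_le_div_right h1
      rw [← Finset.card_range t]
      apply Finset.card_le_card_of_injOn
        (fun d => (σ ⟨(j + d * (L + 1)) / ℓ % w, Nat.mod_lt _ hw0⟩ : Fin n))
      · intro d hd
        rw [Finset.mem_coe, Finset.mem_range] at hd
        have hk : (j + d * (L + 1)) / ℓ < w := Nat.div_lt_of_lt_mul (hslt d hd)
        rw [hCovj, Finset.mem_coe, Finset.mem_filter]
        constructor
        · exact (σ ⟨(j + d * (L + 1)) / ℓ % w, Nat.mod_lt _ hw0⟩ : {x // x ∈ supp}).2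
        · intro hi
          refine ⟨(j + d * (L + 1)) % ℓ, Nat.mod_lt _ (by omega), ?_⟩
          have hsymm : σ.symm ⟨(σ ⟨(j + d * (L + 1)) / ℓ % w, Nat.mod_lt _ hw0⟩ :
              {x // x ∈ supp}), hi⟩ = ⟨(j + d * (L + 1)) / ℓ % w, Nat.mod_lt _ hw0⟩ := by
            have : (⟨(σ ⟨(j + d * (L + 1)) / ℓ % w, Nat.mod_lt _ hw0⟩ : {x // x ∈ supp}),
                hi⟩ : {x // x ∈ supp}) = σ ⟨(j + d * (L + 1)) / ℓ % w, Nat.mod_lt _ hw0⟩ :=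
              rfl
            rw [this]
            exact σ.symm_apply_apply _
          rw [hsymm]
          simp only [Fin.val_mk]
          rw [Nat.mod_eq_of_lt hk, Nat.div_add_mod', Nat.add_mul_mod_self_right]
          exact Nat.mod_eq_of_lt hj
      · intro d hd d' hd' heq
        rw [Finset.coe_range, Set.mem_Iio] at hd hd'
        by_contra hne
        have hkd : (j + d * (L + 1)) / ℓ < w := Nat.div_lt_of_lt_mul (hslt d hd)
        have hkd' : (j + d' * (L + 1)) / ℓ < w := Nat.div_lt_of_lt_mul (hslt d' hd')
        have hσ := σ.injective (Subtype.ext heq)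
        rw [Fin.ext_iff] at hσ
        simp only [Nat.mod_eq_of_lt hkd, Nat.mod_eq_of_lt hkd'] at hσ
        rcases Nat.lt_or_ge d d' with h | h
        · exact absurd hσ (Nat.ne_of_lt (hmono d d' h hd'))
        · have : d' < d := by omega
          exact absurd hσ.symm (Nat.ne_of_lt (hmono d' d this hd))
    -- mismatch set is inside supp \ Covj
    have hsub : Finset.univ.filter (fun i => v j i ∉ S i) ⊆ supp \ Covj := by
      intro i hi
      rw [Finset.mem_filter] at hi
      rw [Finset.mem_sdiff]
      constructor
      · by_contra h
        exact hi.2 (hoff i h)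
      · intro h
        exact hi.2 (hcovmem i h)
    calc (Finset.univ.filter (fun i => v j i ∉ S i)).card
        ≤ (supp \ Covj).card := Finset.card_le_card hsub
      _ = supp.card - Covj.card := Finset.card_sdiff_of_subset (Finset.filter_subset _ _)
      _ ≤ w - t := by rw [hsuppcard]; omega
      _ ≤ rn := by omega
  -- conclude: L+1 codewords in the list
  have hfin := hLR S hScard
  have hsub2 : ↑((Finset.range (L + 1)).image v) ⊆
      {c ∈ (C : Set (Fin n → F)) |
        (Finset.univ.filter (fun i => c i ∉ S i)).card ≤ rn} := by
    intro x hx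
    rw [Finset.coe_image] at hx
    obtain ⟨j, hj, rfl⟩ := hx
    rw [Finset.mem_coe, Finset.mem_range] at hj
    exact ⟨hvC j, hmis j hj⟩
  have hcard2 : ((Finset.range (L + 1)).image v).card = L + 1 := by
    have hinj : Set.InjOn v ↑(Finset.range (L + 1)) := by
      intro j hj j' hj' hjj
      rw [Finset.mem_coe, Finset.mem_range] at hj hj'
      exact hvinj j j' hj hj' hjj
    rw [Finset.card_image_of_injOn hinj, Finset.card_range]
  have hle : (↑((Finset.range (L + 1)).image v) : Set (Fin n → F)).ncard ≤
      ({c ∈ (C : Set (Fin n → F)) |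
        (Finset.univ.filter (fun i => c i ∉ S i)).card ≤ rn} : Set (Fin n → F)).ncard :=
    Set.ncard_le_ncard hsub2 (Set.toFinite _)
  rw [Set.ncard_coe_finset, hcard2] at hle
  exact Nat.not_succ_le_self L (hle.trans hfin)
end

section
/- For a prime power q, an integer 1 ≤ L < q, and r ∈ [0, L/(L+1)) with rn ∈ ℕ, if C ⊆ 𝔽_q^n is a nonzero linear (r,L) list-decodable code, then its minimum distance satisfies d(C) > rn + ⌊rn/L⌋. -/
/-- For a finite field F with q elements, 1 ≤ L < q, r ∈ [0, L/(L+1)) with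
rn ∈ ℕ: a nonzero linear (r,L) list-decodable code C ⊆ F^n has minimum
distance d(C) > rn + ⌊rn/L⌋. -/
theorem stmt_16 (F : Type*) [Field F] [Fintype F] [DecidableEq F]
    (L n rn : ℕ) (r : ℝ)
    (hL1 : 1 ≤ L) (hLq : L < Fintype.card F)
    (hr0 : 0 ≤ r) (hr1 : r < (L : ℝ) / (L + 1))
    (hrn : (rn : ℝ) = r * n)
    (C : Submodule F (Fin n → F)) (hC : C ≠ ⊥)
    (hLD : ∀ v : Fin n → F,
      {c ∈ (C : Set (Fin n → F)) | hammingDist c v ≤ rn}.ncard ≤ L) :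
    ∀ c ∈ C, c ≠ 0 → rn + rn / L < hammingNorm c := by
  classical
  intro c hcC hc0
  by_contra hlt
  push_neg at hlt
  -- setup
  set S : Finset (Fin n) := Finset.univ.filter (fun i => c i ≠ 0) with hSdef
  have hScard : S.card = hammingNorm c := rfl
  set w : ℕ := S.card with hwdef
  set m : ℕ := w - rn with hmdef
  have hwle : w ≤ rn + rn / L := by rw [hScard]; exact hlt
  -- key arithmetic bound
  have hmle : (L + 1) * m ≤ w := by
    rcases Nat.le_total w rn with h | h
    · have hm0 : m = 0 := by omega
      simp [hm0]
    · have h3 : L * (rn / L) ≤ rn := by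
        rw [Nat.mul_comm]; exact Nat.div_mul_le_self rn L
      have h2 : L * w ≤ L * rn + rn := by
        calc L * w ≤ L * (rn + rn / L) := Nat.mul_le_mul_left _ hwle
          _ = L * rn + L * (rn / L) := by ring
          _ ≤ L * rn + rn := by omega
      have e1 : L * m + L * rn = L * w := by
        rw [← Nat.mul_add]; congr 1; omega
      have e2 : (L + 1) * m = L * m + m := by ring
      omega
  -- equiv of support with Fin w
  have e : {x // x ∈ S} ≃ Fin w := S.equivFin
  -- L+1 distinct scalars
  have hq : L + 1 ≤ Fintype.card F := hLq
  let g : Fin (L + 1) → F := fun j =>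
    (Fintype.equivFin F).symm (Fin.castLE hq j)
  have hginj : Function.Injective g := fun a b hab => by
    have := (Fintype.equivFin F).symm.injective hab
    exact Fin.castLE_injective _ this
  -- partition function
  let f : Fin n → Fin (L + 1) := fun i =>
    if h : i ∈ S then ⟨min ((e ⟨i, h⟩ : ℕ) / m) L, Nat.lt_succ_of_le (min_le_right _ _)⟩
    else ⟨0, Nat.succ_pos L⟩
  let v : Fin n → F := fun i => g (f i) * c i
  -- each fiber over S has at least m elements
  have hfiber : ∀ j : Fin (L + 1), m ≤ (S.filter (fun i => f i = j)).card := by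
    intro j
    rcases Nat.eq_zero_or_pos m with hm0 | hmpos
    · omega
    have hw1 : 1 ≤ w := le_trans (by nlinarith) hmle
    have hjub : (j : ℕ) * m + m ≤ w := by
      calc (j : ℕ) * m + m = ((j : ℕ) + 1) * m := by ring
        _ ≤ (L + 1) * m := Nat.mul_le_mul_right _ (by omega)
        _ ≤ w := hmle
    let φ : ℕ → Fin n := fun k => (e.symm ⟨min k (w - 1), by omega⟩ : {x // x ∈ S}).1
    have hcard : (Finset.Ico ((j : ℕ) * m) ((j : ℕ) * m + m)).card = m := by
      simp
    have hle : (Finset.Ico ((j : ℕ) * m) ((j : ℕ) * m + m)).card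
        ≤ (S.filter (fun i => f i = j)).card := by
      apply Finset.card_le_card_of_injOn φ ?_ ?_
      · -- maps into the fiber
        intro k hk
        simp only [Finset.coe_Ico, Set.mem_Ico, Finset.mem_coe, Finset.mem_Ico] at hk
        have hklt : k < w := by omega
        have hmin : min k (w - 1) = k := by omega
        set kk : Fin w := ⟨min k (w - 1), by omega⟩ with hkk
        have hi : (e.symm kk).1 ∈ S := (e.symm kk).2
        refine Finset.mem_filter.mpr ⟨hi, ?_⟩
        have he : e ⟨(e.symm kk).1, hi⟩ = kk := by
          have : (⟨(e.symm kk).1, hi⟩ : {x // x ∈ S}) = e.symm kk := rfl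
          rw [this, e.apply_symm_apply]
        show f ((e.symm kk).1) = j
        simp only [f, dif_pos hi, he]
        have hdiv : (kk : ℕ) / m = (j : ℕ) := by
          have : (kk : ℕ) = k := by simp [hkk, hmin]
          rw [this]
          exact Nat.div_eq_of_lt_le hk.1 (by rw [Nat.succ_mul]; omega)
        apply Fin.ext
        simp [hdiv, Nat.min_eq_left (Nat.le_of_lt_succ j.isLt)]
      · -- injective on the interval
        intro k hk k' hk' hkk
        simp only [Finset.coe_Ico, Set.mem_Ico] at hk hk'
        have h1 : min k (w - 1) = k := by omega
        have h2 : min k' (w - 1) = k' := by omega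
        have := e.symm.injective (Subtype.ext hkk)
        have := congrArg Fin.val this
        simpa [h1, h2] using this
    omega
  -- distance bound
  have hdist : ∀ j : Fin (L + 1), hammingDist (g j • c) v ≤ rn := by
    intro j
    have hsub : (Finset.univ.filter fun i => (g j • c) i ≠ v i)
        ⊆ S.filter (fun i => ¬ f i = j) := by
      intro i hi
      simp only [Finset.mem_filter, Finset.mem_univ, true_and] at hi ⊢
      by_cases hiS : i ∈ S
      · refine ⟨hiS, fun hfi => hi ?_⟩
        simp [v, hfi, Pi.smul_apply, smul_eq_mul]
      · exfalso
        have hci : c i = 0 := by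
          by_contra hne
          exact hiS (Finset.mem_filter.mpr ⟨Finset.mem_univ i, hne⟩)
        exact hi (by simp [v, hci, Pi.smul_apply, smul_eq_mul])
    have h1 : hammingDist (g j • c) v
        = (Finset.univ.filter fun i => (g j • c) i ≠ v i).card := rfl
    have h2 : (S.filter (fun i => ¬ f i = j)).card
        = w - (S.filter (fun i => f i = j)).card := by
      rw [Finset.filter_not, Finset.card_sdiff_of_subset (Finset.filter_subset _ _)]
    have h3 := hfiber j
    have h4 := Finset.card_le_card hsub
    omega
  -- the L+1 codewords are in the ball
  have hcwinj : Function.Injective (fun j : Fin (L + 1) => g j • c) := by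
    intro a b hab
    exact hginj (smul_left_injective F hc0 hab)
  have hrange : Set.range (fun j : Fin (L + 1) => g j • c)
      ⊆ {c' ∈ (C : Set (Fin n → F)) | hammingDist c' v ≤ rn} := by
    rintro _ ⟨j, rfl⟩
    exact ⟨C.smul_mem _ hcC, hdist j⟩
  have hcount : L + 1 ≤ {c' ∈ (C : Set (Fin n → F)) | hammingDist c' v ≤ rn}.ncard := by
    have h5 : (Set.range (fun j : Fin (L + 1) => g j • c)).ncard = L + 1 := by
      rw [← Set.image_univ, Set.ncard_image_of_injective _ hcwinj, Set.ncard_univ,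
        Nat.card_eq_fintype_card, Fintype.card_fin]
    rw [← h5]
    exact Set.ncard_le_ncard hrange (Set.toFinite _)
  have := hLD v
  omega
end

section
/- For a prime power q, an integer 1 ≤ L < q, and r ∈ [0, L/(L+1)) with rn ∈ ℕ, any linear [n,k]_q code that is (r,L) list-decodable with k = n - ⌈((L+1)/L)·rn⌉ has minimum distance at least n - k; moreover, if L divides rn, its minimum distance is at least n - k + 1, so it is an MDS code. -/
set_option linter.unusedVariables false

theorem key_17 (F : Type*) [Field F] [Fintype F] [DecidableEq F]
    (L n rn : ℕ) (hL1 : 1 ≤ L) (hLq : L < Fintype.card F)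
    (C : Submodule F (Fin n → F))
    (hLD : ∀ v : Fin n → F,
      {c ∈ (C : Set (Fin n → F)) | hammingDist c v ≤ rn}.ncard ≤ L)
    (c : Fin n → F) (hc : c ∈ C) (hc0 : c ≠ 0) :
    (L + 1) * rn < L * hammingNorm c := by
  classical
  by_contra hcon
  push_neg at hcon
  set w := hammingNorm c with hw
  set s := w - rn with hs
  -- (L+1)*s ≤ w
  have hLs : (L + 1) * s ≤ w := by
    rcases le_or_gt w rn with h | h
    · simp [hs, Nat.sub_eq_zero_of_le h]
    · have h1 : (L + 1) * s + (L + 1) * rn = (L + 1) * w := by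
        rw [← Nat.mul_add]; congr 1; omega
      have h2 : (L + 1) * w = L * w + w := by ring
      omega
  -- embedding Fin (L+1) ↪ F
  obtain ⟨e⟩ : Nonempty (Fin (L + 1) ↪ F) := by
    apply Function.Embedding.nonempty_of_card_le
    simpa using hLq
  have hedef : ∀ i j : Fin (L+1), e i = e j → i = j := fun i j h => e.injective h
  set supp : Finset (Fin n) := Finset.univ.filter (fun j => c j ≠ 0) with hsupp
  have hsc : supp.card = w := rfl
  set σ : supp ≃ Fin supp.card := supp.equivFin with hσ
  have hmin : ∀ t : ℕ, min L (t / s) < L + 1 := fun t => Nat.lt_succ_of_le (min_le_left _ _)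
  set v : Fin n → F := fun j => if h : j ∈ supp then e ⟨min L ((σ ⟨j, h⟩ : ℕ) / s), hmin _⟩ * c j else 0 with hv
  -- distance bound
  have hdist : ∀ i : Fin (L + 1), hammingDist (e i • c) v ≤ rn := by
    intro i
    set Ai : Finset (Fin n) := Finset.univ.filter (fun j => c j ≠ 0 ∧ v j = e i * c j) with hAi
    have hAisub : Ai ⊆ supp := by
      intro j hj
      simp only [hAi, Finset.mem_filter] at hj
      simp [hsupp, hj.2.1]
    -- s ≤ Ai.card
    have hscard : s ≤ Ai.card := by
      rcases Nat.eq_zero_or_pos s with h0 | hspos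
      · omega
      have key : ∀ u : Fin s, (i : ℕ) * s + (u : ℕ) < supp.card := by
        intro u
        have h1 : (i : ℕ) * s + (u : ℕ) < ((i : ℕ) + 1) * s := by
          have := u.isLt
          have : ((i : ℕ) + 1) * s = (i : ℕ) * s + s := by ring
          omega
        have h2 : ((i : ℕ) + 1) * s ≤ (L + 1) * s :=
          Nat.mul_le_mul_right _ (by have := i.isLt; omega)
        omega
      set φ : Fin s → Fin n := fun u => ((σ.symm ⟨(i : ℕ) * s + (u : ℕ), key u⟩ : supp) : Fin n) with hφ
      have hmaps : ∀ u : Fin s, φ u ∈ Ai := by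
        intro u
        set p : supp := σ.symm ⟨(i : ℕ) * s + (u : ℕ), key u⟩ with hp
        have hpmem : (p : Fin n) ∈ supp := p.2
        have hcne : c (p : Fin n) ≠ 0 := by
          have := hpmem
          simp only [hsupp, Finset.mem_filter] at this
          exact this.2
        have hσp : (σ ⟨(p : Fin n), hpmem⟩ : ℕ) = (i : ℕ) * s + (u : ℕ) := by
          have : (⟨(p : Fin n), hpmem⟩ : supp) = p := Subtype.ext rfl
          rw [this, hp, Equiv.apply_symm_apply]
        have hdiv : ((i : ℕ) * s + (u : ℕ)) / s = (i : ℕ) := by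
          rw [Nat.mul_comm (i : ℕ) s, Nat.mul_add_div hspos, Nat.div_eq_of_lt u.isLt,
            Nat.add_zero]
        have hidx : (⟨min L (((σ ⟨(p : Fin n), hpmem⟩ : ℕ)) / s), hmin _⟩ : Fin (L + 1)) = i := by
          apply Fin.ext
          simp only [hσp, hdiv]
          exact min_eq_right (by have := i.isLt; omega)
        have hvp : v (p : Fin n) = e i * c (p : Fin n) := by
          rw [hv]
          simp only [hpmem, dif_pos]
          rw [hidx]
        simp only [hAi, Finset.mem_filter, Finset.mem_univ, true_and]
        exact ⟨hcne, hvp⟩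
      have hinj : ∀ a ∈ (Finset.univ : Finset (Fin s)), ∀ b ∈ (Finset.univ : Finset (Fin s)),
          φ a = φ b → a = b := by
        intro a _ b _ hab
        have h1 : (σ.symm ⟨(i : ℕ) * s + (a : ℕ), key a⟩ : supp)
            = σ.symm ⟨(i : ℕ) * s + (b : ℕ), key b⟩ := Subtype.ext hab
        have h2 := σ.symm.injective h1
        have h3 : (i : ℕ) * s + (a : ℕ) = (i : ℕ) * s + (b : ℕ) := congrArg Fin.val h2
        exact Fin.ext (by omega)
      calc s = (Finset.univ : Finset (Fin s)).card := by simp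
        _ ≤ Ai.card := Finset.card_le_card_of_injOn φ (fun u _ => hmaps u) hinj
    have hsub : Finset.univ.filter (fun j => (e i • c) j ≠ v j) ⊆ supp \ Ai := by
      intro j hj
      simp only [Finset.mem_filter, Finset.mem_univ, true_and] at hj
      by_cases h0 : c j = 0
      · exfalso
        apply hj
        simp [hv, h0, Pi.smul_apply, smul_eq_mul]
      · have hjsupp : j ∈ supp := by simp [hsupp, h0]
        refine Finset.mem_sdiff.mpr ⟨hjsupp, ?_⟩
        intro hjAi
        simp only [hAi, Finset.mem_filter] at hjAi
        exact hj (by simp [Pi.smul_apply, smul_eq_mul, hjAi.2.2.symm])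
    have : hammingDist (e i • c) v ≤ (supp \ Ai).card := by
      rw [hammingDist]
      exact Finset.card_le_card hsub
    have hcard : (supp \ Ai).card = w - Ai.card := by
      rw [Finset.card_sdiff_of_subset hAisub, hsc]
    omega
  -- build the finset of L+1 codewords
  obtain ⟨j0, hj0⟩ : ∃ j, c j ≠ 0 := by
    by_contra h; push_neg at h; exact hc0 (funext h)
  have hfinj : Function.Injective (fun i : Fin (L + 1) => e i • c) := by
    intro a b hab
    have := congrFun hab j0
    simp only [Pi.smul_apply, smul_eq_mul] at this
    exact e.injective (mul_right_cancel₀ hj0 this)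
  set T : Finset (Fin n → F) := Finset.univ.image (fun i : Fin (L + 1) => e i • c) with hT
  have hTcard : T.card = L + 1 := by
    rw [hT, Finset.card_image_of_injective _ hfinj, Finset.card_univ, Fintype.card_fin]
  have hTsub : (T : Set (Fin n → F)) ⊆ {x ∈ (C : Set (Fin n → F)) | hammingDist x v ≤ rn} := by
    intro x hx
    simp only [hT, Finset.coe_image, Finset.coe_univ, Set.image_univ, Set.mem_range] at hx
    obtain ⟨i, rfl⟩ := hx
    exact ⟨C.smul_mem _ hc, hdist i⟩
  have := hLD v
  have h1 : (T : Set (Fin n → F)).ncard ≤ L :=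
    le_trans (Set.ncard_le_ncard hTsub (Set.toFinite _)) this
  rw [Set.ncard_coe_finset, hTcard] at h1
  omega


/-- For a finite field F with q elements, 1 ≤ L < q, r ∈ [0, L/(L+1)) with
rn ∈ ℕ: any linear [n,k] code over F that is (r,L) list-decodable with
k = n - ⌈((L+1)/L)·rn⌉ has minimum distance at least n - k; moreover, if
L ∣ rn its minimum distance is at least n - k + 1, i.e. it is MDS. -/
theorem stmt_17 (F : Type*) [Field F] [Fintype F] [DecidableEq F]
    (L n rn k : ℕ) (r : ℝ)
    (hL1 : 1 ≤ L) (hLq : L < Fintype.card F)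
    (hr0 : 0 ≤ r) (hr1 : r < (L : ℝ) / (L + 1))
    (hrn : (rn : ℝ) = r * n)
    (hk : k = n - ((L + 1) * rn + L - 1) / L)
    (C : Submodule F (Fin n → F)) (hdim : Module.finrank F C = k)
    (hLD : ∀ v : Fin n → F,
      {c ∈ (C : Set (Fin n → F)) | hammingDist c v ≤ rn}.ncard ≤ L) :
    (∀ c ∈ C, c ≠ 0 → n - k ≤ hammingNorm c) ∧
      (L ∣ rn → ∀ c ∈ C, c ≠ 0 → n - k + 1 ≤ hammingNorm c) := by
  classical
  have hkey : ∀ c ∈ C, c ≠ 0 → (L + 1) * rn < L * hammingNorm c :=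
    fun c hc hc0 => key_17 F L n rn hL1 hLq C hLD c hc hc0
  set m := ((L + 1) * rn + L - 1) / L with hmdef
  have hLpos : 0 < L := hL1
  constructor
  · intro c hc hc0
    have hA := hkey c hc hc0
    have hm : m ≤ hammingNorm c := by
      rw [hmdef, ← Nat.lt_succ_iff, Nat.div_lt_iff_lt_mul hLpos]
      simp only [Nat.succ_eq_add_one]
      have he : (hammingNorm c + 1) * L = L * hammingNorm c + L := by ring
      omega
    omega
  · intro hdvd c hc hc0
    have hA := hkey c hc hc0
    obtain ⟨t, ht⟩ := hdvd
    have e1 : (L + 1) * (L * t) = L * ((L + 1) * t) := by ring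
    have hmeq : m = (L + 1) * t := by
      rw [hmdef, ht, e1, Nat.add_sub_assoc hL1, Nat.mul_add_div hLpos,
        Nat.div_eq_of_lt (by omega), Nat.add_zero]
    have hlt : L * m < L * hammingNorm c := by rw [hmeq, ← e1, ← ht]; exact hA
    have h2 := Nat.lt_of_mul_lt_mul_left hlt
    omega
end
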